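/- arXiv:1311.1868 — 5 statements merged into one kernel-verified Lean document; each statement's English description precedes it below -/
import Mathlib

section
/- In the group W of bijections w : ℤ → ℤ satisfying w(i+r) = w(i)+r, the subgroup generated by the elements s₁,...,s_r (where s_i(j) = j if j ≢ i, i+1 mod r; s_i(j) = j−1 if j ≡ i+1 mod r; s_i(j) = j+1 if j ≡ i mod r) together with the shift ρ (ρ(j) = j+1) equals all of W. -/
/-- `w : ℤ ≃ ℤ` commutes with translation by `r`. -/
def PeriodicPerm (r : ℕ) (w : ℤ ≃ ℤ) : Prop := ∀ i : ℤ, w (i + r) = w i + r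

namespace Stmt5

lemma periodic_shift {n : ℤ} {w : Equiv.Perm ℤ} (h : ∀ i : ℤ, w (i + n) = w i + n)
    (i k : ℤ) : w (i + n * k) = w i + n * k := by
  induction k using Int.induction_on with
  | zero => simp
  | succ m ih =>
      have e : i + n * ((m : ℤ) + 1) = (i + n * m) + n := by ring
      rw [e, h, ih]; ring
  | pred m ih =>
      have e : (i + n * (-(m:ℤ) - 1)) + n = i + n * (-(m:ℤ)) := by ring
      have h2 := h (i + n * (-(m:ℤ) - 1))
      rw [e, ih] at h2
      have : w (i + n * (-(m:ℤ) - 1)) = w i + n * (-(m:ℤ) - 1) := by linarith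
      convert this using 3 <;> ring

def K (r : ℕ) : Subgroup (Equiv.Perm ℤ) where
  carrier := {w | PeriodicPerm r w}
  one_mem' := fun _ => rfl
  mul_mem' := by
    intro a b ha hb i
    simp only [Equiv.Perm.mul_apply]
    rw [hb, ha]
  inv_mem' := by
    intro a ha i
    apply a.injective
    rw [show a (a⁻¹ (i + r)) = i + r from Equiv.apply_symm_apply a _]
    have : a (a⁻¹ i + r) = a (a⁻¹ i) + r := ha _
    rw [this, show a (a⁻¹ i) = i from Equiv.apply_symm_apply a _]

lemma rho_zpow {ρ : Equiv.Perm ℤ} (hρ : ∀ j : ℤ, ρ j = j + 1) (c : ℤ) :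
    ∀ j : ℤ, (ρ ^ c) j = j + c := by
  induction c using Int.induction_on with
  | zero => simp
  | succ m ih =>
      intro j
      rw [zpow_add_one, Equiv.Perm.mul_apply, hρ, ih]
      ring
  | pred m ih =>
      intro j
      rw [zpow_sub_one, Equiv.Perm.mul_apply]
      have hinv : ρ⁻¹ j = j - 1 := by
        apply ρ.injective
        rw [show ρ (ρ⁻¹ j) = j from Equiv.apply_symm_apply ρ _, hρ]; ring
      rw [hinv, ih]; ring

lemma mono_eq {w : Equiv.Perm ℤ} (h : ∀ i : ℤ, w i < w (i + 1)) :
    ∀ j : ℤ, w j = j + w 0 := by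
  have hmono : StrictMono w := strictMono_int_of_lt_succ h
  have hstep : ∀ i : ℤ, w (i + 1) = w i + 1 := by
    intro i
    by_contra hne
    have h1 : w i + 1 < w (i + 1) := by have := h i; omega
    obtain ⟨x, hx⟩ := w.surjective (w i + 1)
    rcases le_or_gt x i with hxi | hxi
    · have := hmono.le_iff_le.mpr hxi
      omega
    · have : i + 1 ≤ x := hxi
      have := hmono.le_iff_le.mpr this
      omega
  intro j
  induction j using Int.induction_on with
  | zero => ring
  | succ m ih => rw [hstep, ih]; ring
  | pred m ih =>
      have h2 := hstep (-(m:ℤ) - 1)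
      have e : -(m:ℤ) - 1 + 1 = -(m:ℤ) := by ring
      rw [e, ih] at h2
      have : w (-(m:ℤ) - 1) = -(m:ℤ) - 1 + w 0 := by linarith
      convert this using 2 <;> ring




def InvSet (n : ℤ) (w : Equiv.Perm ℤ) : Set (ℤ × ℤ) :=
  {p | 1 ≤ p.1 ∧ p.1 ≤ n ∧ p.1 < p.2 ∧ w p.2 < w p.1}

lemma range_repr {n : ℤ} (hn : 1 ≤ n) (x : ℤ) :
    1 ≤ x - n * ((x - 1) / n) ∧ x - n * ((x - 1) / n) ≤ n := by
  have h1 := Int.emod_add_mul_ediv (x - 1) n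
  have h2 := Int.emod_nonneg (x - 1) (by omega : n ≠ 0)
  have h3 := Int.emod_lt_of_pos (x - 1) (by omega : 0 < n)
  generalize hc : n * ((x - 1) / n) = c at h1 ⊢
  omega

section Descent

variable {n : ℤ} (hn : 2 ≤ n) {w t : Equiv.Perm ℤ} {i0 : ℤ}
variable (hw : ∀ i k : ℤ, w (i + n * k) = w i + n * k)
variable (ht : ∀ i k : ℤ, t (i + n * k) = t i + n * k)
variable (ht1 : ∀ j : ℤ, j ≡ i0 [ZMOD n] → t j = j + 1)
variable (ht2 : ∀ j : ℤ, j ≡ i0 + 1 [ZMOD n] → t j = j - 1)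
variable (ht3 : ∀ j : ℤ, ¬ j ≡ i0 [ZMOD n] → ¬ j ≡ i0 + 1 [ZMOD n] → t j = j)

include hn in
lemma not_both : ∀ j : ℤ, ¬(j ≡ i0 [ZMOD n] ∧ j ≡ i0 + 1 [ZMOD n]) := by
  rintro j ⟨h1, h2⟩
  have hd : n ∣ 1 := by
    have := (h1.symm.trans h2).dvd
    simpa using this
  have := Int.le_of_dvd one_pos hd
  omega

include hn ht1 ht2 ht3 in
lemma tcases (j : ℤ) :
    (j ≡ i0 [ZMOD n] ∧ t j = j + 1) ∨ (j ≡ i0 + 1 [ZMOD n] ∧ t j = j - 1) ∨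
    (¬ j ≡ i0 [ZMOD n] ∧ ¬ j ≡ i0 + 1 [ZMOD n] ∧ t j = j) := by
  by_cases h1 : j ≡ i0 [ZMOD n]
  · exact Or.inl ⟨h1, ht1 j h1⟩
  by_cases h2 : j ≡ i0 + 1 [ZMOD n]
  · exact Or.inr (Or.inl ⟨h2, ht2 j h2⟩)
  · exact Or.inr (Or.inr ⟨h1, h2, ht3 j h1 h2⟩)

include hn ht1 ht2 ht3 in
lemma tinv (j : ℤ) : t (t j) = j := by
  rcases tcases hn ht1 ht2 ht3 j with ⟨h, e⟩ | ⟨h, e⟩ | ⟨h, h', e⟩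
  · have h2 : j + 1 ≡ i0 + 1 [ZMOD n] := h.add_right 1
    rw [e, ht2 _ h2]; ring
  · have h2 : j - 1 ≡ i0 [ZMOD n] := by
      have := h.sub_right 1
      simpa using this
    rw [e, ht1 _ h2]; ring
  · rw [e, ht3 j h h']

include hn ht1 ht2 ht3 in
lemma t_lt {i j : ℤ} (hij : i < j) (hex : ¬(j = i + 1 ∧ i ≡ i0 [ZMOD n])) :
    t i < t j := by
  have key : ∀ a b : ℤ, a ≡ i0 [ZMOD n] → b ≡ i0 + 1 [ZMOD n] → a < b → b ≠ a + 1 → a + 2 ≤ b - 1 := by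
    intro a b ha hb hab hne
    have hd : n ∣ b - a - 1 := by
      have h1 := ha.dvd  -- n ∣ i0 - a
      have h2 := hb.dvd  -- n ∣ i0 + 1 - b
      have := dvd_sub h1 h2
      have e : (i0 - a) - (i0 + 1 - b) = b - a - 1 := by ring
      rwa [e] at this
    have hpos : 0 < b - a - 1 := by omega
    have := Int.le_of_dvd hpos hd
    omega
  rcases tcases hn ht1 ht2 ht3 i with ⟨hci, ei⟩ | ⟨hci, ei⟩ | ⟨hci, hci', ei⟩ <;>
    rcases tcases hn ht1 ht2 ht3 j with ⟨hcj, ej⟩ | ⟨hcj, ej⟩ | ⟨hcj, hcj', ej⟩ <;>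
    rw [ei, ej]
  · omega
  · -- i ≡ i0, j ≡ i0+1
    have hne : j ≠ i + 1 := by
      intro he
      exact hex ⟨he, hci⟩
    have := key i j hci hcj hij hne
    omega
  · -- i ≡ i0, j neither
    have : j ≠ i + 1 := by
      intro he
      apply hcj'
      have : i + 1 ≡ i0 + 1 [ZMOD n] := hci.add_right 1
      rwa [← he] at this
    omega
  · omega
  · omega
  · omega
  · omega
  · -- i neither, j ≡ i0+1
    have : j ≠ i + 1 := by
      intro he
      apply hci
      have : j - 1 ≡ i0 [ZMOD n] := by
        have := hcj.sub_right 1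
        simpa using this
      rwa [he, add_sub_cancel_right] at this
    omega
  · omega


include hn hw ht ht1 ht2 ht3 in
lemma descent_count (hi0 : 1 ≤ i0) (hi0' : i0 ≤ n) (hdes : w (i0 + 1) < w i0)
    (hfin : (InvSet n w).Finite) :
    (InvSet n (w * t)).ncard < (InvSet n w).ncard := by
  classical
  set φ : ℤ × ℤ → ℤ × ℤ := fun p =>
    (t p.1 - n * ((t p.1 - 1) / n), t p.2 - n * ((t p.1 - 1) / n)) with hφ
  have hpt : (i0, i0 + 1) ∈ InvSet n w := ⟨hi0, hi0', by omega, hdes⟩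
  -- every pair in InvSet n (w*t) is not an "adjacent i0-pair"
  have hnadj : ∀ p : ℤ × ℤ, p ∈ InvSet n (w * t) → ¬(p.2 = p.1 + 1 ∧ p.1 ≡ i0 [ZMOD n]) := by
    rintro ⟨i, j⟩ ⟨-, -, hij, hlt⟩ ⟨he, hc⟩
    simp only at he hc hij hlt
    subst he
    -- hlt : w (t (i+1)) < w (t i), with i ≡ i0
    obtain ⟨d, hd⟩ := (Int.modEq_iff_dvd.mp hc)  -- n ∣ i0 - i
    have hi : i = i0 + n * (-d) := by linarith
    have h1 : t i = i + 1 := ht1 i hc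
    have h2 : t (i + 1) = i := by
      have : i + 1 ≡ i0 + 1 [ZMOD n] := hc.add_right 1
      rw [ht2 _ this]; ring
    rw [Equiv.Perm.mul_apply, Equiv.Perm.mul_apply, h1, h2] at hlt
    -- hlt : w i < w (i + 1)
    have e1 : w i = w i0 + n * (-d) := by rw [hi]; exact hw i0 (-d)
    have e2 : w (i + 1) = w (i0 + 1) + n * (-d) := by
      have : i + 1 = (i0 + 1) + n * (-d) := by rw [hi]; ring
      rw [this]; exact hw (i0 + 1) (-d)
    omega
  have hmaps : ∀ p ∈ InvSet n (w * t), φ p ∈ InvSet n w \ {(i0, i0 + 1)} := by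
    rintro ⟨i, j⟩ hp
    obtain ⟨h1, h2, h3, h4⟩ := hp
    simp only at h1 h2 h3 h4
    have hne := hnadj (i, j) ⟨h1, h2, h3, h4⟩
    simp only at hne
    have htlt : t i < t j := t_lt hn ht1 ht2 ht3 h3 hne
    set q := (t i - 1) / n with hq
    have hrange := range_repr (by omega : (1:ℤ) ≤ n) (t i)
    have hsh : ∀ x : ℤ, t (x - n * q) = t x - n * q := by
      intro x
      have := ht x (-q)
      have e : x + n * (-q) = x - n * q := by ring
      rw [e] at this
      rw [this]; ring
    have hwsh : ∀ x : ℤ, w (x - n * q) = w x - n * q := by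
      intro x
      have := hw x (-q)
      have e : x + n * (-q) = x - n * q := by ring
      rw [e] at this
      rw [this]; ring
    constructor
    · refine ⟨hrange.1, hrange.2, by simp only [hφ]; omega, ?_⟩
      simp only [hφ]
      rw [hwsh, hwsh]
      have : w (t j) < w (t i) := h4
      omega
    · -- φ p ≠ (i0, i0+1)
      simp only [Set.mem_singleton_iff, hφ, Prod.mk.injEq, not_and]
      intro ha hb
      exfalso
      have hia : i = i0 + 1 + n * q := by
        have : t (t i - n * q) = i0 + 1 := by
          rw [ha, ht1 i0 (Int.ModEq.refl i0)]
        rw [hsh, tinv hn ht1 ht2 ht3] at this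
        omega
      have hjb : j = i0 + n * q := by
        have : t (t j - n * q) = i0 :=  by
          rw [hb]
          have : (i0 : ℤ) + 1 ≡ i0 + 1 [ZMOD n] := Int.ModEq.refl _
          rw [ht2 _ this]; ring
        rw [hsh, tinv hn ht1 ht2 ht3] at this
        omega
      omega
  have hinj : Set.InjOn φ (InvSet n (w * t)) := by
    rintro ⟨i, j⟩ hp ⟨i', j'⟩ hp' heq
    obtain ⟨h1, h2, h3, h4⟩ := hp
    obtain ⟨h1', h2', h3', h4'⟩ := hp'
    simp only at h1 h2 h3 h4 h1' h2' h3' h4'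
    simp only [hφ, Prod.mk.injEq] at heq
    obtain ⟨ea, eb⟩ := heq
    set q := (t i - 1) / n with hq
    set q' := (t i' - 1) / n with hq'
    have hsh : ∀ x c : ℤ, t (x - n * c) = t x - n * c := by
      intro x c
      have := ht x (-c)
      have e : x + n * (-c) = x - n * c := by ring
      rw [e] at this
      rw [this]; ring
    have e1 : i - n * q = i' - n * q' := by
      have := congrArg t ea
      rw [hsh, hsh, tinv hn ht1 ht2 ht3, tinv hn ht1 ht2 ht3] at this
      exact this
    have hdvd : n ∣ i - i' := ⟨q - q', by linarith [e1]⟩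
    have hii : i = i' := by
      have habs : |i - i'| < n := by
        rw [abs_lt]; omega
      have := Int.eq_zero_of_abs_lt_dvd hdvd habs
      omega
    have hqq : q = q' := by rw [hq, hq', hii]
    have hjj : t j = t j' := by
      rw [hqq] at eb
      omega
    have : j = j' := by
      have := congrArg t hjj
      rw [tinv hn ht1 ht2 ht3, tinv hn ht1 ht2 ht3] at this
      exact this
    simp [hii, this]
  calc (InvSet n (w * t)).ncard
      ≤ (InvSet n w \ {(i0, i0 + 1)}).ncard :=
        Set.ncard_le_ncard_of_injOn φ hmaps hinj hfin.diff
    _ < (InvSet n w).ncard := Set.ncard_diff_singleton_lt_of_mem hpt hfin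

end Descent


lemma invSet_finite {n : ℤ} (hn : 1 ≤ n) (w : Equiv.Perm ℤ)
    (hw : ∀ i k : ℤ, w (i + n * k) = w i + n * k) : (InvSet n w).Finite := by
  have hne : (Finset.Icc (1:ℤ) n).Nonempty := Finset.nonempty_Icc.mpr (by omega)
  set F := (Finset.Icc (1:ℤ) n).image (fun x => w x) with hF
  have hFne : F.Nonempty := hne.image _
  set m := F.min' hFne
  set M := F.max' hFne
  have hmem : ∀ x : ℤ, 1 ≤ x → x ≤ n → m ≤ w x ∧ w x ≤ M := by
    intro x h1 h2
    have hx : w x ∈ F := Finset.mem_image_of_mem _ (Finset.mem_Icc.mpr ⟨h1, h2⟩)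
    exact ⟨F.min'_le _ hx, F.le_max' _ hx⟩
  apply Set.Finite.subset ((Set.finite_Icc (1:ℤ) n).prod (Set.finite_Icc (1:ℤ) (n + n * (M - m))))
  rintro ⟨i, j⟩ ⟨h1, h2, h3, h4⟩
  simp only [Set.mem_prod, Set.mem_Icc]
  refine ⟨⟨h1, h2⟩, by omega, ?_⟩
  -- bound j
  set q := (j - 1) / n with hq
  set k := j - n * q with hk
  have hkr : 1 ≤ k ∧ k ≤ n := range_repr hn j
  have h4' : w j < w i := h4
  have hwj : w j = w k + n * q := by
    have := hw k q
    have e : k + n * q = j := by simp [hk]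
    rw [e] at this
    exact this
  have hq0 : 0 ≤ q := Int.ediv_nonneg (by omega) (by omega)
  have hm : m ≤ w k := (hmem k hkr.1 hkr.2).1
  have hM : w i ≤ M := (hmem i h1 h2).2
  have hnq : n * q ≤ M - m - 1 := by linarith
  have hq' : q ≤ M - m - 1 := le_trans (le_mul_of_one_le_left hq0 hn) hnq
  have : n * q ≤ n * (M - m - 1) := mul_le_mul_of_nonneg_left hq' (by omega)
  have : j = k + n * q := by simp [hk]
  nlinarith


end Stmt5

open Stmt5 in
/-- In the group of bijections `w : ℤ → ℤ` with `w(i+r) = w(i)+r`,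
the subgroup generated by the Coxeter-type generators `s₁, …, s_r` together
with the shift `ρ : j ↦ j+1` is the whole group: membership in the generated
subgroup is equivalent to the periodicity condition. -/
theorem stmt5 (r : ℕ) (hr : 1 ≤ r)
    (ρ : Equiv.Perm ℤ) (hρ : ∀ j : ℤ, ρ j = j + 1)
    (s : ℤ → Equiv.Perm ℤ)
    (hs1 : ∀ i j : ℤ, ¬ j ≡ i [ZMOD (r : ℤ)] → ¬ j ≡ i + 1 [ZMOD (r : ℤ)] → s i j = j)
    (hs2 : ∀ i j : ℤ, j ≡ i + 1 [ZMOD (r : ℤ)] → s i j = j - 1)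
    (hs3 : ∀ i j : ℤ, j ≡ i [ZMOD (r : ℤ)] → s i j = j + 1) :
    ∀ w : Equiv.Perm ℤ,
      w ∈ Subgroup.closure ({ρ} ∪ (⋃ i ∈ Set.Icc (1 : ℤ) (r : ℤ), {s i}))
        ↔ PeriodicPerm r w := by
  intro w
  by_cases hr1 : r = 1
  · subst hr1
    have h2 := hs2 0 0 (by unfold Int.ModEq; simp)
    have h3 := hs3 0 0 (by unfold Int.ModEq; simp)
    omega
  have hr2 : 2 ≤ r := by omega
  set n : ℤ := (r : ℤ) with hn_def
  have hn : 2 ≤ n := by rw [hn_def]; exact_mod_cast hr2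
  set S : Set (Equiv.Perm ℤ) := {ρ} ∪ (⋃ i ∈ Set.Icc (1 : ℤ) n, {s i}) with hS_def
  have hρper : PeriodicPerm r ρ := by
    intro i
    rw [hρ, hρ]; ring
  have hsper : ∀ i0 : ℤ, PeriodicPerm r (s i0) := by
    intro i0 j
    show s i0 (j + n) = s i0 j + n
    have hmod : j + n ≡ j [ZMOD n] := Int.modEq_iff_dvd.mpr ⟨-1, by ring⟩
    by_cases h1 : j ≡ i0 [ZMOD n]
    · rw [hs3 i0 _ (hmod.trans h1), hs3 i0 _ h1]; ring
    by_cases h2 : j ≡ i0 + 1 [ZMOD n]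
    · rw [hs2 i0 _ (hmod.trans h2), hs2 i0 _ h2]; ring
    · have h1' : ¬ (j + n) ≡ i0 [ZMOD n] := fun hc => h1 (hmod.symm.trans hc)
      have h2' : ¬ (j + n) ≡ i0 + 1 [ZMOD n] := fun hc => h2 (hmod.symm.trans hc)
      rw [hs1 i0 _ h1' h2', hs1 i0 _ h1 h2]
  have hKsub : Subgroup.closure S ≤ K r := by
    rw [Subgroup.closure_le]
    rintro x (hx | hx)
    · rw [Set.mem_singleton_iff] at hx
      subst hx
      exact hρper
    · simp only [Set.mem_iUnion, Set.mem_singleton_iff] at hx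
      obtain ⟨i, _, rfl⟩ := hx
      exact hsper i
  constructor
  · intro h
    exact hKsub h
  · intro hper
    have hmain : ∀ N : ℕ, ∀ v : Equiv.Perm ℤ, PeriodicPerm r v →
        (InvSet n v).ncard ≤ N → v ∈ Subgroup.closure S := by
      intro N
      induction N using Nat.strong_induction_on with
      | _ N ih =>
        intro v hvper hcard
        have hv : ∀ i k : ℤ, v (i + n * k) = v i + n * k := periodic_shift hvper
        by_cases hdes : ∃ i0 : ℤ, 1 ≤ i0 ∧ i0 ≤ n ∧ v (i0 + 1) < v i0
        · obtain ⟨i0, hi01, hi02, hi0d⟩ := hdes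
          have ht : ∀ i k : ℤ, (s i0) (i + n * k) = (s i0) i + n * k :=
            periodic_shift (hsper i0)
          have hfin : (InvSet n v).Finite := invSet_finite (by omega) v hv
          have hlt : (InvSet n (v * s i0)).ncard < (InvSet n v).ncard :=
            descent_count hn hv ht (fun j h => hs3 i0 j h) (fun j h => hs2 i0 j h)
              (fun j h h' => hs1 i0 j h h') hi01 hi02 hi0d hfin
          have hvper' : PeriodicPerm r (v * s i0) := by
            intro j
            simp only [Equiv.Perm.mul_apply]
            rw [hsper i0 j, hvper]
          have hmem' : v * s i0 ∈ Subgroup.closure S :=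
            ih (InvSet n (v * s i0)).ncard (by omega) _ hvper' le_rfl
          have hsmem : s i0 ∈ Subgroup.closure S := by
            apply Subgroup.subset_closure
            rw [hS_def]
            right
            simp only [Set.mem_iUnion, Set.mem_singleton_iff]
            exact ⟨i0, Set.mem_Icc.mpr ⟨hi01, hi02⟩, rfl⟩
          have := Subgroup.mul_mem _ hmem' (Subgroup.inv_mem _ hsmem)
          rwa [mul_inv_cancel_right] at this
        · push_neg at hdes
          have hall : ∀ i : ℤ, v i < v (i + 1) := by
            intro i
            set q := (i - 1) / n with hq
            set k := i - n * q with hk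
            have hkr := range_repr (by omega : (1:ℤ) ≤ n) i
            have e1 : v i = v k + n * q := by
              have := hv k q
              have e : k + n * q = i := by rw [hk]; ring
              rw [e] at this
              exact this
            have e2 : v (i + 1) = v (k + 1) + n * q := by
              have := hv (k + 1) q
              have e : k + 1 + n * q = i + 1 := by rw [hk]; ring
              rw [e] at this
              exact this
            have hlt : v k < v (k + 1) := by
              have hne : v k ≠ v (k + 1) := fun he => by
                have := v.injective he
                omega
              have := hdes k hkr.1 hkr.2
              omega
            omega
          have heq : ∀ j : ℤ, v j = j + v 0 := mono_eq hall
          have hveq : v = ρ ^ (v 0) := by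
            apply Equiv.ext
            intro j
            rw [heq j, rho_zpow hρ (v 0) j]
          rw [hveq]
          exact zpow_mem (Subgroup.subset_closure (by rw [hS_def]; left; rfl)) _
    exact hmain (InvSet n w).ncard w hper le_rfl
end

section
/- For any w in the extended affine symmetric group W (bijections of ℤ commuting with translation by r), the inversion count ℓ'(w) = |{(i,j): 1 ≤ i ≤ r, i < j, w(i) > w(j)}| satisfies ℓ'(ρ^m w) = ℓ'(w) for every m ∈ ℤ, where ρ is the shift j ↦ j+1. -/
/-- The inversion count `ℓ'(w) = |{(i,j) : 1 ≤ i ≤ r, i < j, w(i) > w(j)}|`. -/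
noncomputable def affLen (r : ℕ) (w : ℤ ≃ ℤ) : ℕ :=
  {p : ℤ × ℤ | 1 ≤ p.1 ∧ p.1 ≤ (r : ℤ) ∧ p.1 < p.2 ∧ w p.2 < w p.1}.ncard

/-- for any `w` in the extended affine symmetric group and
`ρ : j ↦ j+1`, the inversion count satisfies `ℓ'(ρ^m w) = ℓ'(w)` for all
`m ∈ ℤ`. -/
theorem stmt7 (r : ℕ) (hr : 1 ≤ r) (w : ℤ ≃ ℤ) (hw : PeriodicPerm r w)
    (ρ : Equiv.Perm ℤ) (hρ : ∀ j : ℤ, ρ j = j + 1) (m : ℤ) :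
    affLen r (ρ ^ m * (w : Equiv.Perm ℤ)) = affLen r w := by
  have hρ' : ρ = Equiv.addRight (1 : ℤ) := by ext j; simp [hρ]
  have hpow : ∀ j : ℤ, (ρ ^ m) j = j + m := by
    intro j
    rw [hρ', show Equiv.addRight (1 : ℤ) ^ m = Equiv.addRight (m • (1 : ℤ)) from by
      induction m using Int.induction_on with
      | zero => ext; simp
      | succ k ih => rw [zpow_add_one, ih]; ext; simp; ring
      | pred k ih => rw [zpow_sub_one, ih]; ext x; simp [Equiv.Perm.inv_def]; ring]
    simp
  unfold affLen
  congr 1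
  ext p
  simp only [Set.mem_setOf_eq, Equiv.Perm.mul_apply, hpow]
  constructor
  · rintro ⟨h1, h2, h3, h4⟩; exact ⟨h1, h2, h3, by linarith⟩
  · rintro ⟨h1, h2, h3, h4⟩; exact ⟨h1, h2, h3, by linarith⟩
end

section
/- Let A = (a_{ij})_{i,j∈ℤ} be an ℕ-valued ℤ×ℤ matrix with a_{ij} = a_{i+n,j+n}, finitely many nonzero entries in each equivalence class of rows, and Σ_{1≤i≤n, j∈ℤ} a_{ij} = r. Let y_A be the shortest representative of the double coset in the extended affine symmetric group determined by A. Then ℓ(y_A) = Σ a_{ij} a_{kl}, where the sum is over 1 ≤ i ≤ n, i < k, j > l. -/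
open Function
open scoped Classical

namespace S8

lemma stepMono {g : ℤ → ℤ} (h : ∀ i : ℤ, g (i - 1) ≤ g i) : Monotone g := by
  have key : ∀ (m : ℕ) (a : ℤ), g a ≤ g (a + m) := by
    intro m
    induction m with
    | zero => simp
    | succ k ih =>
      intro a
      have h2 := h (a + k + 1)
      have : a + (k:ℤ) + 1 - 1 = a + k := by ring
      rw [this] at h2
      have : a + ((k:ℕ)+1 : ℕ) = a + (k:ℤ) + 1 := by push_cast; ring
      rw [this]
      exact le_trans (ih a) h2
  intro a b hab
  obtain ⟨m, hm⟩ := Int.le.dest hab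
  rw [← hm]
  exact key m a

noncomputable def blk (f : ℤ → ℤ) (x : ℤ) : ℤ :=
  if h : ∃ lb : ℤ, (x ≤ f lb ∧ ∀ z, x ≤ f z → lb ≤ z) then h.choose else 0

lemma blk_spec {f : ℤ → ℤ} (hm : Monotone f) {x : ℤ}
    (ha : ∃ a, f a < x) (hb : ∃ b, x ≤ f b) :
    f (blk f x - 1) < x ∧ x ≤ f (blk f x) := by
  obtain ⟨a, ha⟩ := ha
  have hbdd : ∃ c : ℤ, ∀ z, x ≤ f z → c ≤ z := by
    refine ⟨a + 1, fun z hz => ?_⟩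
    by_contra hc
    push_neg at hc
    have : f z ≤ f a := hm (by omega)
    omega
  obtain ⟨c, hc⟩ := hbdd
  obtain ⟨lb, hlb1, hlb2⟩ := Int.exists_least_of_bdd ⟨c, hc⟩ hb
  have h : ∃ lb : ℤ, (x ≤ f lb ∧ ∀ z, x ≤ f z → lb ≤ z) := ⟨lb, hlb1, hlb2⟩
  simp only [blk, dif_pos h]
  obtain ⟨h1, h2⟩ := h.choose_spec
  refine ⟨?_, h1⟩
  by_contra hcon
  push_neg at hcon
  have := h2 _ hcon
  omega

lemma blk_eq {f : ℤ → ℤ} (hm : Monotone f) {x i : ℤ}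
    (h1 : f (i - 1) < x) (h2 : x ≤ f i) : blk f x = i := by
  have spec := blk_spec hm ⟨i - 1, h1⟩ ⟨i, h2⟩
  set b := blk f x with hb
  rcases lt_trichotomy b i with h | h | h
  · have : f b ≤ f (i - 1) := hm (by omega)
    omega
  · exact h
  · have : f i ≤ f (b - 1) := hm (by omega)
    omega

lemma blk_mono {f : ℤ → ℤ} (hm : Monotone f) {x y : ℤ}
    (hax : ∃ a, f a < x) (hbx : ∃ b, x ≤ f b)
    (hay : ∃ a, f a < y) (hby : ∃ b, y ≤ f b)
    (hxy : x ≤ y) : blk f x ≤ blk f y := by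
  have sx := blk_spec hm hax hbx
  have sy := blk_spec hm hay hby
  by_contra hc
  push_neg at hc
  have : f (blk f y) ≤ f (blk f x - 1) := hm (by omega)
  omega

/-- cumulative sum of column `l` of `B` over rows `≤ i`. -/
noncomputable def csum (B : ℤ → ℤ → ℕ) (l i : ℤ) : ℤ :=
  ∑ᶠ r : ℤ, if r ≤ i then (B r l : ℤ) else 0

lemma csum_nonneg (B : ℤ → ℤ → ℕ) (l i : ℤ) : 0 ≤ csum B l i := by
  refine finsum_nonneg fun r => ?_
  split <;> positivity

lemma csum_step (B : ℤ → ℤ → ℕ) {l : ℤ}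
    (hfin : (Function.support fun r => B r l).Finite) (i : ℤ) :
    csum B l i = csum B l (i - 1) + B i l := by
  have hpt : ∀ r : ℤ, (if r ≤ i then (B r l : ℤ) else 0)
      = (if r ≤ i - 1 then (B r l : ℤ) else 0) + (if r = i then (B r l : ℤ) else 0) := by
    intro r
    rcases lt_trichotomy r i with h | h | h
    · rw [if_pos (by omega), if_pos (by omega), if_neg (by omega), add_zero]
    · rw [if_pos (by omega), if_neg (by omega), if_pos h, zero_add, h]
    · rw [if_neg (by omega), if_neg (by omega), if_neg (by omega), add_zero]
  have hf1 : (Function.support fun r : ℤ => if r ≤ i - 1 then (B r l : ℤ) else 0).Finite := by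
    refine hfin.subset ?_
    intro r hr
    simp only [Function.mem_support] at hr ⊢
    intro h0
    apply hr
    split <;> simp [h0]
  have hf2 : (Function.support fun r : ℤ => if r = i then (B r l : ℤ) else 0).Finite := by
    apply Set.Finite.subset (Set.finite_singleton i)
    intro r hr
    simp only [Function.mem_support] at hr
    by_contra h
    simp only [Set.mem_singleton_iff] at h
    exact hr (by rw [if_neg h])
  have h3 : (∑ᶠ r : ℤ, if r = i then (B r l : ℤ) else 0) = (B i l : ℤ) := by
    rw [finsum_eq_single (fun r : ℤ => if r = i then (B r l : ℤ) else 0) i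
      (fun x hx => if_neg hx)]
    simp
  rw [csum, finsum_congr hpt, finsum_add_distrib hf1 hf2, h3]
  rfl

lemma csum_mono (B : ℤ → ℤ → ℕ) {l : ℤ}
    (hfin : (Function.support fun r => B r l).Finite) : Monotone (csum B l) := by
  refine stepMono fun i => ?_
  rw [csum_step B hfin i]
  exact le_add_of_nonneg_right (by positivity)

lemma csum_bot (B : ℤ → ℤ → ℕ) {l : ℤ}
    (hfin : (Function.support fun r => B r l).Finite) :
    ∃ a : ℤ, ∀ i ≤ a, csum B l i = 0 := by
  refine ⟨-(hfin.toFinset.sup fun z => z.natAbs) - 1, fun i hi => ?_⟩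
  refine finsum_eq_zero_of_forall_eq_zero fun r => ?_
  split
  · rename_i hri
    by_contra h0
    have hrB : B r l ≠ 0 := by
      intro hh; exact h0 (by rw [hh]; simp)
    have hmem : r ∈ hfin.toFinset := by
      simp [Function.mem_support, hrB]
    have h2 : r.natAbs ≤ hfin.toFinset.sup (fun z : ℤ => z.natAbs) :=
      Finset.le_sup (f := fun z : ℤ => z.natAbs) hmem
    omega
  · rfl

lemma csum_top (B : ℤ → ℤ → ℕ) {l : ℤ}
    (hfin : (Function.support fun r => B r l).Finite) :
    ∃ b : ℤ, ∀ i, b ≤ i → csum B l i = ∑ᶠ r : ℤ, (B r l : ℤ) := by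
  refine ⟨(hfin.toFinset.sup fun z => z.natAbs) + 1, fun i hi => ?_⟩
  refine finsum_congr fun r => ?_
  split
  · rfl
  · rename_i hri
    by_contra h0
    have hrB : B r l ≠ 0 := fun hh => h0 (by rw [hh]; simp)
    have hmem : r ∈ hfin.toFinset := by simp [Function.mem_support, hrB]
    have h2 : r.natAbs ≤ hfin.toFinset.sup (fun z : ℤ => z.natAbs) :=
      Finset.le_sup (f := fun z : ℤ => z.natAbs) hmem
    omega

lemma csum_le_total (B : ℤ → ℤ → ℕ) {l : ℤ}
    (hfin : (Function.support fun r => B r l).Finite) (i : ℤ) :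
    csum B l i ≤ ∑ᶠ r : ℤ, (B r l : ℤ) := by
  obtain ⟨b, hb⟩ := csum_top B hfin
  calc csum B l i ≤ csum B l (max i b) := csum_mono B hfin (le_max_left _ _)
    _ = _ := hb _ (le_max_right _ _)

lemma csum_cast (B : ℤ → ℤ → ℕ) {l : ℤ}
    (hfin : (Function.support fun r => B r l).Finite) :
    ∑ᶠ r : ℤ, (B r l : ℤ) = ((∑ᶠ r : ℤ, B r l : ℕ) : ℤ) := by
  have := (Nat.castAddMonoidHom ℤ).map_finsum (f := fun r : ℤ => B r l) hfin
  simpa using this.symm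


/-! ### The phi construction -/

def tr (B : ℤ → ℤ → ℕ) : ℤ → ℤ → ℕ := fun i j => B j i

lemma trtr (B : ℤ → ℤ → ℕ) : tr (tr B) = B := rfl

structure PhiCtx (B : ℤ → ℤ → ℕ) (cR cC : ℤ → ℤ) : Prop where
  hBc : ∀ l, (Function.support fun r => B r l).Finite
  hBr : ∀ i, (Function.support (B i)).Finite
  hcC : ∀ l, cC l = cC (l - 1) + ∑ᶠ r : ℤ, (B r l : ℤ)
  hcR : ∀ i, cR i = cR (i - 1) + ∑ᶠ j : ℤ, (B i j : ℤ)
  hCb : ∀ x : ℤ, ∃ a, cC a < x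
  hCt : ∀ x : ℤ, ∃ b, x ≤ cC b
  hRb : ∀ x : ℤ, ∃ a, cR a < x
  hRt : ∀ x : ℤ, ∃ b, x ≤ cR b

variable {B : ℤ → ℤ → ℕ} {cR cC : ℤ → ℤ}

lemma PhiCtx.trctx (h : PhiCtx B cR cC) : PhiCtx (tr B) cC cR :=
  ⟨h.hBr, h.hBc, h.hcR, h.hcC, h.hRb, h.hRt, h.hCb, h.hCt⟩

lemma PhiCtx.monoC (h : PhiCtx B cR cC) : Monotone cC := by
  refine stepMono fun l => ?_
  have h1 := h.hcC l
  have h2 : (0:ℤ) ≤ ∑ᶠ r : ℤ, (B r l : ℤ) := finsum_nonneg fun r => by positivity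
  linarith

lemma PhiCtx.monoR (h : PhiCtx B cR cC) : Monotone cR := h.trctx.monoC

noncomputable def rowOf (B : ℤ → ℤ → ℕ) (cC : ℤ → ℤ) (x : ℤ) : ℤ :=
  blk (fun t => cC (blk cC x - 1) + csum B (blk cC x) t) x

noncomputable def phi (B : ℤ → ℤ → ℕ) (cR cC : ℤ → ℤ) (x : ℤ) : ℤ :=
  cR (rowOf B cC x - 1) + csum (tr B) (rowOf B cC x) (blk cC x - 1)
    + (x - cC (blk cC x - 1) - csum B (blk cC x) (rowOf B cC x - 1))

lemma phi_def (B : ℤ → ℤ → ℕ) (cR cC : ℤ → ℤ) (x : ℤ) :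
    phi B cR cC x = cR (rowOf B cC x - 1) + csum (tr B) (rowOf B cC x) (blk cC x - 1)
    + (x - cC (blk cC x - 1) - csum B (blk cC x) (rowOf B cC x - 1)) := rfl

lemma PhiCtx.col_spec (h : PhiCtx B cR cC) (x : ℤ) :
    cC (blk cC x - 1) < x ∧ x ≤ cC (blk cC x) :=
  blk_spec h.monoC (h.hCb x) (h.hCt x)

lemma PhiCtx.monoG (h : PhiCtx B cR cC) (l : ℤ) :
    Monotone (fun t => cC (l - 1) + csum B l t) :=
  (csum_mono B (h.hBc l)).const_add _

lemma PhiCtx.row_spec (h : PhiCtx B cR cC) (x : ℤ) :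
    cC (blk cC x - 1) + csum B (blk cC x) (rowOf B cC x - 1) < x ∧
      x ≤ cC (blk cC x - 1) + csum B (blk cC x) (rowOf B cC x) := by
  set l := blk cC x with hl
  have hcs := h.col_spec x
  rw [← hl] at hcs
  apply blk_spec (h.monoG l)
  · obtain ⟨a, ha⟩ := csum_bot B (h.hBc l)
    exact ⟨a, by rw [ha a le_rfl]; omega⟩
  · obtain ⟨b, hb⟩ := csum_top B (h.hBc l)
    refine ⟨b, ?_⟩
    rw [hb b le_rfl]
    have := h.hcC l
    omega

lemma PhiCtx.phi_bounds (h : PhiCtx B cR cC) (x : ℤ) :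
    cR (rowOf B cC x - 1) + csum (tr B) (rowOf B cC x) (blk cC x - 1) < phi B cR cC x ∧
      phi B cR cC x ≤ cR (rowOf B cC x - 1) + csum (tr B) (rowOf B cC x) (blk cC x) := by
  set l := blk cC x with hl
  set k := rowOf B cC x with hk
  have hrs := h.row_spec x
  rw [← hl, ← hk] at hrs
  have hstep1 : csum B l k = csum B l (k - 1) + B k l := csum_step B (h.hBc l) k
  have hstep2 : csum (tr B) k l = csum (tr B) k (l - 1) + B k l := csum_step (tr B) (h.hBr k) l
  constructor
  · show _ < cR (k-1) + csum (tr B) k (l-1) + (x - cC (l-1) - csum B l (k-1))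
    omega
  · show cR (k-1) + csum (tr B) k (l-1) + (x - cC (l-1) - csum B l (k-1)) ≤ _
    omega

lemma PhiCtx.phi_mem (h : PhiCtx B cR cC) (x : ℤ) :
    cR (rowOf B cC x - 1) < phi B cR cC x ∧ phi B cR cC x ≤ cR (rowOf B cC x) := by
  set l := blk cC x with hl
  set k := rowOf B cC x with hk
  have hb := h.phi_bounds x
  rw [← hl, ← hk] at hb
  have h1 : (0:ℤ) ≤ csum (tr B) k (l - 1) := csum_nonneg _ _ _
  have h2 : csum (tr B) k l ≤ ∑ᶠ j : ℤ, (B k j : ℤ) := csum_le_total (tr B) (h.hBr k) l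
  have h3 := h.hcR k
  constructor <;> omega

lemma PhiCtx.col_phi (h : PhiCtx B cR cC) (x : ℤ) :
    blk cR (phi B cR cC x) = rowOf B cC x :=
  blk_eq h.monoR (h.phi_mem x).1 (h.phi_mem x).2

lemma PhiCtx.row_phi (h : PhiCtx B cR cC) (x : ℤ) :
    rowOf (tr B) cR (phi B cR cC x) = blk cC x := by
  rw [rowOf]
  simp only [h.col_phi x]
  exact blk_eq (h.trctx.monoG _) (h.phi_bounds x).1 (h.phi_bounds x).2

lemma PhiCtx.phi_leftinv (h : PhiCtx B cR cC) (x : ℤ) :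
    phi (tr B) cC cR (phi B cR cC x) = x := by
  have e1 := h.col_phi x
  have e2 := h.row_phi x
  rw [phi_def (tr B) cC cR, e1, e2, trtr, phi_def B cR cC]
  ring

lemma PhiCtx.phi_T1 (h : PhiCtx B cR cC) {x x' : ℤ}
    (hc : blk cC x = blk cC x') (hlt : x < x') : phi B cR cC x < phi B cR cC x' := by
  have hk : rowOf B cC x ≤ rowOf B cC x' := by
    rw [rowOf, rowOf, hc]
    have hcs := h.col_spec x
    have hcs' := h.col_spec x'
    rw [hc] at hcs
    obtain ⟨a, ha⟩ := csum_bot B (h.hBc (blk cC x'))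
    obtain ⟨b, hb⟩ := csum_top B (h.hBc (blk cC x'))
    have hcCl := h.hcC (blk cC x')
    refine blk_mono (h.monoG _) ⟨a, by rw [ha a le_rfl]; omega⟩
      ⟨b, by rw [hb b le_rfl]; omega⟩ ⟨a, by rw [ha a le_rfl]; omega⟩
      ⟨b, by rw [hb b le_rfl]; omega⟩ hlt.le
  rcases eq_or_lt_of_le hk with he | hlt2
  · rw [phi_def, phi_def, hc, he]
    omega
  · have h1 := (h.phi_mem x).2
    have h2 := (h.phi_mem x').1
    have h3 : cR (rowOf B cC x) ≤ cR (rowOf B cC x' - 1) := h.monoR (by omega)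
    omega

lemma PhiCtx.phi_T2 (h : PhiCtx B cR cC) {x x' : ℤ}
    (hrr : rowOf B cC x = rowOf B cC x') (hlt : x < x') : phi B cR cC x < phi B cR cC x' := by
  have hl : blk cC x ≤ blk cC x' :=
    blk_mono h.monoC (h.hCb x) (h.hCt x) (h.hCb x') (h.hCt x') hlt.le
  rcases eq_or_lt_of_le hl with he | hlt2
  · rw [phi_def, phi_def, he, hrr]
    omega
  · have h1 := (h.phi_bounds x).2
    have h2 := (h.phi_bounds x').1
    rw [hrr] at h1
    have h3 : csum (tr B) (rowOf B cC x') (blk cC x)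
        ≤ csum (tr B) (rowOf B cC x') (blk cC x' - 1) :=
      csum_mono (tr B) (h.hBr _) (by omega)
    omega

lemma PhiCtx.run_idx (h : PhiCtx B cR cC) {k l x : ℤ}
    (h1 : cC (l - 1) + csum B l (k - 1) < x) (h2 : x ≤ cC (l - 1) + csum B l k) :
    blk cC x = l ∧ rowOf B cC x = k := by
  have hcol : blk cC x = l := by
    refine blk_eq h.monoC ?_ ?_
    · have := csum_nonneg B l (k - 1); omega
    · have := csum_le_total B (h.hBc l) k
      have := h.hcC l
      omega
  refine ⟨hcol, ?_⟩
  rw [rowOf]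
  simp only [hcol]
  exact blk_eq (h.monoG l) h1 h2

lemma PhiCtx.matlem (h : PhiCtx B cR cC) (k l : ℤ) :
    Set.Ioc (cR (k - 1)) (cR k) ∩ (phi B cR cC '' Set.Ioc (cC (l - 1)) (cC l)) =
      Set.Ioc (cR (k - 1) + csum (tr B) k (l - 1)) (cR (k - 1) + csum (tr B) k l) := by
  ext y
  constructor
  · rintro ⟨hy1, x, hx, rfl⟩
    simp only [Set.mem_Ioc] at hx hy1 ⊢
    have hcol : blk cC x = l := blk_eq h.monoC hx.1 hx.2
    have hb := h.phi_bounds x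
    have hm := h.phi_mem x
    rw [hcol] at hb
    have hkk : rowOf B cC x = k := by
      have e1 : blk cR (phi B cR cC x) = rowOf B cC x := h.col_phi x
      have e2 : blk cR (phi B cR cC x) = k := blk_eq h.monoR hy1.1 hy1.2
      omega
    rw [hkk] at hb
    exact hb
  · intro hy
    simp only [Set.mem_Ioc] at hy
    have hy1 : y ∈ Set.Ioc (cR (k - 1)) (cR k) := by
      simp only [Set.mem_Ioc]
      have h1 : (0:ℤ) ≤ csum (tr B) k (l - 1) := csum_nonneg _ _ _
      have h2 : csum (tr B) k l ≤ ∑ᶠ j : ℤ, (B k j : ℤ) := csum_le_total (tr B) (h.hBr k) l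
      have h3 := h.hcR k
      omega
    refine ⟨hy1, phi (tr B) cC cR y, ?_, ?_⟩
    · -- phi (tr B) cC cR y ∈ Ioc (cC (l-1)) (cC l)
      have hridx := h.trctx.run_idx (B := tr B) (k := l) (l := k) (x := y) hy.1 hy.2
      have hm := h.trctx.phi_mem y
      rw [hridx.2] at hm
      simpa using hm
    · have := h.trctx.phi_leftinv y
      rwa [trtr] at this

lemma PhiCtx.phi_period (h : PhiCtx B cR cC) {p s : ℤ}
    (hBper : ∀ i j, B (i + p) (j + p) = B i j)
    (hcCs : ∀ l, cC (l + p) = cC l + s)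
    (hcRs : ∀ i, cR (i + p) = cR i + s) (x : ℤ) :
    phi B cR cC (x + s) = phi B cR cC x + s := by
  have csumsh : ∀ l t : ℤ, csum B (l + p) (t + p) = csum B l t := by
    intro l t
    have : ∀ r : ℤ, (if r + p ≤ t + p then (B (r + p) (l + p) : ℤ) else 0)
        = (if r ≤ t then (B r l : ℤ) else 0) := by
      intro r
      rw [hBper]
      congr 1
      simp only [eq_iff_iff, add_le_add_iff_right]
    calc csum B (l + p) (t + p)
        = ∑ᶠ r : ℤ, (fun r : ℤ => if r ≤ t + p then (B r (l + p) : ℤ) else 0)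
            ((Equiv.addRight p) r) := (finsum_comp_equiv (Equiv.addRight p)).symm
      _ = csum B l t := finsum_congr fun r => this r
  have csumshtr : ∀ i t : ℤ, csum (tr B) (i + p) (t + p) = csum (tr B) i t := by
    intro i t
    have htr : ∀ a b : ℤ, tr B (a + p) (b + p) = tr B a b := fun a b => hBper b a
    have : ∀ r : ℤ, (if r + p ≤ t + p then (tr B (r + p) (i + p) : ℤ) else 0)
        = (if r ≤ t then (tr B r i : ℤ) else 0) := by
      intro r
      rw [htr]
      congr 1
      simp only [eq_iff_iff, add_le_add_iff_right]
    calc csum (tr B) (i + p) (t + p)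
        = ∑ᶠ r : ℤ, (fun r : ℤ => if r ≤ t + p then (tr B r (i + p) : ℤ) else 0)
            ((Equiv.addRight p) r) := (finsum_comp_equiv (Equiv.addRight p)).symm
      _ = csum (tr B) i t := finsum_congr fun r => this r
  have hcol : blk cC (x + s) = blk cC x + p := by
    have hcs := h.col_spec x
    refine blk_eq h.monoC ?_ ?_
    · have : blk cC x + p - 1 = (blk cC x - 1) + p := by ring
      rw [this, hcCs]
      omega
    · rw [hcCs]
      omega
  have hrow : rowOf B cC (x + s) = rowOf B cC x + p := by
    have hrs := h.row_spec x
    rw [rowOf]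
    simp only [hcol]
    refine blk_eq (by
      have : (fun t => cC (blk cC x + p - 1) + csum B (blk cC x + p) t) =
        fun t => cC (blk cC x + p - 1) + csum B (blk cC x + p) t := rfl
      exact (csum_mono B (h.hBc _)).const_add _) ?_ ?_
    · have e1 : blk cC x + p - 1 = (blk cC x - 1) + p := by ring
      have e2 : rowOf B cC x + p - 1 = (rowOf B cC x - 1) + p := by ring
      rw [e1, e2, hcCs, csumsh]
      omega
    · have e1 : blk cC x + p - 1 = (blk cC x - 1) + p := by ring
      rw [e1, hcCs, csumsh]
      omega
  rw [phi, phi, hcol, hrow]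
  have e1 : rowOf B cC x + p - 1 = (rowOf B cC x - 1) + p := by ring
  have e2 : blk cC x + p - 1 = (blk cC x - 1) + p := by ring
  rw [e1, e2, hcRs, hcCs, csumshtr, csumsh]
  ring


/-! ### Cumulative sum functions -/

section Cum

variable {n r : ℕ} {f : ℤ → ℕ} {c : ℤ → ℤ}

lemma cum_mono (hstep : ∀ i : ℤ, c i = c (i - 1) + (f i : ℤ)) : Monotone c := by
  refine stepMono fun i => ?_
  have := hstep i
  have : (0:ℤ) ≤ (f i : ℤ) := by positivity
  omega

lemma sum_Ioc_step (hn : 1 ≤ n) (hper : ∀ i : ℤ, f (i + (n:ℤ)) = f i) (a : ℤ) :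
    ∑ t ∈ Finset.Ioc (a+1) (a+1+(n:ℤ)), f t = ∑ t ∈ Finset.Ioc a (a+(n:ℤ)), f t := by
  have hn' : (1:ℤ) ≤ (n:ℤ) := by exact_mod_cast hn
  have i1 : Finset.Ioc a (a+(n:ℤ)) = insert (a+1) (Finset.Ioc (a+1) (a+(n:ℤ))) := by
    ext z; simp only [Finset.mem_Ioc, Finset.mem_insert]; omega
  have i2 : Finset.Ioc (a+1) (a+1+(n:ℤ)) = insert (a+1+(n:ℤ)) (Finset.Ioc (a+1) (a+(n:ℤ))) := by
    ext z; simp only [Finset.mem_Ioc, Finset.mem_insert]; omega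
  have nm1 : a+1 ∉ Finset.Ioc (a+1) (a+(n:ℤ)) := by simp
  have nm2 : a+1+(n:ℤ) ∉ Finset.Ioc (a+1) (a+(n:ℤ)) := by simp
  rw [i2, Finset.sum_insert nm2, i1, Finset.sum_insert nm1]
  have : f (a+1+(n:ℤ)) = f (a+1) := hper (a+1)
  omega

lemma cum_sumIoc (hn : 1 ≤ n) (hper : ∀ i : ℤ, f (i + (n:ℤ)) = f i)
    (hsum : ∑ t ∈ Finset.Icc (1:ℤ) (n:ℤ), f t = r) (i : ℤ) :
    ∑ t ∈ Finset.Ioc i (i+(n:ℤ)), f t = r := by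
  have base : ∑ t ∈ Finset.Ioc (0:ℤ) (0+(n:ℤ)), f t = r := by
    have : Finset.Ioc (0:ℤ) (0+(n:ℤ)) = Finset.Icc 1 (n:ℤ) := by
      ext z; simp only [Finset.mem_Ioc, Finset.mem_Icc]; omega
    rw [this, hsum]
  induction i using Int.induction_on with
  | zero => exact base
  | succ k ih => rw [sum_Ioc_step hn hper k]; exact ih
  | pred k ih =>
    have h2 := sum_Ioc_step hn hper (-(k:ℤ)-1)
    have e : -(k:ℤ)-1+1 = -(k:ℤ) := by ring
    rw [e] at h2
    rw [← h2]
    exact ih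

lemma cum_csum (hstep : ∀ i : ℤ, c i = c (i - 1) + (f i : ℤ)) :
    ∀ (m : ℕ) (i : ℤ), c (i + (m:ℤ)) = c i + ∑ t ∈ Finset.Ioc i (i + (m:ℤ)), (f t : ℤ) := by
  intro m
  induction m with
  | zero => intro i; simp
  | succ k ih =>
    intro i
    have e1 : i + ((k+1 : ℕ):ℤ) = (i + (k:ℤ)) + 1 := by push_cast; ring
    have e2 := hstep ((i + (k:ℤ)) + 1)
    have e3 : (i + (k:ℤ)) + 1 - 1 = i + (k:ℤ) := by ring
    rw [e3] at e2
    have i1 : Finset.Ioc i (i + ((k+1:ℕ):ℤ)) = insert (i + (k:ℤ) + 1) (Finset.Ioc i (i + (k:ℤ))) := by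
      ext z; simp only [Finset.mem_Ioc, Finset.mem_insert]; push_cast; omega
    have nm : i + (k:ℤ) + 1 ∉ Finset.Ioc i (i + (k:ℤ)) := by simp
    rw [i1, Finset.sum_insert nm, e1, e2, ih i]
    ring

lemma cum_shift (hn : 1 ≤ n) (hstep : ∀ i : ℤ, c i = c (i - 1) + (f i : ℤ))
    (hper : ∀ i : ℤ, f (i + (n:ℤ)) = f i)
    (hsum : ∑ t ∈ Finset.Icc (1:ℤ) (n:ℤ), f t = r) (i : ℤ) :
    c (i + (n:ℤ)) = c i + (r:ℤ) := by
  have h1 := cum_csum hstep n i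
  have h2 := cum_sumIoc hn hper hsum i
  have h3 : ∑ t ∈ Finset.Ioc i (i + (n:ℤ)), (f t : ℤ) = ((∑ t ∈ Finset.Ioc i (i + (n:ℤ)), f t : ℕ) : ℤ) := by
    push_cast; rfl
  rw [h1, h3, h2]

lemma cum_low (hn : 1 ≤ n) (hr : 1 ≤ r) (hc0 : c 0 = 0)
    (hshift : ∀ i : ℤ, c (i + (n:ℤ)) = c i + (r:ℤ)) (x : ℤ) : ∃ a, c a < x := by
  have key : ∀ m : ℕ, c (-(m:ℤ) * n) = -(m:ℤ) * r := by
    intro m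
    induction m with
    | zero => simpa using hc0
    | succ k ih =>
      have e : -((k:ℤ)+1) * (n:ℤ) + (n:ℤ) = -(k:ℤ) * n := by ring
      have h4 := hshift (-((k:ℤ)+1) * (n:ℤ))
      rw [e, ih] at h4
      have egoal : -(((k+1:ℕ)):ℤ) = -((k:ℤ)+1) := by push_cast; ring
      rw [show (((k+1:ℕ)):ℤ) = ((k:ℤ)+1) by push_cast; ring]
      linarith
  have h3 : (1:ℤ) ≤ (r:ℤ) := by exact_mod_cast hr
  refine ⟨-((x.natAbs + 1 : ℕ):ℤ) * n, ?_⟩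
  rw [key]
  have h5 : ((x.natAbs:ℤ)+1) * 1 ≤ ((x.natAbs:ℤ)+1) * r :=
    mul_le_mul_of_nonneg_left h3 (by positivity)
  have h6 : -x ≤ (x.natAbs:ℤ) := by omega
  push_cast at h5 h6 ⊢
  linarith

lemma cum_high (hn : 1 ≤ n) (hr : 1 ≤ r) (hc0 : c 0 = 0)
    (hshift : ∀ i : ℤ, c (i + (n:ℤ)) = c i + (r:ℤ)) (x : ℤ) : ∃ b, x ≤ c b := by
  have key : ∀ m : ℕ, c ((m:ℤ) * n) = (m:ℤ) * r := by
    intro m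
    induction m with
    | zero => simpa using hc0
    | succ k ih =>
      have e : ((k:ℤ)) * (n:ℤ) + (n:ℤ) = ((k:ℤ)+1) * n := by ring
      have h4 := hshift ((k:ℤ) * (n:ℤ))
      rw [e, ih] at h4
      rw [show (((k+1:ℕ)):ℤ) = ((k:ℤ)+1) by push_cast; ring]
      linarith
  have h3 : (1:ℤ) ≤ (r:ℤ) := by exact_mod_cast hr
  refine ⟨((x.natAbs + 1 : ℕ):ℤ) * n, ?_⟩
  rw [key]
  have h5 : ((x.natAbs:ℤ)+1) * 1 ≤ ((x.natAbs:ℤ)+1) * r :=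
    mul_le_mul_of_nonneg_left h3 (by positivity)
  have h6 : x ≤ (x.natAbs:ℤ) := by omega
  push_cast at h5 h6 ⊢
  linarith

lemma cum_blk_range (hmono : Monotone c) (hc0 : c 0 = 0) (hcn : c (n:ℤ) = (r:ℤ))
    (hlow : ∀ x : ℤ, ∃ a, c a < x) (hhigh : ∀ x : ℤ, ∃ b, x ≤ c b) (x : ℤ) :
    (1 ≤ x ∧ x ≤ (r:ℤ)) ↔ (1 ≤ blk c x ∧ blk c x ≤ (n:ℤ)) := by
  have spec := blk_spec hmono (hlow x) (hhigh x)
  constructor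
  · rintro ⟨hx1, hx2⟩
    constructor
    · by_contra hcon
      push_neg at hcon
      have : c (blk c x) ≤ c 0 := hmono (by omega)
      omega
    · by_contra hcon
      push_neg at hcon
      have : c (n:ℤ) ≤ c (blk c x - 1) := hmono (by omega)
      omega
  · rintro ⟨h1, h2⟩
    have e1 : c 0 ≤ c (blk c x - 1) := hmono (by omega)
    have e2 : c (blk c x) ≤ c (n:ℤ) := hmono h2
    omega

lemma cum_blk_shift (hmono : Monotone c)
    (hshift : ∀ i : ℤ, c (i + (n:ℤ)) = c i + (r:ℤ))
    (hlow : ∀ x : ℤ, ∃ a, c a < x) (hhigh : ∀ x : ℤ, ∃ b, x ≤ c b) (x : ℤ) :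
    blk c (x + (r:ℤ)) = blk c x + (n:ℤ) := by
  have spec := blk_spec hmono (hlow x) (hhigh x)
  refine blk_eq hmono ?_ ?_
  · have e : blk c x + (n:ℤ) - 1 = (blk c x - 1) + (n:ℤ) := by ring
    rw [e, hshift]
    omega
  · rw [hshift]
    omega

lemma cum_idx_mono (hmono : Monotone c)
    (hlow : ∀ x : ℤ, ∃ a, c a < x) (hhigh : ∀ x : ℤ, ∃ b, x ≤ c b) {x y : ℤ} (hxy : x ≤ y) :
    blk c x ≤ blk c y :=
  blk_mono hmono (hlow x) (hhigh x) (hlow y) (hhigh y) hxy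

lemma cum_lt_of_idx_lt (hmono : Monotone c)
    (hlow : ∀ x : ℤ, ∃ a, c a < x) (hhigh : ∀ x : ℤ, ∃ b, x ≤ c b) {x y : ℤ}
    (hxy : blk c x < blk c y) : x < y := by
  have sx := blk_spec hmono (hlow x) (hhigh x)
  have sy := blk_spec hmono (hlow y) (hhigh y)
  have : c (blk c x) ≤ c (blk c y - 1) := hmono (by omega)
  omega

end Cum


/-! ### Matrix periodicity facts -/

section MatrixFacts

variable {n : ℕ} {A : ℤ → ℤ → ℕ}

lemma Ashift (hAper : ∀ i j : ℤ, A (i + (n:ℤ)) (j + (n:ℤ)) = A i j)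
    (m i j : ℤ) : A (i + m * n) (j + m * n) = A i j := by
  have key : ∀ x y : ℤ, A (x - n) (y - n) = A x y := by
    intro x y
    have := hAper (x - n) (y - n)
    simpa using this.symm
  induction m using Int.induction_on with
  | zero => simp
  | succ m ih =>
    have e1 : i + ((m:ℤ)+1) * n = (i + m * n) + n := by ring
    have e2 : j + ((m:ℤ)+1) * n = (j + m * n) + n := by ring
    rw [e1, e2, hAper, ih]
  | pred m ih =>
    have e1 : i + (-(m:ℤ)-1) * n = (i + (-(m:ℤ)) * n) - n := by ring
    have e2 : j + (-(m:ℤ)-1) * n = (j + (-(m:ℤ)) * n) - n := by ring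
    rw [e1, e2, key, ih]

lemma lam_per (hAper : ∀ i j : ℤ, A (i + (n:ℤ)) (j + (n:ℤ)) = A i j) (i : ℤ) :
    (∑ᶠ j : ℤ, A (i + (n:ℤ)) j) = ∑ᶠ j : ℤ, A i j := by
  have h1 : ∀ j : ℤ, A (i + (n:ℤ)) j = A i (j - n) := by
    intro j
    have := hAper i (j - n)
    simpa using this
  calc (∑ᶠ j : ℤ, A (i + (n:ℤ)) j) = ∑ᶠ j : ℤ, A i (j - n) := finsum_congr h1
    _ = ∑ᶠ j : ℤ, A i j := finsum_comp_equiv (Equiv.subRight (n:ℤ)) (f := fun j => A i j)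

lemma mu_per (hAper : ∀ i j : ℤ, A (i + (n:ℤ)) (j + (n:ℤ)) = A i j) (j : ℤ) :
    (∑ᶠ i : ℤ, A i (j + (n:ℤ))) = ∑ᶠ i : ℤ, A i j := by
  have h1 : ∀ i : ℤ, A i (j + (n:ℤ)) = A (i - n) j := by
    intro i
    have := hAper (i - n) j
    simpa using this
  calc (∑ᶠ i : ℤ, A i (j + (n:ℤ))) = ∑ᶠ i : ℤ, A (i - n) j := finsum_congr h1
    _ = ∑ᶠ i : ℤ, A i j := finsum_comp_equiv (Equiv.subRight (n:ℤ)) (f := fun i => A i j)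

lemma normalize_mem (hn : 1 ≤ n) (i : ℤ) :
    1 ≤ i - ((i-1)/n) * n ∧ i - ((i-1)/n) * n ≤ (n:ℤ) := by
  have hpos : (0:ℤ) < n := by exact_mod_cast hn
  have h1 : 0 ≤ (i-1) % n := Int.emod_nonneg _ hpos.ne'
  have h2 : (i-1) % n < n := Int.emod_lt_of_pos _ hpos
  have h5 : i - (i-1)/(n:ℤ) * n = (i-1) % n + 1 := by rw [Int.emod_def]; ring
  rw [h5]
  omega

lemma norm_inv {n : ℕ} (hn : 1 ≤ n) {j : ℤ} (hj1 : 1 ≤ j) (hj2 : j ≤ (n:ℤ)) (m : ℤ) :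
    (j - m * n - 1) / (n:ℤ) = -m := by
  have hpos : (0:ℤ) < n := by exact_mod_cast hn
  have e : j - m * n - 1 = (j - 1) + (-m) * n := by ring
  rw [e, Int.add_mul_ediv_right _ _ hpos.ne']
  rw [Int.ediv_eq_zero_of_lt (by omega) (by omega)]
  ring

lemma exists_D (hn : 1 ≤ n)
    (hAper : ∀ i j : ℤ, A (i + (n:ℤ)) (j + (n:ℤ)) = A i j)
    (hrow : ∀ i : ℤ, (Function.support (A i)).Finite) :
    ∃ D : ℕ, ∀ i j : ℤ, A i j ≠ 0 → (i - j).natAbs ≤ D := by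
  refine ⟨(Finset.Icc (1:ℤ) (n:ℤ)).sup
    (fun i₀ => ((hrow i₀).toFinset.sup (fun j => (i₀ - j).natAbs))), fun i j hij => ?_⟩
  set m := (i-1)/(n:ℤ) with hm
  have hmem := normalize_mem hn i
  have hval : A (i + (-m) * n) (j + (-m) * n) = A i j := Ashift hAper (-m) i j
  have hval' : A (i - m * n) (j - m * n) ≠ 0 := by
    have e1 : i + (-m) * n = i - m * n := by ring
    have e2 : j + (-m) * n = j - m * n := by ring
    rw [e1, e2] at hval
    rw [hval]
    exact hij
  have hmem2 : (j - m * n) ∈ (hrow (i - m * n)).toFinset := by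
    simp only [Set.Finite.mem_toFinset, Function.mem_support]
    exact hval'
  have hle1 : ((i - m * n) - (j - m * n)).natAbs
      ≤ (hrow (i - m * n)).toFinset.sup (fun j => ((i - m * n) - j).natAbs) :=
    Finset.le_sup (f := fun j => ((i - m * n) - j).natAbs) hmem2
  have hle2 : (hrow (i - m * n)).toFinset.sup (fun j => ((i - m * n) - j).natAbs)
      ≤ (Finset.Icc (1:ℤ) (n:ℤ)).sup
        (fun i₀ => ((hrow i₀).toFinset.sup (fun j => (i₀ - j).natAbs))) := by
    apply Finset.le_sup (f := fun i₀ => ((hrow i₀).toFinset.sup (fun j => (i₀ - j).natAbs)))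
    simp only [Finset.mem_Icc]
    exact hmem
  have e3 : (i - m * n) - (j - m * n) = i - j := by ring
  rw [e3] at hle1
  omega

lemma swap_sums (hn : 1 ≤ n)
    (hAper : ∀ i j : ℤ, A (i + (n:ℤ)) (j + (n:ℤ)) = A i j)
    (hrow : ∀ i : ℤ, (Function.support (A i)).Finite)
    (hcol : ∀ j : ℤ, (Function.support (fun i => A i j)).Finite) :
    ∑ j ∈ Finset.Icc (1:ℤ) (n:ℤ), (∑ᶠ i : ℤ, A i j)
      = ∑ i ∈ Finset.Icc (1:ℤ) (n:ℤ), (∑ᶠ j : ℤ, A i j) := by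
  obtain ⟨D, hD⟩ := exists_D hn hAper hrow
  set K := Finset.Icc (1 - (D:ℤ)) ((n:ℤ) + D) with hK
  set I := Finset.Icc (1:ℤ) (n:ℤ) with hI
  have hcolK : ∀ j ∈ I, (∑ᶠ i : ℤ, A i j) = ∑ i ∈ K, A i j := by
    intro j hj
    rw [hI, Finset.mem_Icc] at hj
    apply finsum_eq_sum_of_support_subset
    intro i hi
    simp only [Function.mem_support] at hi
    have := hD i j hi
    simp only [hK, Finset.coe_Icc, Set.mem_Icc]
    omega
  have hrowK : ∀ i ∈ I, (∑ᶠ j : ℤ, A i j) = ∑ j ∈ K, A i j := by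
    intro i hi
    rw [hI, Finset.mem_Icc] at hi
    apply finsum_eq_sum_of_support_subset
    intro j hj
    simp only [Function.mem_support] at hj
    have := hD i j hj
    simp only [hK, Finset.coe_Icc, Set.mem_Icc]
    omega
  rw [Finset.sum_congr rfl hcolK, Finset.sum_congr rfl hrowK]
  rw [← Finset.sum_product', ← Finset.sum_product']
  rw [← Finset.sum_filter_ne_zero (I ×ˢ K) (f := fun p => A p.2 p.1),
      ← Finset.sum_filter_ne_zero (I ×ˢ K) (f := fun p => A p.1 p.2)]
  have hpos : (0:ℤ) < n := by exact_mod_cast hn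
  refine Finset.sum_nbij' (fun p => (p.2 - ((p.2-1)/(n:ℤ)) * n, p.1 - ((p.2-1)/(n:ℤ)) * n))
    (fun p => (p.2 - ((p.2-1)/(n:ℤ)) * n, p.1 - ((p.2-1)/(n:ℤ)) * n)) ?_ ?_ ?_ ?_ ?_
  · rintro ⟨j, i⟩ hp
    simp only [Finset.mem_filter, Finset.mem_product, hI, hK, Finset.mem_Icc] at hp ⊢
    obtain ⟨⟨hj, hi⟩, hA⟩ := hp
    set m := (i-1)/(n:ℤ) with hm
    have hval : A (i - m * n) (j - m * n) = A i j := by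
      have := Ashift hAper (-m) i j
      have e1 : i + (-m) * n = i - m * n := by ring
      have e2 : j + (-m) * n = j - m * n := by ring
      rw [e1, e2] at this
      exact this
    have hmem := normalize_mem hn i
    rw [← hm] at hmem
    have hne : A (i - m * n) (j - m * n) ≠ 0 := by rw [hval]; exact hA
    have hd := hD _ _ hne
    set i' := i - m * n with hi'
    set j' := j - m * n with hj'
    have hrel : i' - j' = i - j := by rw [hi', hj']; ring
    clear_value i' j'
    refine ⟨⟨⟨hmem.1, hmem.2⟩, ?_⟩, hne⟩
    omega
  · rintro ⟨i, j⟩ hp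
    simp only [Finset.mem_filter, Finset.mem_product, hI, hK, Finset.mem_Icc] at hp ⊢
    obtain ⟨⟨hi, hj⟩, hA⟩ := hp
    set m := (j-1)/(n:ℤ) with hm
    have hval : A (i - m * n) (j - m * n) = A i j := by
      have := Ashift hAper (-m) i j
      have e1 : i + (-m) * n = i - m * n := by ring
      have e2 : j + (-m) * n = j - m * n := by ring
      rw [e1, e2] at this
      exact this
    have hmem := normalize_mem hn j
    rw [← hm] at hmem
    have hne : A (i - m * n) (j - m * n) ≠ 0 := by rw [hval]; exact hA
    have hd := hD _ _ hne
    set i' := i - m * n with hi'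
    set j' := j - m * n with hj'
    have hrel : i' - j' = i - j := by rw [hi', hj']; ring
    clear_value i' j'
    refine ⟨⟨⟨hmem.1, hmem.2⟩, ?_⟩, hne⟩
    omega
  · rintro ⟨j, i⟩ hp
    simp only [Finset.mem_filter, Finset.mem_product, hI, Finset.mem_Icc] at hp
    obtain ⟨⟨hj, _⟩, _⟩ := hp
    have hinv := norm_inv hn hj.1 hj.2 ((i-1)/(n:ℤ))
    simp only [Prod.mk.injEq]
    rw [hinv]
    constructor <;> ring
  · rintro ⟨i, j⟩ hp
    simp only [Finset.mem_filter, Finset.mem_product, hI, Finset.mem_Icc] at hp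
    obtain ⟨⟨hi, _⟩, _⟩ := hp
    have hinv := norm_inv hn hi.1 hi.2 ((j-1)/(n:ℤ))
    simp only [Prod.mk.injEq]
    rw [hinv]
    constructor <;> ring
  · rintro ⟨j, i⟩ hp
    simp only [Finset.mem_filter, Finset.mem_product, hI, Finset.mem_Icc] at hp
    set m := (i-1)/(n:ℤ) with hm
    have hval : A (i - m * n) (j - m * n) = A i j := by
      have := Ashift hAper (-m) i j
      have e1 : i + (-m) * n = i - m * n := by ring
      have e2 : j + (-m) * n = j - m * n := by ring
      rw [e1, e2] at this
      exact this
    exact hval.symm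

end MatrixFacts


/-! ### Evaluating the nested finsum -/

noncomputable def Vf (D n : ℕ) : Finset ℤ := Finset.Icc (-(2*(D:ℤ)) - 1) ((n:ℤ) + 2*D + 1)

noncomputable def Uf (D n : ℕ) : Finset (ℤ×ℤ×ℤ×ℤ) := (Vf D n) ×ˢ (Vf D n) ×ˢ (Vf D n) ×ˢ (Vf D n)

def G1 (A : ℤ→ℤ→ℕ) (n : ℕ) (q : ℤ×ℤ×ℤ×ℤ) : ℕ :=
  if 1 ≤ q.1 ∧ q.1 ≤ (n:ℤ) ∧ q.1 < q.2.2.1 ∧ q.2.2.2 < q.2.1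
    then A q.1 q.2.1 * A q.2.2.1 q.2.2.2 else 0

def G2 (A : ℤ→ℤ→ℕ) (n : ℕ) (q : ℤ×ℤ×ℤ×ℤ) : ℕ :=
  if 1 ≤ q.2.2.2 ∧ q.2.2.2 ≤ (n:ℤ) ∧ q.1 < q.2.2.1 ∧ q.2.2.2 < q.2.1
    then A q.1 q.2.1 * A q.2.2.1 q.2.2.2 else 0

lemma finsum_Prop_zero (p : Prop) {x : ℕ} (h : x = 0) : (∑ᶠ (_ : p), x) = 0 := by
  rw [h]; exact finsum_zero

lemma condsum_eq_sum (p : ℤ → Prop) [DecidablePred p] (F : ℤ → ℕ) (s : Finset ℤ)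
    (hs : ∀ x, p x → F x ≠ 0 → x ∈ s) :
    (∑ᶠ (x : ℤ) (_ : p x), F x) = ∑ x ∈ s, if p x then F x else 0 := by
  have h1 : ∀ x, (∑ᶠ (_ : p x), F x) = if p x then F x else 0 := fun x => finsum_eq_if
  rw [finsum_congr h1]
  apply finsum_eq_sum_of_support_subset
  intro x hx
  simp only [Function.mem_support, ne_eq] at hx
  by_cases hp : p x
  · rw [if_pos hp] at hx; exact hs x hp hx
  · rw [if_neg hp] at hx; simp at hx

section EvalRHS

variable {n : ℕ} {A : ℤ → ℤ → ℕ} {D : ℕ}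

lemma eval_RHS (hn : 1 ≤ n) (hD : ∀ i j : ℤ, A i j ≠ 0 → (i - j).natAbs ≤ D) :
    (∑ᶠ (i : ℤ) (_ : 1 ≤ i ∧ i ≤ (n : ℤ)) (k : ℤ) (_ : i < k)
        (j : ℤ) (l : ℤ) (_ : l < j), A i j * A k l)
    = ∑ q ∈ Uf D n, G1 A n q := by
  set V := Vf D n with hV
  have hVmem : ∀ z : ℤ, -(2*(D:ℤ)) - 1 ≤ z → z ≤ (n:ℤ) + 2*D + 1 → z ∈ V := by
    intro z h1 h2; rw [hV, Vf, Finset.mem_Icc]; exact ⟨h1, h2⟩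
  -- innermost layer
  have E_l : ∀ i k j : ℤ, 1 ≤ i → i ≤ (n:ℤ) → i < k →
      (∑ᶠ (l : ℤ) (_ : l < j), A i j * A k l)
        = ∑ l ∈ V, if l < j then A i j * A k l else 0 := by
    intro i k j hi1 hi2 hik
    apply condsum_eq_sum
    intro l hlj hne
    have hAij : A i j ≠ 0 := fun h => hne (by rw [h, zero_mul])
    have hAkl : A k l ≠ 0 := fun h => hne (by rw [h, mul_zero])
    have d1 := hD i j hAij
    have d2 := hD k l hAkl
    apply hVmem <;> omega
  have E_j : ∀ i k : ℤ, 1 ≤ i → i ≤ (n:ℤ) → i < k →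
      (∑ᶠ (j : ℤ) (l : ℤ) (_ : l < j), A i j * A k l)
        = ∑ j ∈ V, ∑ l ∈ V, if l < j then A i j * A k l else 0 := by
    intro i k hi1 hi2 hik
    have step1 : (∑ᶠ (j : ℤ) (l : ℤ) (_ : l < j), A i j * A k l)
        = ∑ j ∈ V, ∑ᶠ (l : ℤ) (_ : l < j), A i j * A k l := by
      apply finsum_eq_sum_of_support_subset
      intro j hj
      simp only [Function.mem_support, ne_eq] at hj
      have hAij : A i j ≠ 0 := by
        intro h0
        apply hj
        apply finsum_eq_zero_of_forall_eq_zero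
        intro l
        exact finsum_Prop_zero _ (by rw [h0, zero_mul])
      have d1 := hD i j hAij
      apply hVmem <;> omega
    rw [step1]
    exact Finset.sum_congr rfl fun j _ => E_l i k j hi1 hi2 hik
  have E_k : ∀ i : ℤ, 1 ≤ i → i ≤ (n:ℤ) →
      (∑ᶠ (k : ℤ) (_ : i < k) (j : ℤ) (l : ℤ) (_ : l < j), A i j * A k l)
        = ∑ k ∈ V, if i < k then
            (∑ j ∈ V, ∑ l ∈ V, if l < j then A i j * A k l else 0) else 0 := by
    intro i hi1 hi2
    have step1 : (∑ᶠ (k : ℤ) (_ : i < k) (j : ℤ) (l : ℤ) (_ : l < j), A i j * A k l)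
        = ∑ k ∈ V, if i < k then (∑ᶠ (j : ℤ) (l : ℤ) (_ : l < j), A i j * A k l) else 0 := by
      apply condsum_eq_sum
      intro k hik hne
      have hex : ∃ j l : ℤ, l < j ∧ A i j ≠ 0 ∧ A k l ≠ 0 := by
        by_contra hcon
        push_neg at hcon
        apply hne
        apply finsum_eq_zero_of_forall_eq_zero
        intro j
        apply finsum_eq_zero_of_forall_eq_zero
        intro l
        rw [finsum_eq_if]
        split_ifs with hlj
        · by_cases h1 : A i j = 0
          · rw [h1, zero_mul]
          · rw [hcon j l hlj h1, mul_zero]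
        · rfl
      obtain ⟨j, l, hlj, hAij, hAkl⟩ := hex
      have d1 := hD i j hAij
      have d2 := hD k l hAkl
      apply hVmem <;> omega
    rw [step1]
    refine Finset.sum_congr rfl fun k _ => ?_
    by_cases hik : i < k
    · rw [if_pos hik, if_pos hik, E_j i k hi1 hi2 hik]
    · rw [if_neg hik, if_neg hik]
  -- outermost layer
  have E_i : (∑ᶠ (i : ℤ) (_ : 1 ≤ i ∧ i ≤ (n : ℤ)) (k : ℤ) (_ : i < k)
        (j : ℤ) (l : ℤ) (_ : l < j), A i j * A k l)
      = ∑ i ∈ Finset.Icc (1:ℤ) (n:ℤ), ∑ k ∈ V, if i < k then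
          (∑ j ∈ V, ∑ l ∈ V, if l < j then A i j * A k l else 0) else 0 := by
    have step1 : (∑ᶠ (i : ℤ) (_ : 1 ≤ i ∧ i ≤ (n : ℤ)) (k : ℤ) (_ : i < k)
          (j : ℤ) (l : ℤ) (_ : l < j), A i j * A k l)
        = ∑ i ∈ Finset.Icc (1:ℤ) (n:ℤ), if (1 ≤ i ∧ i ≤ (n:ℤ)) then
            (∑ᶠ (k : ℤ) (_ : i < k) (j : ℤ) (l : ℤ) (_ : l < j), A i j * A k l) else 0 := by
      apply condsum_eq_sum
      intro i hi _
      rw [Finset.mem_Icc]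
      exact hi
    rw [step1]
    refine Finset.sum_congr rfl fun i hi => ?_
    rw [Finset.mem_Icc] at hi
    rw [if_pos hi, E_k i hi.1 hi.2]
  rw [E_i]
  -- reshape to the product sum
  have hsub : Finset.Icc (1:ℤ) (n:ℤ) ⊆ V := by
    intro z hz
    rw [Finset.mem_Icc] at hz
    apply hVmem <;> omega
  have reshape : ∑ q ∈ Uf D n, G1 A n q
      = ∑ i ∈ V, ∑ j ∈ V, ∑ k ∈ V, ∑ l ∈ V, G1 A n (i, j, k, l) := by
    rw [Uf, Finset.sum_product]
    refine Finset.sum_congr rfl fun i _ => ?_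
    rw [Finset.sum_product]
    refine Finset.sum_congr rfl fun j _ => ?_
    rw [Finset.sum_product]
  rw [reshape]
  have ext1 : ∑ i ∈ V, ∑ j ∈ V, ∑ k ∈ V, ∑ l ∈ V, G1 A n (i, j, k, l)
      = ∑ i ∈ Finset.Icc (1:ℤ) (n:ℤ), ∑ j ∈ V, ∑ k ∈ V, ∑ l ∈ V, G1 A n (i, j, k, l) := by
    symm
    apply Finset.sum_subset hsub
    intro i _ hni
    rw [Finset.mem_Icc] at hni
    push_neg at hni
    apply Finset.sum_eq_zero; intro j _
    apply Finset.sum_eq_zero; intro k _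
    apply Finset.sum_eq_zero; intro l _
    rw [G1, if_neg]
    intro hcon
    obtain ⟨h1, h2, _⟩ := hcon
    simp only at h1 h2
    omega
  rw [ext1]
  refine Finset.sum_congr rfl fun i hi => ?_
  rw [Finset.mem_Icc] at hi
  rw [Finset.sum_comm]
  refine Finset.sum_congr rfl fun k _ => ?_
  by_cases hik : i < k
  · rw [if_pos hik]
    refine Finset.sum_congr rfl fun j _ => ?_
    refine Finset.sum_congr rfl fun l _ => ?_
    rw [G1]
    by_cases hlj : l < j
    · rw [if_pos hlj, if_pos]
      exact ⟨hi.1, hi.2, hik, hlj⟩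
    · rw [if_neg hlj, if_neg]
      intro hcon
      exact hlj hcon.2.2.2
  · rw [if_neg hik]
    symm
    apply Finset.sum_eq_zero; intro j _
    apply Finset.sum_eq_zero; intro l _
    rw [G1, if_neg]
    intro hcon
    exact hik hcon.2.2.1
end EvalRHS


/-! ### Shifting between the two normalizations -/

section ShiftG

variable {n : ℕ} {A : ℤ → ℤ → ℕ} {D : ℕ}

lemma G2_ne_iff {q : ℤ×ℤ×ℤ×ℤ} :
    G2 A n q ≠ 0 ↔ (1 ≤ q.2.2.2 ∧ q.2.2.2 ≤ (n:ℤ) ∧ q.1 < q.2.2.1 ∧ q.2.2.2 < q.2.1)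
      ∧ A q.1 q.2.1 * A q.2.2.1 q.2.2.2 ≠ 0 := by
  rw [G2]
  split_ifs with h
  · simp [h]
  · simp [h]

lemma G1_ne_iff {q : ℤ×ℤ×ℤ×ℤ} :
    G1 A n q ≠ 0 ↔ (1 ≤ q.1 ∧ q.1 ≤ (n:ℤ) ∧ q.1 < q.2.2.1 ∧ q.2.2.2 < q.2.1)
      ∧ A q.1 q.2.1 * A q.2.2.1 q.2.2.2 ≠ 0 := by
  rw [G1]
  split_ifs with h
  · simp [h]
  · simp [h]

lemma shift_G (hn : 1 ≤ n)
    (hAper : ∀ i j : ℤ, A (i + (n:ℤ)) (j + (n:ℤ)) = A i j)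
    (hD : ∀ i j : ℤ, A i j ≠ 0 → (i - j).natAbs ≤ D) :
    ∑ q ∈ Uf D n, G2 A n q = ∑ q ∈ Uf D n, G1 A n q := by
  have hval : ∀ (m i j : ℤ), A (i - m * n) (j - m * n) = A i j := by
    intro m i j
    have := Ashift hAper (-m) i j
    have e1 : i + (-m) * n = i - m * n := by ring
    have e2 : j + (-m) * n = j - m * n := by ring
    rw [e1, e2] at this
    exact this
  rw [← Finset.sum_filter_ne_zero (Uf D n) (f := G2 A n),
      ← Finset.sum_filter_ne_zero (Uf D n) (f := G1 A n)]
  refine Finset.sum_nbij'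
    (fun q => (q.1 - ((q.1-1)/(n:ℤ))*n, q.2.1 - ((q.1-1)/(n:ℤ))*n,
      q.2.2.1 - ((q.1-1)/(n:ℤ))*n, q.2.2.2 - ((q.1-1)/(n:ℤ))*n))
    (fun q => (q.1 - ((q.2.2.2-1)/(n:ℤ))*n, q.2.1 - ((q.2.2.2-1)/(n:ℤ))*n,
      q.2.2.1 - ((q.2.2.2-1)/(n:ℤ))*n, q.2.2.2 - ((q.2.2.2-1)/(n:ℤ))*n)) ?_ ?_ ?_ ?_ ?_
  · rintro ⟨i, j, k, l⟩ hq
    rw [Finset.mem_filter] at hq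
    obtain ⟨-, hne⟩ := hq
    rw [G2_ne_iff] at hne
    dsimp only at hne
    obtain ⟨⟨hl1, hl2, hik, hlj⟩, hprod⟩ := hne
    dsimp only
    set m := (i-1)/(n:ℤ) with hm
    have hmem := normalize_mem hn i
    rw [← hm] at hmem
    have hv1 : A (i - m*n) (j - m*n) = A i j := hval m i j
    have hv2 : A (k - m*n) (l - m*n) = A k l := hval m k l
    have hprod' : A (i - m*n) (j - m*n) * A (k - m*n) (l - m*n) ≠ 0 := by
      rw [hv1, hv2]; exact hprod
    have hAij : A (i - m*n) (j - m*n) ≠ 0 := fun h => hprod' (by rw [h, zero_mul])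
    have hAkl : A (k - m*n) (l - m*n) ≠ 0 := fun h => hprod' (by rw [h, mul_zero])
    have hd1 := hD _ _ hAij
    have hd2 := hD _ _ hAkl
    have hik' : i - m*n < k - m*n := sub_lt_sub_right hik _
    have hlj' : l - m*n < j - m*n := sub_lt_sub_right hlj _
    rw [Finset.mem_filter]
    constructor
    · set i' := i - m*n; set j' := j - m*n; set k' := k - m*n; set l' := l - m*n
      clear_value i' j' k' l'
      simp only [Uf, Vf, Finset.mem_product, Finset.mem_Icc]
      refine ⟨⟨?_, ?_⟩, ⟨?_, ?_⟩, ⟨?_, ?_⟩, ?_, ?_⟩ <;> omega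
    · rw [G1_ne_iff]
      exact ⟨⟨hmem.1, hmem.2, hik', hlj'⟩, hprod'⟩
  · rintro ⟨i, j, k, l⟩ hq
    rw [Finset.mem_filter] at hq
    obtain ⟨-, hne⟩ := hq
    rw [G1_ne_iff] at hne
    dsimp only at hne
    obtain ⟨⟨hi1, hi2, hik, hlj⟩, hprod⟩ := hne
    dsimp only
    set m := (l-1)/(n:ℤ) with hm
    have hmem := normalize_mem hn l
    rw [← hm] at hmem
    have hv1 : A (i - m*n) (j - m*n) = A i j := hval m i j
    have hv2 : A (k - m*n) (l - m*n) = A k l := hval m k l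
    have hprod' : A (i - m*n) (j - m*n) * A (k - m*n) (l - m*n) ≠ 0 := by
      rw [hv1, hv2]; exact hprod
    have hAij : A (i - m*n) (j - m*n) ≠ 0 := fun h => hprod' (by rw [h, zero_mul])
    have hAkl : A (k - m*n) (l - m*n) ≠ 0 := fun h => hprod' (by rw [h, mul_zero])
    have hd1 := hD _ _ hAij
    have hd2 := hD _ _ hAkl
    have hik' : i - m*n < k - m*n := sub_lt_sub_right hik _
    have hlj' : l - m*n < j - m*n := sub_lt_sub_right hlj _
    rw [Finset.mem_filter]
    constructor
    · set i' := i - m*n; set j' := j - m*n; set k' := k - m*n; set l' := l - m*n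
      clear_value i' j' k' l'
      simp only [Uf, Vf, Finset.mem_product, Finset.mem_Icc]
      refine ⟨⟨?_, ?_⟩, ⟨?_, ?_⟩, ⟨?_, ?_⟩, ?_, ?_⟩ <;> omega
    · rw [G2_ne_iff]
      exact ⟨⟨hmem.1, hmem.2, hik', hlj'⟩, hprod'⟩
  · rintro ⟨i, j, k, l⟩ hq
    rw [Finset.mem_filter] at hq
    obtain ⟨-, hne⟩ := hq
    rw [G2_ne_iff] at hne
    dsimp only at hne
    obtain ⟨⟨hl1, hl2, hik, hlj⟩, -⟩ := hne
    have hinv := norm_inv hn hl1 hl2 ((i-1)/(n:ℤ))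
    dsimp only
    simp only [Prod.mk.injEq]
    rw [hinv]
    refine ⟨by ring, by ring, by ring, by ring⟩
  · rintro ⟨i, j, k, l⟩ hq
    rw [Finset.mem_filter] at hq
    obtain ⟨-, hne⟩ := hq
    rw [G1_ne_iff] at hne
    dsimp only at hne
    obtain ⟨⟨hi1, hi2, hik, hlj⟩, -⟩ := hne
    have hinv := norm_inv hn hi1 hi2 ((l-1)/(n:ℤ))
    dsimp only
    simp only [Prod.mk.injEq]
    rw [hinv]
    refine ⟨by ring, by ring, by ring, by ring⟩
  · rintro ⟨i, j, k, l⟩ hq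
    rw [Finset.mem_filter] at hq
    obtain ⟨-, hne⟩ := hq
    rw [G2_ne_iff] at hne
    dsimp only at hne
    obtain ⟨⟨hl1, hl2, hik, hlj⟩, hprod⟩ := hne
    set m := (i-1)/(n:ℤ) with hm
    have hmem := normalize_mem hn i
    rw [← hm] at hmem
    have hik' : i - m*n < k - m*n := sub_lt_sub_right hik _
    have hlj' : l - m*n < j - m*n := sub_lt_sub_right hlj _
    show G2 A n (i,j,k,l) = G1 A n _
    rw [G2, if_pos ⟨hl1, hl2, hik, hlj⟩, G1]
    rw [if_pos ⟨hmem.1, hmem.2, hik', hlj'⟩]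
    show A i j * A k l = A (i - m*n) (j - m*n) * A (k - m*n) (l - m*n)
    rw [hval m i j, hval m k l]

end ShiftG


/-! ### Counting the cross set -/

def CrossSet (cl cm : ℤ → ℤ) (w : ℤ ≃ ℤ) (r : ℕ) : Set (ℤ × ℤ) :=
  {p | (1 ≤ p.1 ∧ p.1 ≤ (r:ℤ)) ∧ blk cm p.1 < blk cm p.2 ∧ blk cl (w p.2) < blk cl (w p.1)}

section CrossCard

variable {n r : ℕ} {A : ℤ → ℤ → ℕ} {D : ℕ} {cl cm : ℤ → ℤ} {w : ℤ ≃ ℤ}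

lemma cross_card (hn : 1 ≤ n)
    (hD : ∀ i j : ℤ, A i j ≠ 0 → (i - j).natAbs ≤ D)
    (hmonoL : Monotone cl) (hlowL : ∀ x : ℤ, ∃ a, cl a < x) (hhighL : ∀ x : ℤ, ∃ b, x ≤ cl b)
    (hmonoM : Monotone cm) (hlowM : ∀ x : ℤ, ∃ a, cm a < x) (hhighM : ∀ x : ℤ, ∃ b, x ≤ cm b)
    (hcm0 : cm 0 = 0) (hcmn : cm (n:ℤ) = (r:ℤ))
    (hwmat : ∀ k l : ℤ,
      (Set.Ioc (cl (k - 1)) (cl k) ∩ (⇑w '' Set.Ioc (cm (l - 1)) (cm l))).ncard = A k l) :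
    (CrossSet cl cm w r).ncard = ∑ q ∈ Uf D n, G2 A n q := by
  classical
  set D2 : ℤ → ℤ → Finset ℤ :=
    fun k l => (Finset.Ioc (cm (l-1)) (cm l)).filter (fun x => cl (k-1) < w x ∧ w x ≤ cl k)
    with hD2
  have hD2card : ∀ k l : ℤ, (D2 k l).card = A k l := by
    intro k l
    have himg : (⇑w '' (D2 k l : Set ℤ))
        = Set.Ioc (cl (k-1)) (cl k) ∩ (⇑w '' Set.Ioc (cm (l-1)) (cm l)) := by
      ext y
      constructor
      · rintro ⟨x, hx, rfl⟩
        simp only [hD2, Finset.coe_filter, Set.mem_setOf_eq, Finset.mem_Ioc] at hx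
        exact ⟨⟨hx.2.1, hx.2.2⟩, x, Set.mem_Ioc.mpr ⟨hx.1.1, hx.1.2⟩, rfl⟩
      · rintro ⟨hy, x, hx, rfl⟩
        rw [Set.mem_Ioc] at hx
        rw [Set.mem_Ioc] at hy
        refine ⟨x, ?_, rfl⟩
        simp only [hD2, Finset.coe_filter, Set.mem_setOf_eq, Finset.mem_Ioc]
        exact ⟨⟨hx.1, hx.2⟩, hy.1, hy.2⟩
    have hw := hwmat k l
    rw [← himg, Set.ncard_image_of_injective _ w.injective, Set.ncard_coe_finset] at hw
    exact hw
  have hD2mem : ∀ (x k l : ℤ), x ∈ D2 k l ↔ (blk cm x = l ∧ blk cl (w x) = k) := by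
    intro x k l
    constructor
    · intro hx
      simp only [hD2, Finset.mem_filter, Finset.mem_Ioc] at hx
      exact ⟨blk_eq hmonoM hx.1.1 hx.1.2, blk_eq hmonoL hx.2.1 hx.2.2⟩
    · rintro ⟨h1, h2⟩
      have s1 := blk_spec hmonoM (hlowM x) (hhighM x)
      have s2 := blk_spec hmonoL (hlowL (w x)) (hhighL (w x))
      rw [h1] at s1
      rw [h2] at s2
      simp only [hD2, Finset.mem_filter, Finset.mem_Ioc]
      exact ⟨⟨s1.1, s1.2⟩, s2.1, s2.2⟩
  have hD2ne : ∀ (x k l : ℤ), x ∈ D2 k l → A k l ≠ 0 := by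
    intro x k l hx h0
    have hc := hD2card k l
    rw [h0, Finset.card_eq_zero] at hc
    rw [hc] at hx
    simp at hx
  set P : Finset (ℤ×ℤ×ℤ×ℤ) := (Uf D n).filter
    (fun q => (1 ≤ q.2.2.2 ∧ q.2.2.2 ≤ (n:ℤ) ∧ q.1 < q.2.2.1 ∧ q.2.2.2 < q.2.1)
      ∧ A q.1 q.2.1 * A q.2.2.1 q.2.2.2 ≠ 0) with hP
  set BlkP : ℤ×ℤ×ℤ×ℤ → Finset (ℤ×ℤ) := fun q => (D2 q.2.2.1 q.2.2.2) ×ˢ (D2 q.1 q.2.1)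
    with hBlkP
  have hseteq : CrossSet cl cm w r = ↑(P.biUnion BlkP) := by
    ext p
    simp only [CrossSet, Set.mem_setOf_eq, Finset.coe_biUnion, Set.mem_iUnion,
      Finset.mem_coe, Finset.mem_biUnion]
    constructor
    · rintro ⟨⟨hp1, hp2⟩, hcc, hrr⟩
      have hl := (cum_blk_range hmonoM hcm0 hcmn hlowM hhighM p.1).mp ⟨hp1, hp2⟩
      have hmem1 : p.1 ∈ D2 (blk cl (w p.1)) (blk cm p.1) := (hD2mem _ _ _).2 ⟨rfl, rfl⟩
      have hmem2 : p.2 ∈ D2 (blk cl (w p.2)) (blk cm p.2) := (hD2mem _ _ _).2 ⟨rfl, rfl⟩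
      have hA1 := hD2ne _ _ _ hmem1
      have hA2 := hD2ne _ _ _ hmem2
      have hd1 := hD _ _ hA1
      have hd2 := hD _ _ hA2
      refine ⟨(blk cl (w p.2), blk cm p.2, blk cl (w p.1), blk cm p.1), ?_, ?_⟩
      · rw [hP, Finset.mem_filter]
        constructor
        · simp only [Uf, Vf, Finset.mem_product, Finset.mem_Icc]
          refine ⟨⟨?_, ?_⟩, ⟨?_, ?_⟩, ⟨?_, ?_⟩, ?_, ?_⟩ <;> omega
        · dsimp only
          refine ⟨⟨hl.1, hl.2, hrr, hcc⟩, ?_⟩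
          exact mul_ne_zero hA2 hA1
      · rw [hBlkP]
        dsimp only
        rw [Finset.mem_product]
        exact ⟨hmem1, hmem2⟩
    · rintro ⟨⟨i, j, k, l⟩, hqP, hpB⟩
      rw [hP, Finset.mem_filter] at hqP
      obtain ⟨-, hcond, -⟩ := hqP
      dsimp only at hcond
      obtain ⟨hl1, hl2, hik, hlj⟩ := hcond
      rw [hBlkP] at hpB
      dsimp only at hpB
      rw [Finset.mem_product] at hpB
      obtain ⟨hb1, hb2⟩ := hpB
      rw [hD2mem] at hb1
      rw [hD2mem] at hb2
      refine ⟨?_, ?_, ?_⟩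
      · exact (cum_blk_range hmonoM hcm0 hcmn hlowM hhighM p.1).mpr (by rw [hb1.1]; exact ⟨hl1, hl2⟩)
      · rw [hb1.1, hb2.1]; exact hlj
      · rw [hb1.2, hb2.2]; exact hik
  rw [hseteq, Set.ncard_coe_finset]
  have hdisj : ∀ q1 ∈ P, ∀ q2 ∈ P, q1 ≠ q2 → Disjoint (BlkP q1) (BlkP q2) := by
    rintro ⟨i1, j1, k1, l1⟩ - ⟨i2, j2, k2, l2⟩ - hne
    rw [Finset.disjoint_left]
    intro p hp1 hp2
    rw [hBlkP] at hp1 hp2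
    dsimp only at hp1 hp2
    rw [Finset.mem_product] at hp1 hp2
    obtain ⟨ha1, ha2⟩ := hp1
    obtain ⟨hb1, hb2⟩ := hp2
    rw [hD2mem] at ha1 ha2 hb1 hb2
    apply hne
    simp only [Prod.mk.injEq]
    refine ⟨?_, ?_, ?_, ?_⟩ <;> omega
  rw [Finset.card_biUnion hdisj]
  have hcard : ∀ q ∈ P, (BlkP q).card = A q.2.2.1 q.2.2.2 * A q.1 q.2.1 := by
    rintro ⟨i, j, k, l⟩ -
    rw [hBlkP]
    dsimp only
    rw [Finset.card_product, hD2card, hD2card]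
  rw [Finset.sum_congr rfl hcard]
  rw [← Finset.sum_filter_ne_zero (Uf D n) (f := G2 A n)]
  have hPeq : (Uf D n).filter (fun q => G2 A n q ≠ 0) = P := by
    rw [hP]
    apply Finset.filter_congr
    intro q _
    exact G2_ne_iff
  rw [hPeq]
  refine Finset.sum_congr rfl ?_
  rintro ⟨i, j, k, l⟩ hq
  rw [hP, Finset.mem_filter] at hq
  obtain ⟨-, hcond, -⟩ := hq
  show A k l * A i j = G2 A n (i, j, k, l)
  rw [G2, if_pos hcond, mul_comm]

end CrossCard


/-! ### Periodic permutations -/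

section Perm

variable {r : ℕ} {w : ℤ ≃ ℤ}

lemma wshift (hw : PeriodicPerm r w) (m x : ℤ) : w (x + m * r) = w x + m * r := by
  have key : ∀ y : ℤ, w (y - r) = w y - r := by
    intro y
    have := hw (y - r)
    simp only [sub_add_cancel] at this
    omega
  induction m using Int.induction_on with
  | zero => simp
  | succ m ih =>
    have e : x + ((m:ℤ)+1) * r = (x + m * r) + r := by ring
    rw [e, hw, ih]
    ring
  | pred m ih =>
    have e : x + (-(m:ℤ)-1) * r = (x + (-(m:ℤ)) * r) - r := by ring
    rw [e, key, ih]
    ring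

lemma disp_bound (hr : 1 ≤ r) (hw : PeriodicPerm r w) :
    ∃ M : ℕ, ∀ x : ℤ, (w x - x).natAbs ≤ M := by
  refine ⟨(Finset.Icc (1:ℤ) (r:ℤ)).sup (fun x => (w x - x).natAbs), fun x => ?_⟩
  set m := (x-1)/(r:ℤ) with hm
  have hmem := normalize_mem hr x
  rw [← hm] at hmem
  have hx : x = (x - m * r) + m * r := by ring
  have hws : w ((x - m * r) + m * r) = w (x - m * r) + m * r := wshift hw m (x - m*r)
  have hval : w x - x = w (x - m*r) - (x - m*r) := by
    rw [hx, hws]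
    ring
  rw [hval]
  apply Finset.le_sup (f := fun x => (w x - x).natAbs)
  rw [Finset.mem_Icc]
  exact hmem

lemma inv_finite (hr : 1 ≤ r) (hw : PeriodicPerm r w) :
    ({p : ℤ × ℤ | 1 ≤ p.1 ∧ p.1 ≤ (r:ℤ) ∧ p.1 < p.2 ∧ w p.2 < w p.1}).Finite := by
  obtain ⟨M, hM⟩ := disp_bound hr hw
  apply Set.Finite.subset ((Set.finite_Icc (1:ℤ) (r:ℤ)).prod
    (Set.finite_Icc (1:ℤ) ((r:ℤ) + 2*M + 1)))
  intro p hp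
  obtain ⟨h1, h2, h3, h4⟩ := hp
  have hMa := hM p.1
  have hMb := hM p.2
  simp only [Set.mem_prod, Set.mem_Icc]
  refine ⟨⟨h1, h2⟩, ?_, ?_⟩ <;> omega

end Perm

section Subsets

variable {n r : ℕ} {cl cm : ℤ → ℤ} {w : ℤ ≃ ℤ}

lemma cross_subset
    (hmonoL : Monotone cl) (hlowL : ∀ x : ℤ, ∃ a, cl a < x) (hhighL : ∀ x : ℤ, ∃ b, x ≤ cl b)
    (hmonoM : Monotone cm) (hlowM : ∀ x : ℤ, ∃ a, cm a < x) (hhighM : ∀ x : ℤ, ∃ b, x ≤ cm b) :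
    CrossSet cl cm w r ⊆ {p : ℤ × ℤ | 1 ≤ p.1 ∧ p.1 ≤ (r:ℤ) ∧ p.1 < p.2 ∧ w p.2 < w p.1} := by
  intro p hp
  obtain ⟨⟨h1, h2⟩, hcc, hrr⟩ := hp
  exact ⟨h1, h2, cum_lt_of_idx_lt hmonoM hlowM hhighM hcc,
    cum_lt_of_idx_lt hmonoL hlowL hhighL hrr⟩

lemma inv_subset_cross
    (hmonoL : Monotone cl) (hlowL : ∀ x : ℤ, ∃ a, cl a < x) (hhighL : ∀ x : ℤ, ∃ b, x ≤ cl b)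
    (hmonoM : Monotone cm) (hlowM : ∀ x : ℤ, ∃ a, cm a < x) (hhighM : ∀ x : ℤ, ∃ b, x ≤ cm b)
    (hT1 : ∀ x x' : ℤ, blk cm x = blk cm x' → x < x' → w x < w x')
    (hT2 : ∀ x x' : ℤ, blk cl (w x) = blk cl (w x') → x < x' → w x < w x') :
    {p : ℤ × ℤ | 1 ≤ p.1 ∧ p.1 ≤ (r:ℤ) ∧ p.1 < p.2 ∧ w p.2 < w p.1}
      ⊆ CrossSet cl cm w r := by
  intro p hp
  obtain ⟨h1, h2, h3, h4⟩ := hp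
  refine ⟨⟨h1, h2⟩, ?_, ?_⟩
  · have hle : blk cm p.1 ≤ blk cm p.2 := cum_idx_mono hmonoM hlowM hhighM h3.le
    rcases eq_or_lt_of_le hle with he | hlt
    · exact absurd (hT1 p.1 p.2 he h3) (by omega)
    · exact hlt
  · have hle : blk cl (w p.2) ≤ blk cl (w p.1) := cum_idx_mono hmonoL hlowL hhighL h4.le
    rcases eq_or_lt_of_le hle with he | hlt
    · exact absurd (hT2 p.1 p.2 he.symm h3) (by omega)
    · exact hlt

end Subsets

lemma finsum_cast (f : ℤ → ℕ) (hf : (Function.support f).Finite) :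
    ((∑ᶠ x : ℤ, f x : ℕ) : ℤ) = ∑ᶠ x : ℤ, (f x : ℤ) := by
  have := (Nat.castAddMonoidHom ℤ).map_finsum (f := f) hf
  simpa using this

end S8

/-- Let `A` be an `n`-periodic ℕ-matrix indexed by `ℤ × ℤ` with
finite row/column supports and total sum `r` on a fundamental set of rows.
With `cl`, `cm` the cumulative row/column sum functions (determining the
blocks `R_k^λ = (cl (k-1), cl k]` and `R_l^μ = (cm (l-1), cm l]`), if `y` is
the shortest element of the extended affine symmetric group whose double
coset matrix is `A` (i.e. `|R_k^λ ∩ y R_l^μ| = a_{kl}` and `y` has minimal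
length among all such elements), then
`ℓ(y) = Σ_{1 ≤ i ≤ n, i < k, j > l} a_{ij} a_{kl}`. -/
theorem stmt8 (n r : ℕ) (hn : 1 ≤ n) (hr : 1 ≤ r)
    (A : ℤ → ℤ → ℕ)
    (hAper : ∀ i j : ℤ, A (i + n) (j + n) = A i j)
    (hrow : ∀ i : ℤ, (Function.support (A i)).Finite)
    (hcol : ∀ j : ℤ, (Function.support (fun i => A i j)).Finite)
    (htot : ∑ i ∈ Finset.Icc (1 : ℤ) (n : ℤ), ∑ᶠ j : ℤ, A i j = r)
    (cl cm : ℤ → ℤ)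
    (hcl0 : cl 0 = 0) (hcl : ∀ i : ℤ, cl i = cl (i - 1) + ∑ᶠ j : ℤ, A i j)
    (hcm0 : cm 0 = 0) (hcm : ∀ j : ℤ, cm j = cm (j - 1) + ∑ᶠ i : ℤ, A i j)
    (y : ℤ ≃ ℤ) (hy : PeriodicPerm r y)
    (hymat : ∀ k l : ℤ,
      (Set.Ioc (cl (k - 1)) (cl k) ∩ (⇑y '' Set.Ioc (cm (l - 1)) (cm l))).ncard = A k l)
    (hymin : ∀ w : ℤ ≃ ℤ, PeriodicPerm r w →
      (∀ k l : ℤ,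
        (Set.Ioc (cl (k - 1)) (cl k) ∩ (⇑w '' Set.Ioc (cm (l - 1)) (cm l))).ncard = A k l) →
      affLen r y ≤ affLen r w) :
    affLen r y
      = ∑ᶠ (i : ℤ) (_ : 1 ≤ i ∧ i ≤ (n : ℤ)) (k : ℤ) (_ : i < k)
          (j : ℤ) (l : ℤ) (_ : l < j), A i j * A k l := by
  classical
  open S8 in
  -- step recurrences
  have hmonoL : Monotone cl := cum_mono (f := fun i => ∑ᶠ j : ℤ, A i j) hcl
  have hmonoM : Monotone cm := cum_mono (f := fun j => ∑ᶠ i : ℤ, A i j) hcm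
  have lamper : ∀ i : ℤ, (fun i => ∑ᶠ j : ℤ, A i j) (i + (n:ℤ)) = (fun i => ∑ᶠ j : ℤ, A i j) i :=
    fun i => S8.lam_per hAper i
  have muper : ∀ j : ℤ, (fun j => ∑ᶠ i : ℤ, A i j) (j + (n:ℤ)) = (fun j => ∑ᶠ i : ℤ, A i j) j :=
    fun j => S8.mu_per hAper j
  have hclshift : ∀ i : ℤ, cl (i + (n:ℤ)) = cl i + (r:ℤ) :=
    S8.cum_shift hn hcl lamper htot
  have hmusum : ∑ j ∈ Finset.Icc (1:ℤ) (n:ℤ), (∑ᶠ i : ℤ, A i j) = r := by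
    rw [S8.swap_sums hn hAper hrow hcol]
    exact htot
  have hcmshift : ∀ j : ℤ, cm (j + (n:ℤ)) = cm j + (r:ℤ) :=
    S8.cum_shift hn hcm muper hmusum
  have hcln : cl (n:ℤ) = (r:ℤ) := by
    have := hclshift 0
    rw [zero_add, hcl0, zero_add] at this
    exact this
  have hcmn : cm (n:ℤ) = (r:ℤ) := by
    have := hcmshift 0
    rw [zero_add, hcm0, zero_add] at this
    exact this
  have hlowL := S8.cum_low hn hr hcl0 hclshift
  have hhighL := S8.cum_high hn hr hcl0 hclshift
  have hlowM := S8.cum_low hn hr hcm0 hcmshift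
  have hhighM := S8.cum_high hn hr hcm0 hcmshift
  obtain ⟨D, hD⟩ := S8.exists_D hn hAper hrow
  -- the phi context
  have hctx : S8.PhiCtx A cl cm := by
    refine ⟨hcol, hrow, ?_, ?_, hlowM, hhighM, hlowL, hhighL⟩
    · intro l
      rw [hcm l, S8.finsum_cast _ (hcol l)]
    · intro i
      rw [hcl i, S8.finsum_cast _ (hrow i)]
  -- the explicit minimal-length element
  let w0 : ℤ ≃ ℤ := ⟨S8.phi A cl cm, S8.phi (S8.tr A) cm cl,
    fun x => hctx.phi_leftinv x, fun y => hctx.trctx.phi_leftinv y⟩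
  have hw0fun : ⇑w0 = S8.phi A cl cm := rfl
  have hw0per : PeriodicPerm r w0 := by
    intro x
    show S8.phi A cl cm (x + (r:ℤ)) = S8.phi A cl cm x + (r:ℤ)
    exact hctx.phi_period hAper hcmshift hclshift x
  have hw0mat : ∀ k l : ℤ,
      (Set.Ioc (cl (k - 1)) (cl k) ∩ (⇑w0 '' Set.Ioc (cm (l - 1)) (cm l))).ncard = A k l := by
    intro k l
    rw [hw0fun, hctx.matlem k l]
    have hstep : S8.csum (S8.tr A) k l = S8.csum (S8.tr A) k (l-1) + A k l :=
      S8.csum_step (S8.tr A) (hctx.hBr k) l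
    rw [← Finset.coe_Ioc, Set.ncard_coe_finset, Int.card_Ioc]
    have e : (cl (k-1) + S8.csum (S8.tr A) k l) - (cl (k-1) + S8.csum (S8.tr A) k (l-1))
        = (A k l : ℤ) := by rw [hstep]; ring
    rw [e]
    simp
  have hT1 : ∀ x x' : ℤ, S8.blk cm x = S8.blk cm x' → x < x' → w0 x < w0 x' :=
    fun x x' h h' => hctx.phi_T1 h h'
  have hT2 : ∀ x x' : ℤ, S8.blk cl (w0 x) = S8.blk cl (w0 x') → x < x' → w0 x < w0 x' := by
    intro x x' h h'
    have e1 : S8.blk cl (w0 x) = S8.rowOf A cm x := hctx.col_phi x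
    have e2 : S8.blk cl (w0 x') = S8.rowOf A cm x' := hctx.col_phi x'
    rw [e1, e2] at h
    exact hctx.phi_T2 h h'
  -- counting
  have hcross_y := S8.cross_card (w := y) hn hD hmonoL hlowL hhighL hmonoM hlowM hhighM
    hcm0 hcmn hymat
  have hcross_w0 := S8.cross_card (w := w0) hn hD hmonoL hlowL hhighL hmonoM hlowM hhighM
    hcm0 hcmn hw0mat
  have hfin_y : ({p : ℤ × ℤ | 1 ≤ p.1 ∧ p.1 ≤ (r:ℤ) ∧ p.1 < p.2 ∧ y p.2 < y p.1}).Finite :=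
    S8.inv_finite hr hy
  have hlow : ∑ q ∈ S8.Uf D n, S8.G2 A n q ≤ affLen r y := by
    rw [← hcross_y]
    exact Set.ncard_le_ncard
      (S8.cross_subset hmonoL hlowL hhighL hmonoM hlowM hhighM) hfin_y
  have hIS0 : {p : ℤ × ℤ | 1 ≤ p.1 ∧ p.1 ≤ (r:ℤ) ∧ p.1 < p.2 ∧ w0 p.2 < w0 p.1}
      = S8.CrossSet cl cm w0 r := by
    apply subset_antisymm
    · exact S8.inv_subset_cross hmonoL hlowL hhighL hmonoM hlowM hhighM hT1 hT2
    · exact S8.cross_subset hmonoL hlowL hhighL hmonoM hlowM hhighM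
  have hupp : affLen r y ≤ ∑ q ∈ S8.Uf D n, S8.G2 A n q := by
    have hmin := hymin w0 hw0per hw0mat
    have : affLen r w0 = ∑ q ∈ S8.Uf D n, S8.G2 A n q := by
      show ({p : ℤ × ℤ | 1 ≤ p.1 ∧ p.1 ≤ (r:ℤ) ∧ p.1 < p.2 ∧ w0 p.2 < w0 p.1}).ncard = _
      rw [hIS0]
      exact hcross_w0
    omega
  have hfinal : affLen r y = ∑ q ∈ S8.Uf D n, S8.G2 A n q := le_antisymm hupp hlow
  rw [hfinal, S8.shift_G hn hAper hD, ← S8.eval_RHS hn hD]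
end

section
/- With A, λ = ro(A), μ = co(A) as above, let ỹ_A be the permutation of ℤ obtained by the 'row-reading' construction: reading, column by column (over residues 1 ≤ j ≤ n of columns, and within each column over all row indices), the consecutive blocks of sizes a_{ij}, so that ỹ_A maps the j-th block structure of μ onto the positions determined by A. Then C_{ij}(A) := R_i^λ ∩ ỹ_A(R_j^μ) has cardinality a_{ij} for all i, j ∈ ℤ; in particular ỹ_A lies in the double coset 𝔖_λ y_A 𝔖_μ. -/
private lemma cum_diff (P c : ℤ → ℤ) (hP : ∀ j, P j = P (j-1) + c j) :
    ∀ a b : ℤ, a ≤ b → P b = P a + ∑ t ∈ Finset.Ioc a b, c t := by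
  intro a
  refine Int.le_induction ?_ ?_
  · simp
  · intro b hb ih
    have hsing : Finset.Ioc a (b+1) = insert (b+1) (Finset.Ioc a b) := by
      ext x; simp; omega
    have hnot : (b:ℤ) + 1 ∉ Finset.Ioc a b := by simp
    rw [hsing, Finset.sum_insert hnot]
    have h1 := hP (b+1)
    simp only [add_sub_cancel_right] at h1
    rw [h1, ih]; ring

private lemma sum_le_of_support (f : ℤ → ℤ) (hf : ∀ t, 0 ≤ f t) (s : Finset ℤ)
    (hs : ∀ t, f t ≠ 0 → t ∈ s) (u : Finset ℤ) :
    ∑ t ∈ u, f t ≤ ∑ t ∈ s, f t := by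
  have h1 : ∑ t ∈ u, f t = ∑ t ∈ u ∩ s, f t := by
    refine (Finset.sum_subset Finset.inter_subset_left ?_).symm
    intro x hx hx2
    by_contra h
    exact hx2 (Finset.mem_inter.mpr ⟨hx, hs x h⟩)
  rw [h1]
  exact Finset.sum_le_sum_of_subset_of_nonneg Finset.inter_subset_right
    (fun t _ _ => hf t)

private lemma sum_eq_of_support (f : ℤ → ℤ) (s : Finset ℤ) (hs : ∀ t, f t ≠ 0 → t ∈ s)
    (u : Finset ℤ) (hsu : s ⊆ u) : ∑ t ∈ u, f t = ∑ t ∈ s, f t := by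
  refine (Finset.sum_subset hsu ?_).symm
  intro x _ hx; by_contra h; exact hx (hs x h)


/-- With `A` an `n`-periodic ℕ-matrix of total sum `r`,
`cl, cm` the cumulative row/column sums (giving blocks `R_i^λ`, `R_j^μ`),
`p i j = Σ_{t ≤ j} a_{it}` the partial row sums and `q j i = Σ_{t ≤ i} a_{tj}`
the partial column sums, let `ty = ỹ_A` be the reading-word permutation, i.e.
the bijection translating each consecutive segment
`C_{ji}(ᵗA) = (cm(j-1)+q j (i-1), cm(j-1)+q j i]` of `R_j^μ` onto the segment
`C_{ij}(A) = (cl(i-1)+p i (j-1), cl(i-1)+p i j]` of `R_i^λ`. Then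
`|R_i^λ ∩ ty(R_j^μ)| = a_{ij}` for all `i, j`; in particular `ty` lies in the
double coset `𝔖_λ y_A 𝔖_μ` of any `y_A` with the same matrix `A`. -/
theorem stmt9 (n r : ℕ) (hn : 1 ≤ n) (hr : 1 ≤ r)
    (A : ℤ → ℤ → ℕ)
    (hAper : ∀ i j : ℤ, A (i + n) (j + n) = A i j)
    (hrow : ∀ i : ℤ, (Function.support (A i)).Finite)
    (hcol : ∀ j : ℤ, (Function.support (fun i => A i j)).Finite)
    (htot : ∑ i ∈ Finset.Icc (1 : ℤ) (n : ℤ), ∑ᶠ j : ℤ, A i j = r)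
    (cl cm : ℤ → ℤ)
    (hcl0 : cl 0 = 0) (hcl : ∀ i : ℤ, cl i = cl (i - 1) + ∑ᶠ j : ℤ, A i j)
    (hcm0 : cm 0 = 0) (hcm : ∀ j : ℤ, cm j = cm (j - 1) + ∑ᶠ i : ℤ, A i j)
    (p : ℤ → ℤ → ℤ)
    (hp : ∀ i j : ℤ, p i j = p i (j - 1) + A i j)
    (hp0 : ∀ i : ℤ, ∃ N : ℤ, ∀ j ≤ N, p i j = 0)
    (q : ℤ → ℤ → ℤ)
    (hq : ∀ j i : ℤ, q j i = q j (i - 1) + A i j)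
    (hq0 : ∀ j : ℤ, ∃ N : ℤ, ∀ i ≤ N, q j i = 0)
    (ty : ℤ ≃ ℤ) (hty : PeriodicPerm r ty)
    (htydef : ∀ i j x : ℤ, cm (j - 1) + q j (i - 1) < x → x ≤ cm (j - 1) + q j i →
      ty x = x - (cm (j - 1) + q j (i - 1)) + (cl (i - 1) + p i (j - 1))) :
    (∀ i j : ℤ,
      (Set.Ioc (cl (i - 1)) (cl i) ∩ (⇑ty '' Set.Ioc (cm (j - 1)) (cm j))).ncard = A i j)
    ∧ ∀ y : ℤ ≃ ℤ, PeriodicPerm r y →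
        (∀ k l : ℤ,
          (Set.Ioc (cl (k - 1)) (cl k) ∩ (⇑y '' Set.Ioc (cm (l - 1)) (cm l))).ncard = A k l) →
        ∃ u v : ℤ ≃ ℤ, PeriodicPerm r u ∧ PeriodicPerm r v ∧
          (∀ k : ℤ, ⇑u '' Set.Ioc (cl (k - 1)) (cl k) = Set.Ioc (cl (k - 1)) (cl k)) ∧
          (∀ l : ℤ, ⇑v '' Set.Ioc (cm (l - 1)) (cm l) = Set.Ioc (cm (l - 1)) (cm l)) ∧
          (ty : Equiv.Perm ℤ) = u * y * v := by
  classical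
  have hn' : (1:ℤ) ≤ (n:ℤ) := by exact_mod_cast hn
  have hr' : (1:ℤ) ≤ (r:ℤ) := by exact_mod_cast hr
  obtain ⟨SR, hSRdef⟩ : ∃ SR : ℤ → ℤ, ∀ i, SR i = ∑ᶠ j : ℤ, ((A i j : ℤ)) :=
    ⟨_, fun i => rfl⟩
  obtain ⟨SC, hSCdef⟩ : ∃ SC : ℤ → ℤ, ∀ j, SC j = ∑ᶠ i : ℤ, ((A i j : ℤ)) :=
    ⟨_, fun i => rfl⟩
  have hSRsum : ∀ i, SR i = ∑ t ∈ (hrow i).toFinset, (A i t : ℤ) := by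
    intro i
    rw [hSRdef]
    refine finsum_eq_sum_of_support_subset _ ?_
    intro x hx
    simp only [Function.mem_support, ne_eq, Int.natCast_eq_zero] at hx
    simp [Set.Finite.mem_toFinset, Function.mem_support, hx]
  have hSCsum : ∀ j, SC j = ∑ t ∈ (hcol j).toFinset, (A t j : ℤ) := by
    intro j
    rw [hSCdef]
    refine finsum_eq_sum_of_support_subset _ ?_
    intro x hx
    simp only [Function.mem_support, ne_eq, Int.natCast_eq_zero] at hx
    simp [Set.Finite.mem_toFinset, Function.mem_support, hx]
  have hSRcast : ∀ i, ((∑ᶠ j : ℤ, A i j : ℕ) : ℤ) = SR i := by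
    intro i
    rw [hSRsum]
    have h3 : (∑ᶠ j : ℤ, A i j) = ∑ t ∈ (hrow i).toFinset, A i t := by
      refine finsum_eq_sum_of_support_subset _ ?_
      intro x hx
      simpa [Set.Finite.mem_toFinset] using hx
    rw [h3]; push_cast; ring
  have hSCcast : ∀ j, ((∑ᶠ i : ℤ, A i j : ℕ) : ℤ) = SC j := by
    intro j
    rw [hSCsum]
    have h3 : (∑ᶠ i : ℤ, A i j) = ∑ t ∈ (hcol j).toFinset, A t j := by
      refine finsum_eq_sum_of_support_subset _ ?_
      intro x hx
      simpa [Set.Finite.mem_toFinset] using hx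
    rw [h3]; push_cast; ring
  have hSRnn : ∀ i, 0 ≤ SR i := by
    intro i; rw [hSRsum]; positivity
  have hSCnn : ∀ j, 0 ≤ SC j := by
    intro j; rw [hSCsum]; positivity
  have hclS : ∀ i : ℤ, cl i = cl (i-1) + SR i := by
    intro i
    have h1 := hcl i
    have h2 : ((∑ᶠ j : ℤ, A i j : ℕ) : ℤ) = SR i := by
      rw [hSRsum]
      have h3 : (∑ᶠ j : ℤ, A i j) = ∑ t ∈ (hrow i).toFinset, A i t := by
        refine finsum_eq_sum_of_support_subset _ ?_
        intro x hx
        simpa [Set.Finite.mem_toFinset] using hx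
      rw [h3]; push_cast; ring
    rw [h1, ← h2]
  have hcmS : ∀ j : ℤ, cm j = cm (j-1) + SC j := by
    intro j
    have h1 := hcm j
    have h2 : ((∑ᶠ i : ℤ, A i j : ℕ) : ℤ) = SC j := by
      rw [hSCsum]
      have h3 : (∑ᶠ i : ℤ, A i j) = ∑ t ∈ (hcol j).toFinset, A t j := by
        refine finsum_eq_sum_of_support_subset _ ?_
        intro x hx
        simpa [Set.Finite.mem_toFinset] using hx
      rw [h3]; push_cast; ring
    rw [h1, ← h2]
  have hclcum : ∀ a b : ℤ, a ≤ b → cl b = cl a + ∑ t ∈ Finset.Ioc a b, SR t :=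
    cum_diff cl SR hclS
  have hcmcum : ∀ a b : ℤ, a ≤ b → cm b = cm a + ∑ t ∈ Finset.Ioc a b, SC t :=
    cum_diff cm SC hcmS
  have hclmono : ∀ a b : ℤ, a ≤ b → cl a ≤ cl b := by
    intro a b hab
    rw [hclcum a b hab]
    have : 0 ≤ ∑ t ∈ Finset.Ioc a b, SR t := Finset.sum_nonneg (fun t _ => hSRnn t)
    omega
  have hcmmono : ∀ a b : ℤ, a ≤ b → cm a ≤ cm b := by
    intro a b hab
    rw [hcmcum a b hab]
    have : 0 ≤ ∑ t ∈ Finset.Ioc a b, SC t := Finset.sum_nonneg (fun t _ => hSCnn t)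
    omega
  choose Np hNp using hp0
  choose Nq hNq using hq0
  have hpsum : ∀ i j, p i j = ∑ t ∈ Finset.Ioc (Np i) j, (A i t : ℤ) := by
    intro i j
    by_cases h : j ≤ Np i
    · rw [hNp i j h, Finset.Ioc_eq_empty (by omega), Finset.sum_empty]
    · push_neg at h
      have := cum_diff (p i) (fun t => (A i t : ℤ)) (hp i) (Np i) j (by omega)
      rw [this, hNp i (Np i) le_rfl, zero_add]
  have hqsum : ∀ j i, q j i = ∑ t ∈ Finset.Ioc (Nq j) i, (A t j : ℤ) := by
    intro j i
    by_cases h : i ≤ Nq j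
    · rw [hNq j i h, Finset.Ioc_eq_empty (by omega), Finset.sum_empty]
    · push_neg at h
      have := cum_diff (q j) (fun t => (A t j : ℤ)) (hq j) (Nq j) i (by omega)
      rw [this, hNq j (Nq j) le_rfl, zero_add]
  have hpnn : ∀ i j, 0 ≤ p i j := by
    intro i j; rw [hpsum]; positivity
  have hqnn : ∀ j i, 0 ≤ q j i := by
    intro j i; rw [hqsum]; positivity
  have hple : ∀ i j, p i j ≤ SR i := by
    intro i j
    rw [hpsum, hSRsum]
    refine sum_le_of_support _ (fun t => by positivity) _ ?_ _
    intro t ht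
    simp only [ne_eq, Int.natCast_eq_zero] at ht
    simp [Set.Finite.mem_toFinset, Function.mem_support, ht]
  have hqle : ∀ j i, q j i ≤ SC j := by
    intro j i
    rw [hqsum, hSCsum]
    refine sum_le_of_support _ (fun t => by positivity) _ ?_ _
    intro t ht
    simp only [ne_eq, Int.natCast_eq_zero] at ht
    simp [Set.Finite.mem_toFinset, Function.mem_support, ht]
  have hAq0 : ∀ j t, t ≤ Nq j → A t j = 0 := by
    intro j t ht
    have h1 := hq j t
    rw [hNq j t ht, hNq j (t-1) (by omega)] at h1
    have h2 : ((A t j : ℤ)) = 0 := by omega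
    exact_mod_cast h2
  have hqlarge : ∀ j, ∃ M, ∀ i, M ≤ i → q j i = SC j := by
    intro j
    obtain ⟨C, hC⟩ := (hcol j).bddAbove
    refine ⟨max (Nq j) C, fun i hi => ?_⟩
    rw [hqsum, hSCsum]
    refine sum_eq_of_support _ _ ?_ _ ?_
    · intro t ht
      simp only [ne_eq, Int.natCast_eq_zero] at ht
      simp [Set.Finite.mem_toFinset, Function.mem_support, ht]
    · intro t ht
      have ht1 : A t j ≠ 0 := by
        simpa [Set.Finite.mem_toFinset, Function.mem_support] using ht
      have ht2 : Nq j < t := by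
        by_contra h
        exact ht1 (hAq0 j t (by omega))
      have ht3 : t ≤ C := hC ht1
      simp only [Finset.mem_Ioc]
      refine ⟨ht2, by omega⟩
  -- segment image of ty
  have hseg_row : ∀ i j x : ℤ, cm (j-1) + q j (i-1) < x → x ≤ cm (j-1) + q j i →
      cl (i-1) < ty x ∧ ty x ≤ cl i := by
    intro i j x h1 h2
    rw [htydef i j x h1 h2]
    have hq' : q j i = q j (i-1) + (A i j : ℤ) := hq j i
    have hp' : p i j = p i (j-1) + (A i j : ℤ) := hp i j
    have h3 : 0 ≤ p i (j-1) := hpnn i (j-1)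
    have h4 : p i j ≤ SR i := hple i j
    have h5 : cl i = cl (i-1) + SR i := hclS i
    omega
  have part1 : ∀ i j : ℤ,
      (Set.Ioc (cl (i - 1)) (cl i) ∩ (⇑ty '' Set.Ioc (cm (j - 1)) (cm j))).ncard = A i j := by
    intro i j
    have hseg : Set.Ioc (cl (i-1)) (cl i) ∩ (⇑ty '' Set.Ioc (cm (j-1)) (cm j))
        = ⇑ty '' Set.Ioc (cm (j-1) + q j (i-1)) (cm (j-1) + q j i) := by
      ext z
      constructor
      · rintro ⟨hz1, x, hx, rfl⟩
        simp only [Set.mem_Ioc] at hx hz1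
        -- find the least i' with x ≤ cm (j-1) + q j i'
        obtain ⟨M, hM⟩ := hqlarge j
        have hex : ∃ i', x ≤ cm (j-1) + q j i' := by
          refine ⟨M, ?_⟩
          rw [hM M le_rfl]
          have := hcmS j
          omega
        have hbdd : ∃ b : ℤ, ∀ z', (x ≤ cm (j-1) + q j z') → b ≤ z' := by
          refine ⟨Nq j, fun z' hz' => ?_⟩
          by_contra h
          push_neg at h
          rw [hNq j z' (by omega)] at hz'
          omega
        obtain ⟨lb, hlb1, hlb2⟩ := Int.exists_least_of_bdd hbdd hex
        have hlb3 : cm (j-1) + q j (lb - 1) < x := by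
          by_contra h
          push_neg at h
          have := hlb2 (lb - 1) h
          omega
        have hrowlb := hseg_row lb j x hlb3 hlb1
        have : lb = i := by
          by_contra h
          rcases lt_or_gt_of_ne h with h' | h'
          · have := hclmono lb (i-1) (by omega)
            omega
          · have := hclmono i (lb - 1) (by omega)
            omega
        subst this
        exact ⟨x, ⟨hlb3, hlb1⟩, rfl⟩
      · rintro ⟨x, hx, rfl⟩
        simp only [Set.mem_Ioc] at hx
        have h1 := hseg_row i j x hx.1 hx.2
        refine ⟨⟨h1.1, h1.2⟩, x, ?_, rfl⟩
        simp only [Set.mem_Ioc]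
        have h2 := hqnn j (i-1)
        have h3 := hqle j i
        have h4 := hcmS j
        omega
    rw [hseg, Set.ncard_image_of_injective _ ty.injective]
    rw [← Finset.coe_Ioc, Set.ncard_coe_finset, Int.card_Ioc]
    have hq' : q j i = q j (i-1) + (A i j : ℤ) := hq j i
    omega
  refine ⟨part1, ?_⟩
  -- periodicity of A under diagonal shifts
  have hAper' : ∀ i j : ℤ, A (i - n) (j - n) = A i j := by
    intro i j
    have h := hAper (i - n) (j - n)
    rw [show i - (n:ℤ) + n = i by ring, show j - (n:ℤ) + n = j by ring] at h
    exact h.symm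
  have hAperk : ∀ (k : ℤ) (i j : ℤ), A (i + n*k) (j + n*k) = A i j := by
    intro k
    induction k using Int.induction_on with
    | zero => intro i j; norm_num
    | succ m ih =>
      intro i j
      have h1 := hAper (i + n*m) (j + n*m)
      rw [ih] at h1
      rw [show i + (n:ℤ)*((m:ℤ)+1) = i + n*m + n by ring,
        show j + (n:ℤ)*((m:ℤ)+1) = j + n*m + n by ring]
      exact h1
    | pred m ih =>
      intro i j
      have h1 := hAper' (i + n*(-(m:ℤ))) (j + n*(-(m:ℤ)))
      rw [ih] at h1
      rw [show i + (n:ℤ)*(-(m:ℤ)-1) = i + n*(-(m:ℤ)) - n by ring,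
        show j + (n:ℤ)*(-(m:ℤ)-1) = j + n*(-(m:ℤ)) - n by ring]
      exact h1
  have hSRper : ∀ i : ℤ, SR (i + n) = SR i := by
    intro i
    rw [hSRdef, hSRdef]
    have h1 : ∀ j : ℤ, (A (i + n) j : ℤ) = (A i (j - n) : ℤ) := by
      intro j
      have h := hAper i (j - n)
      rw [show j - (n:ℤ) + n = j by ring] at h
      exact_mod_cast h
    calc ∑ᶠ j : ℤ, (A (i + n) j : ℤ) = ∑ᶠ j : ℤ, (A i (j - n) : ℤ) := by
          exact finsum_congr h1
      _ = ∑ᶠ j : ℤ, (A i j : ℤ) := by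
          exact finsum_comp_equiv (Equiv.subRight (n:ℤ)) (f := fun j => (A i j : ℤ))
  have hSCper : ∀ j : ℤ, SC (j + n) = SC j := by
    intro j
    rw [hSCdef, hSCdef]
    have h1 : ∀ i : ℤ, (A i (j + n) : ℤ) = (A (i - n) j : ℤ) := by
      intro i
      have h := hAper (i - n) j
      rw [show i - (n:ℤ) + n = i by ring] at h
      exact_mod_cast h
    calc ∑ᶠ i : ℤ, (A i (j + n) : ℤ) = ∑ᶠ i : ℤ, (A (i - n) j : ℤ) := by
          exact finsum_congr h1
      _ = ∑ᶠ i : ℤ, (A i j : ℤ) := by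
          exact finsum_comp_equiv (Equiv.subRight (n:ℤ)) (f := fun i => (A i j : ℤ))
  -- Fubini over a fundamental domain
  have hnz : (n:ℤ) ≠ 0 := by omega
  have hfub : ∑ t ∈ Finset.Ioc (0:ℤ) (n:ℤ), SC t = ∑ t ∈ Finset.Ioc (0:ℤ) (n:ℤ), SR t := by
    rw [Finset.sum_congr rfl (fun j _ => hSCsum j), Finset.sum_congr rfl (fun i _ => hSRsum i)]
    rw [Finset.sum_sigma' (Finset.Ioc (0:ℤ) (n:ℤ)) (fun j => (hcol j).toFinset)
      (fun j t => (A t j : ℤ))]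
    rw [Finset.sum_sigma' (Finset.Ioc (0:ℤ) (n:ℤ)) (fun i => (hrow i).toFinset)
      (fun i t => (A i t : ℤ))]
    refine Finset.sum_nbij'
      (fun x => ⟨x.2 - n*((x.2-1)/n), x.1 - n*((x.2-1)/n)⟩)
      (fun x => ⟨x.2 - n*((x.2-1)/n), x.1 - n*((x.2-1)/n)⟩) ?_ ?_ ?_ ?_ ?_
    · rintro ⟨j, i⟩ hx
      simp only [Finset.mem_sigma, Finset.mem_Ioc, Set.Finite.mem_toFinset,
        Function.mem_support] at hx ⊢
      obtain ⟨⟨hj1, hj2⟩, hi⟩ := hx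
      have he1 := Int.mul_ediv_add_emod (i-1) (n:ℤ)
      have he2 := Int.emod_nonneg (i-1) hnz
      have he3 := Int.emod_lt_of_pos (i-1) (show (0:ℤ) < n by omega)
      constructor
      · omega
      · have h := hAperk ((i-1)/n) (i - n*((i-1)/n)) (j - n*((i-1)/n))
        rw [show i - (n:ℤ)*((i-1)/n) + n*((i-1)/n) = i by ring,
          show j - (n:ℤ)*((i-1)/n) + n*((i-1)/n) = j by ring] at h
        rw [← h]; exact hi
    · rintro ⟨i, j⟩ hx
      simp only [Finset.mem_sigma, Finset.mem_Ioc, Set.Finite.mem_toFinset,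
        Function.mem_support] at hx ⊢
      obtain ⟨⟨hi1, hi2⟩, hj⟩ := hx
      have he1 := Int.mul_ediv_add_emod (j-1) (n:ℤ)
      have he2 := Int.emod_nonneg (j-1) hnz
      have he3 := Int.emod_lt_of_pos (j-1) (show (0:ℤ) < n by omega)
      constructor
      · omega
      · have h := hAperk ((j-1)/n) (i - n*((j-1)/n)) (j - n*((j-1)/n))
        rw [show i - (n:ℤ)*((j-1)/n) + n*((j-1)/n) = i by ring,
          show j - (n:ℤ)*((j-1)/n) + n*((j-1)/n) = j by ring] at h
        rw [← h]; exact hj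
    · rintro ⟨j, i⟩ hx
      simp only [Finset.mem_sigma, Finset.mem_Ioc, Set.Finite.mem_toFinset,
        Function.mem_support] at hx
      obtain ⟨⟨hj1, hj2⟩, _⟩ := hx
      have hk : (j - n*((i-1)/n) - 1)/(n:ℤ) = -((i-1)/n) := by
        have h1 : j - (n:ℤ)*((i-1)/n) - 1 = (j-1) + (-((i-1)/n))*n := by ring
        rw [h1, Int.add_mul_ediv_right _ _ hnz,
          Int.ediv_eq_zero_of_lt (by omega) (by omega)]
        ring
      simp only [hk, Sigma.mk.inj_iff, heq_eq_eq]
      constructor <;> ring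
    · rintro ⟨i, j⟩ hx
      simp only [Finset.mem_sigma, Finset.mem_Ioc, Set.Finite.mem_toFinset,
        Function.mem_support] at hx
      obtain ⟨⟨hi1, hi2⟩, _⟩ := hx
      have hk : (i - n*((j-1)/n) - 1)/(n:ℤ) = -((j-1)/n) := by
        have h1 : i - (n:ℤ)*((j-1)/n) - 1 = (i-1) + (-((j-1)/n))*n := by ring
        rw [h1, Int.add_mul_ediv_right _ _ hnz,
          Int.ediv_eq_zero_of_lt (by omega) (by omega)]
        ring
      simp only [hk, Sigma.mk.inj_iff, heq_eq_eq]
      constructor <;> ring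
    · rintro ⟨j, i⟩ hx
      simp only
      have h := hAperk ((i-1)/n) (i - n*((i-1)/n)) (j - n*((i-1)/n))
      rw [show i - (n:ℤ)*((i-1)/n) + n*((i-1)/n) = i by ring,
        show j - (n:ℤ)*((i-1)/n) + n*((i-1)/n) = j by ring] at h
      rw [← h]
  -- one-period telescopes
  have hIocsplit : ∀ (f : ℤ → ℤ) (a b c : ℤ), a ≤ b → b ≤ c →
      ∑ t ∈ Finset.Ioc a c, f t = ∑ t ∈ Finset.Ioc a b, f t + ∑ t ∈ Finset.Ioc b c, f t := by
    intro f a b c hab hbc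
    rw [← Finset.sum_union]
    · rw [Finset.Ioc_union_Ioc_eq_Ioc hab hbc]
    · rw [Finset.disjoint_left]
      intro x hx1 hx2
      simp only [Finset.mem_Ioc] at hx1 hx2
      omega
  have hsing : ∀ (f : ℤ → ℤ) (a : ℤ), ∑ t ∈ Finset.Ioc a (a+1), f t = f (a+1) := by
    intro f a
    have : Finset.Ioc a (a+1) = {a+1} := by ext x; simp; omega
    simp [this]
  have hclr : cl (n:ℤ) = (r:ℤ) := by
    have h1 := hclcum 0 (n:ℤ) (by omega)
    rw [hcl0, zero_add] at h1
    rw [h1]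
    have h2 : Finset.Icc (1:ℤ) (n:ℤ) = Finset.Ioc (0:ℤ) (n:ℤ) := by
      ext x; simp; omega
    have h3 : ((∑ i ∈ Finset.Icc (1:ℤ) (n:ℤ), ∑ᶠ j : ℤ, A i j : ℕ) : ℤ) = (r:ℤ) := by
      exact_mod_cast htot
    rw [← h3]
    push_cast
    rw [h2]
    exact Finset.sum_congr rfl (fun i _ => (hSRcast i).symm)
  have hstep : ∀ (S : ℤ → ℤ), (∀ a, S (a + n) = S a) →
      ∀ i : ℤ, ∑ t ∈ Finset.Ioc (i+1) (i+1+(n:ℤ)), S t = ∑ t ∈ Finset.Ioc i (i+(n:ℤ)), S t := by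
    intro S hS i
    have h1 : ∑ t ∈ Finset.Ioc (i+1) (i+1+(n:ℤ)), S t
        = ∑ t ∈ Finset.Ioc (i+1) (i+(n:ℤ)), S t + S (i+(n:ℤ)+1) := by
      rw [hIocsplit S (i+1) (i+(n:ℤ)) (i+1+(n:ℤ)) (by omega) (by omega)]
      rw [show i+1+(n:ℤ) = (i+(n:ℤ))+1 by ring, hsing]
    have h2 : ∑ t ∈ Finset.Ioc i (i+(n:ℤ)), S t
        = S (i+1) + ∑ t ∈ Finset.Ioc (i+1) (i+(n:ℤ)), S t := by
      rw [hIocsplit S i (i+1) (i+(n:ℤ)) (by omega) (by omega), hsing]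
    have h3 : S (i+(n:ℤ)+1) = S (i+1) := by
      rw [show i+(n:ℤ)+1 = (i+1)+(n:ℤ) by ring, hS]
    omega
  have hconst : ∀ (S : ℤ → ℤ), (∀ a, S (a + n) = S a) →
      ∀ i : ℤ, ∑ t ∈ Finset.Ioc i (i+(n:ℤ)), S t = ∑ t ∈ Finset.Ioc (0:ℤ) (n:ℤ), S t := by
    intro S hS i
    induction i using Int.induction_on with
    | zero => norm_num
    | succ m ih => rw [hstep S hS (m:ℤ)]; exact ih
    | pred m ih =>
      have := hstep S hS (-(m:ℤ)-1)
      rw [show -(m:ℤ)-1+1 = -(m:ℤ) by ring] at this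
      rw [← this]; exact ih
  have hclper : ∀ i : ℤ, cl (i + n) = cl i + r := by
    intro i
    rw [hclcum i (i+(n:ℤ)) (by omega), hconst SR hSRper i]
    have h1 := hclcum 0 (n:ℤ) (by omega)
    rw [hcl0, zero_add] at h1
    rw [← h1, hclr]
  have hcmper : ∀ j : ℤ, cm (j + n) = cm j + r := by
    intro j
    rw [hcmcum j (j+(n:ℤ)) (by omega), hconst SC hSCper j, hfub]
    have h1 := hclcum 0 (n:ℤ) (by omega)
    rw [hcl0, zero_add] at h1
    rw [← h1, hclr]
  have hclperk : ∀ (k i : ℤ), cl (i + n*k) = cl i + k*r := by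
    intro k
    induction k using Int.induction_on with
    | zero => intro i; norm_num
    | succ m ih =>
      intro i
      have h1 := hclper (i + n*(m:ℤ))
      rw [ih i] at h1
      rw [show i + (n:ℤ)*((m:ℤ)+1) = i + (n:ℤ)*(m:ℤ) + (n:ℤ) by ring, h1]
      ring
    | pred m ih =>
      intro i
      have h1 := hclper (i + n*(-(m:ℤ)-1))
      rw [show i + (n:ℤ)*(-(m:ℤ)-1) + (n:ℤ) = i + (n:ℤ)*(-(m:ℤ)) by ring, ih i] at h1
      linarith
  have hcmperk : ∀ (k j : ℤ), cm (j + n*k) = cm j + k*r := by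
    intro k
    induction k using Int.induction_on with
    | zero => intro j; norm_num
    | succ m ih =>
      intro j
      have h1 := hcmper (j + n*(m:ℤ))
      rw [ih j] at h1
      rw [show j + (n:ℤ)*((m:ℤ)+1) = j + (n:ℤ)*(m:ℤ) + (n:ℤ) by ring, h1]
      ring
    | pred m ih =>
      intro j
      have h1 := hcmper (j + n*(-(m:ℤ)-1))
      rw [show j + (n:ℤ)*(-(m:ℤ)-1) + (n:ℤ) = j + (n:ℤ)*(-(m:ℤ)) by ring, ih j] at h1
      linarith
  -- block index functions
  have hblockex : ∀ (f : ℤ → ℤ), f 0 = 0 → (∀ a b, a ≤ b → f a ≤ f b) →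
      (∀ k i, f (i + n*k) = f i + k*r) → ∀ x : ℤ, ∃ i, f (i-1) < x ∧ x ≤ f i := by
    intro f hf0 hfmono hfper x
    have hub : x ≤ f ((n:ℤ) * (|x|+1)) := by
      have h1 := hfper (|x|+1) 0
      rw [hf0, zero_add, zero_add] at h1
      rw [h1]
      have h2 : (0:ℤ) ≤ (|x|+1) * ((r:ℤ) - 1) := mul_nonneg (by positivity) (by omega)
      have h3 : (0:ℤ) ≤ |x| := abs_nonneg x
      have h4 : x ≤ |x| := le_abs_self x
      nlinarith
    have hlbv : f ((n:ℤ) * (-(|x|+1))) < x := by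
      have h1 := hfper (-(|x|+1)) 0
      rw [hf0, zero_add, zero_add] at h1
      rw [h1]
      have h2 : (0:ℤ) ≤ (|x|+1) * ((r:ℤ) - 1) := mul_nonneg (by positivity) (by omega)
      have h3 : (0:ℤ) ≤ |x| := abs_nonneg x
      have h4 : -|x| ≤ x := neg_abs_le x
      nlinarith
    have hbdd : ∃ b : ℤ, ∀ z, x ≤ f z → b ≤ z := by
      refine ⟨(n:ℤ) * (-(|x|+1)), fun z hz => ?_⟩
      by_contra h
      push_neg at h
      have := hfmono z ((n:ℤ) * (-(|x|+1))) (by omega)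
      omega
    obtain ⟨lb, hlb1, hlb2⟩ := Int.exists_least_of_bdd hbdd ⟨_, hub⟩
    refine ⟨lb, ?_, hlb1⟩
    by_contra h
    push_neg at h
    have := hlb2 (lb-1) h
    omega
  have hblocku : ∀ (f : ℤ → ℤ), (∀ a b, a ≤ b → f a ≤ f b) →
      ∀ x i i', (f (i-1) < x ∧ x ≤ f i) → (f (i'-1) < x ∧ x ≤ f i') → i = i' := by
    intro f hfmono x i i' h1 h2
    by_contra h
    rcases lt_or_gt_of_ne h with h' | h'
    · have := hfmono i (i'-1) (by omega); omega
    · have := hfmono i' (i-1) (by omega); omega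
  obtain ⟨ri, hri1, hri2⟩ :
      ∃ ri : ℤ → ℤ, (∀ x, cl (ri x - 1) < x) ∧ (∀ x, x ≤ cl (ri x)) := by
    have h := hblockex cl hcl0 hclmono hclperk
    choose ri h1 h2 using h
    exact ⟨ri, h1, h2⟩
  obtain ⟨ci, hci1, hci2⟩ :
      ∃ ci : ℤ → ℤ, (∀ x, cm (ci x - 1) < x) ∧ (∀ x, x ≤ cm (ci x)) := by
    have h := hblockex cm hcm0 hcmmono hcmperk
    choose ci h1 h2 using h
    exact ⟨ci, h1, h2⟩
  have hriu : ∀ x i, cl (i-1) < x → x ≤ cl i → ri x = i := by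
    intro x i h1 h2
    exact hblocku cl hclmono x (ri x) i ⟨hri1 x, hri2 x⟩ ⟨h1, h2⟩
  have hciu : ∀ x j, cm (j-1) < x → x ≤ cm j → ci x = j := by
    intro x j h1 h2
    exact hblocku cm hcmmono x (ci x) j ⟨hci1 x, hci2 x⟩ ⟨h1, h2⟩
  have hrishift : ∀ (k x : ℤ), ri (x + k*r) = ri x + n*k := by
    intro k x
    refine hriu _ _ ?_ ?_
    · have h1 := hclperk k (ri x - 1)
      rw [show ri x + (n:ℤ)*k - 1 = ri x - 1 + (n:ℤ)*k by ring, h1]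
      have := hri1 x
      omega
    · have h1 := hclperk k (ri x)
      rw [h1]
      have := hri2 x
      omega
  have hcishift : ∀ (k x : ℤ), ci (x + k*r) = ci x + n*k := by
    intro k x
    refine hciu _ _ ?_ ?_
    · have h1 := hcmperk k (ci x - 1)
      rw [show ci x + (n:ℤ)*k - 1 = ci x - 1 + (n:ℤ)*k by ring, h1]
      have := hci1 x
      omega
    · have h1 := hcmperk k (ci x)
      rw [h1]
      have := hci2 x
      omega
  intro y hyper hycount
  have hmemri : ∀ z i : ℤ, z ∈ Set.Ioc (cl (i-1)) (cl i) ↔ ri z = i := by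
    intro z i
    simp only [Set.mem_Ioc]
    constructor
    · rintro ⟨h1, h2⟩; exact hriu z i h1 h2
    · rintro rfl; exact ⟨hri1 z, hri2 z⟩
  have hmemci : ∀ z j : ℤ, z ∈ Set.Ioc (cm (j-1)) (cm j) ↔ ci z = j := by
    intro z j
    simp only [Set.mem_Ioc]
    constructor
    · rintro ⟨h1, h2⟩; exact hciu z j h1 h2
    · rintro rfl; exact ⟨hci1 z, hci2 z⟩
  have hperk : ∀ (w : ℤ ≃ ℤ), PeriodicPerm r w → ∀ (k x : ℤ), w (x + k*r) = w x + k*r := by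
    intro w hw k
    induction k using Int.induction_on with
    | zero => intro x; norm_num
    | succ m ih =>
      intro x
      have h1 := hw (x + (m:ℤ)*r)
      rw [ih] at h1
      rw [show x + ((m:ℤ)+1)*(r:ℤ) = x + (m:ℤ)*(r:ℤ) + (r:ℤ) by ring, h1]
      ring
    | pred m ih =>
      intro x
      have h1 := hw (x + (-(m:ℤ)-1)*r)
      rw [show x + (-(m:ℤ)-1)*(r:ℤ) + (r:ℤ) = x + (-(m:ℤ))*(r:ℤ) by ring, ih] at h1
      linarith
  have hsymmper : ∀ (w : ℤ ≃ ℤ), PeriodicPerm r w → ∀ z : ℤ, w.symm (z + r) = w.symm z + r := by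
    intro w hw z
    have h1 := hw (w.symm z)
    rw [w.apply_symm_apply] at h1
    have h2 := congrArg w.symm h1
    rw [w.symm_apply_apply] at h2
    exact h2.symm
  have hcount : ∀ (w : ℤ ≃ ℤ),
      (∀ k l : ℤ, (Set.Ioc (cl (k-1)) (cl k) ∩ (⇑w '' Set.Ioc (cm (l-1)) (cm l))).ncard = A k l) →
      ∀ i j : ℤ, ({x : ℤ | x ∈ Set.Ioc (cm (j-1)) (cm j) ∧ ri (w x) = i}).ncard = A i j := by
    intro w hw i j
    have h1 : {x : ℤ | x ∈ Set.Ioc (cm (j-1)) (cm j) ∧ ri (w x) = i}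
        = Set.Ioc (cm (j-1)) (cm j) ∩ ⇑w ⁻¹' (Set.Ioc (cl (i-1)) (cl i)) := by
      ext x
      simp only [Set.mem_setOf_eq, Set.mem_inter_iff, Set.mem_preimage]
      rw [hmemri (w x) i]
    rw [h1, ← Set.ncard_image_of_injective _ w.injective,
      Set.image_inter_preimage, Set.inter_comm]
    exact hw i j
  -- fiber-matching equivalence on each column block
  have hEex : ∀ j : ℤ, ∃ E : ↥(Set.Ioc (cm (j-1)) (cm j)) ≃ ↥(Set.Ioc (cm (j-1)) (cm j)),
      ∀ x : ↥(Set.Ioc (cm (j-1)) (cm j)), ri (y ((E x : ℤ))) = ri (ty (x : ℤ)) := by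
    intro j
    have hBfin : (Set.Ioc (cm (j-1)) (cm j)).Finite := Set.finite_Ioc _ _
    have : Finite ↥(Set.Ioc (cm (j-1)) (cm j)) := hBfin.to_subtype
    set f : ↥(Set.Ioc (cm (j-1)) (cm j)) → ℤ := fun x => ri (ty (x:ℤ)) with hf
    set g : ↥(Set.Ioc (cm (j-1)) (cm j)) → ℤ := fun x => ri (y (x:ℤ)) with hg
    have hfib : ∀ i : ℤ, Nonempty ({x // f x = i} ≃ {x // g x = i}) := by
      intro i
      rw [← Finite.card_eq]
      have hcf : Nat.card {x // f x = i} = A i j := by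
        have e1 := Equiv.subtypeSubtypeEquivSubtypeInter
          (· ∈ Set.Ioc (cm (j-1)) (cm j)) (fun a => ri (ty a) = i)
        rw [Nat.card_congr e1]
        have e2 : Nat.card {x : ℤ // x ∈ Set.Ioc (cm (j-1)) (cm j) ∧ ri (ty x) = i}
            = ({x : ℤ | x ∈ Set.Ioc (cm (j-1)) (cm j) ∧ ri (ty x) = i}).ncard :=
          Nat.card_coe_set_eq _
        rw [e2]
        exact hcount ty part1 i j
      have hcg : Nat.card {x // g x = i} = A i j := by
        have e1 := Equiv.subtypeSubtypeEquivSubtypeInter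
          (· ∈ Set.Ioc (cm (j-1)) (cm j)) (fun a => ri (y a) = i)
        rw [Nat.card_congr e1]
        have e2 : Nat.card {x : ℤ // x ∈ Set.Ioc (cm (j-1)) (cm j) ∧ ri (y x) = i}
            = ({x : ℤ | x ∈ Set.Ioc (cm (j-1)) (cm j) ∧ ri (y x) = i}).ncard :=
          Nat.card_coe_set_eq _
        rw [e2]
        exact hcount y hycount i j
      rw [hcf, hcg]
    refine ⟨((Equiv.sigmaFiberEquiv f).symm.trans
      (Equiv.sigmaCongrRight (fun i => (hfib i).some))).trans (Equiv.sigmaFiberEquiv g), ?_⟩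
    intro x
    exact ((hfib (f x)).some ⟨x, rfl⟩).2
  choose E hE using hEex
  -- plain-integer versions of the block equivalences
  obtain ⟨ee, es, hee⟩ : ∃ ee es : ℤ → ℤ → ℤ,
      ∀ j a : ℤ, a ∈ Set.Ioc (cm (j-1)) (cm j) →
        (ee j a ∈ Set.Ioc (cm (j-1)) (cm j) ∧ es j a ∈ Set.Ioc (cm (j-1)) (cm j) ∧
         es j (ee j a) = a ∧ ee j (es j a) = a ∧ ri (y (ee j a)) = ri (ty a)) := by
    refine ⟨fun j a => if h : a ∈ Set.Ioc (cm (j-1)) (cm j) then ↑(E j ⟨a, h⟩) else a,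
            fun j a => if h : a ∈ Set.Ioc (cm (j-1)) (cm j) then ↑((E j).symm ⟨a, h⟩) else a,
            ?_⟩
    intro j a ha
    dsimp only
    have h1 : (↑(E j ⟨a, ha⟩) : ℤ) ∈ Set.Ioc (cm (j-1)) (cm j) := (E j ⟨a, ha⟩).2
    have h2 : (↑((E j).symm ⟨a, ha⟩) : ℤ) ∈ Set.Ioc (cm (j-1)) (cm j) := ((E j).symm ⟨a, ha⟩).2
    refine ⟨?_, ?_, ?_, ?_, ?_⟩
    · rw [dif_pos ha]; exact h1
    · rw [dif_pos ha]; exact h2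
    · rw [dif_pos ha, dif_pos h1]
      have h3 : (⟨(↑(E j ⟨a, ha⟩) : ℤ), h1⟩ : ↥(Set.Ioc (cm (j-1)) (cm j))) = E j ⟨a, ha⟩ :=
        Subtype.ext rfl
      rw [h3, Equiv.symm_apply_apply]
    · rw [dif_pos ha, dif_pos h2]
      have h3 : (⟨(↑((E j).symm ⟨a, ha⟩) : ℤ), h2⟩ : ↥(Set.Ioc (cm (j-1)) (cm j)))
          = (E j).symm ⟨a, ha⟩ := Subtype.ext rfl
      rw [h3, Equiv.apply_symm_apply]
    · rw [dif_pos ha]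
      exact hE j ⟨a, ha⟩
  -- the column-block permutation σ given by s, t
  have hkey : ∀ x : ℤ, x - ((ci x - 1)/(n:ℤ))*r ∈
      Set.Ioc (cm ((ci x - n*((ci x - 1)/(n:ℤ))) - 1)) (cm (ci x - n*((ci x - 1)/(n:ℤ)))) := by
    intro x
    have h1 := hcmperk (-((ci x - 1)/(n:ℤ))) (ci x - 1)
    have h2 := hcmperk (-((ci x - 1)/(n:ℤ))) (ci x)
    rw [show ci x - 1 + (n:ℤ)*(-((ci x - 1)/(n:ℤ))) = ci x - (n:ℤ)*((ci x - 1)/(n:ℤ)) - 1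
      by ring] at h1
    rw [show ci x + (n:ℤ)*(-((ci x - 1)/(n:ℤ))) = ci x - (n:ℤ)*((ci x - 1)/(n:ℤ)) by ring] at h2
    simp only [Set.mem_Ioc]
    have h3 := hci1 x
    have h4 := hci2 x
    constructor
    · rw [h1]; linarith
    · rw [h2]; linarith
  set s : ℤ → ℤ := fun x =>
    ee (ci x - n*((ci x - 1)/(n:ℤ))) (x - ((ci x - 1)/(n:ℤ))*r) + ((ci x - 1)/(n:ℤ))*r
    with hsdef
  set t : ℤ → ℤ := fun x =>
    es (ci x - n*((ci x - 1)/(n:ℤ))) (x - ((ci x - 1)/(n:ℤ))*r) + ((ci x - 1)/(n:ℤ))*r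
    with htdef
  have hcmA : ∀ x : ℤ, cm ((ci x - n*((ci x - 1)/(n:ℤ))) - 1)
      = cm (ci x - 1) - ((ci x - 1)/(n:ℤ))*r := by
    intro x
    have h1 := hcmperk (-((ci x - 1)/(n:ℤ))) (ci x - 1)
    rw [show ci x - 1 + (n:ℤ)*(-((ci x - 1)/(n:ℤ))) = ci x - (n:ℤ)*((ci x - 1)/(n:ℤ)) - 1
      by ring] at h1
    rw [h1]; ring
  have hcmB : ∀ x : ℤ, cm (ci x - n*((ci x - 1)/(n:ℤ)))
      = cm (ci x) - ((ci x - 1)/(n:ℤ))*r := by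
    intro x
    have h2 := hcmperk (-((ci x - 1)/(n:ℤ))) (ci x)
    rw [show ci x + (n:ℤ)*(-((ci x - 1)/(n:ℤ))) = ci x - (n:ℤ)*((ci x - 1)/(n:ℤ)) by ring] at h2
    rw [h2]; ring
  have hsval : ∀ x : ℤ, s x ∈ Set.Ioc (cm (ci x - 1)) (cm (ci x)) := by
    intro x
    obtain ⟨hm, _, _, _, _⟩ := hee _ _ (hkey x)
    simp only [Set.mem_Ioc] at hm ⊢
    rw [hcmA x, hcmB x] at hm
    simp only [hsdef]
    constructor
    · linarith [hm.1]
    · linarith [hm.2]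
  have htval : ∀ x : ℤ, t x ∈ Set.Ioc (cm (ci x - 1)) (cm (ci x)) := by
    intro x
    obtain ⟨_, hm, _, _, _⟩ := hee _ _ (hkey x)
    simp only [Set.mem_Ioc] at hm ⊢
    rw [hcmA x, hcmB x] at hm
    simp only [htdef]
    constructor
    · linarith [hm.1]
    · linarith [hm.2]
  have hci_s : ∀ x : ℤ, ci (s x) = ci x := by
    intro x
    have h := hsval x
    simp only [Set.mem_Ioc] at h
    exact hciu _ _ h.1 h.2
  have hci_t : ∀ x : ℤ, ci (t x) = ci x := by
    intro x
    have h := htval x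
    simp only [Set.mem_Ioc] at h
    exact hciu _ _ h.1 h.2
  have hts : ∀ x : ℤ, t (s x) = x := by
    intro x
    have hcis := hci_s x
    simp only [htdef]
    rw [hcis]
    have h5 : s x - ((ci x - 1)/(n:ℤ))*r
        = ee (ci x - n*((ci x - 1)/(n:ℤ))) (x - ((ci x - 1)/(n:ℤ))*r) := by
      simp only [hsdef]; ring
    rw [h5]
    obtain ⟨_, _, h6, _, _⟩ := hee _ _ (hkey x)
    rw [h6]; ring
  have hst : ∀ x : ℤ, s (t x) = x := by
    intro x
    have hcit := hci_t x
    simp only [hsdef]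
    rw [hcit]
    have h5 : t x - ((ci x - 1)/(n:ℤ))*r
        = es (ci x - n*((ci x - 1)/(n:ℤ))) (x - ((ci x - 1)/(n:ℤ))*r) := by
      simp only [htdef]; ring
    rw [h5]
    obtain ⟨_, _, _, h6, _⟩ := hee _ _ (hkey x)
    rw [h6]; ring
  have heearg : ∀ (a a' b b' : ℤ), a = a' → b = b' → ee a b = ee a' b' := by
    intro a a' b b' h1 h2; rw [h1, h2]
  have hesarg : ∀ (a a' b b' : ℤ), a = a' → b = b' → es a b = es a' b' := by
    intro a a' b b' h1 h2; rw [h1, h2]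
  have hediv1 : ∀ x : ℤ, (ci x + (n:ℤ) - 1)/(n:ℤ) = (ci x - 1)/(n:ℤ) + 1 := by
    intro x
    rw [show ci x + (n:ℤ) - 1 = (ci x - 1) + 1*(n:ℤ) by ring, Int.add_mul_ediv_right _ _ hnz]
  have hsper : ∀ x : ℤ, s (x + r) = s x + r := by
    intro x
    have hc : ci (x + r) = ci x + n := by
      have h := hcishift 1 x
      rw [show x + (1:ℤ)*(r:ℤ) = x + r by ring, show (n:ℤ)*1 = (n:ℤ) by ring] at h
      exact h
    simp only [hsdef]
    rw [hc, hediv1 x]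
    rw [heearg _ (ci x - n*((ci x - 1)/(n:ℤ))) _ (x - ((ci x - 1)/(n:ℤ))*r)
      (by ring) (by ring)]
    ring
  have htper : ∀ x : ℤ, t (x + r) = t x + r := by
    intro x
    have hc : ci (x + r) = ci x + n := by
      have h := hcishift 1 x
      rw [show x + (1:ℤ)*(r:ℤ) = x + r by ring, show (n:ℤ)*1 = (n:ℤ) by ring] at h
      exact h
    simp only [htdef]
    rw [hc, hediv1 x]
    rw [hesarg _ (ci x - n*((ci x - 1)/(n:ℤ))) _ (x - ((ci x - 1)/(n:ℤ))*r)
      (by ring) (by ring)]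
    ring
  have hmatch : ∀ x : ℤ, ri (y (s x)) = ri (ty x) := by
    intro x
    have h1 : y (s x) = y (ee (ci x - n*((ci x - 1)/(n:ℤ))) (x - ((ci x - 1)/(n:ℤ))*r))
        + ((ci x - 1)/(n:ℤ))*r := by
      have h := hperk y hyper ((ci x - 1)/(n:ℤ))
        (ee (ci x - n*((ci x - 1)/(n:ℤ))) (x - ((ci x - 1)/(n:ℤ))*r))
      simp only [hsdef]
      rw [← h]
    rw [h1, hrishift]
    obtain ⟨_, _, _, _, h5⟩ := hee _ _ (hkey x)
    rw [h5]
    have h6 := hperk ty hty (-((ci x - 1)/(n:ℤ))) x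
    have h7 := hrishift (-((ci x - 1)/(n:ℤ))) (ty x)
    rw [show x - ((ci x - 1)/(n:ℤ))*(r:ℤ) = x + (-((ci x - 1)/(n:ℤ)))*(r:ℤ) by ring, h6, h7]
    ring
  set σ : ℤ ≃ ℤ := ⟨s, t, hts, hst⟩ with hσdef
  have hσapp : ∀ z : ℤ, σ z = s z := fun z => rfl
  have hσsymm : ∀ z : ℤ, σ.symm z = t z := fun z => rfl
  set u : ℤ ≃ ℤ := (y.symm.trans σ.symm).trans ty with hudef
  have huapp : ∀ z : ℤ, u z = ty (t (y.symm z)) := fun z => rfl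
  have hri_u : ∀ z : ℤ, ri (u z) = ri z := by
    intro z
    have h1 : y (s (t (y.symm z))) = z := by
      rw [hst, Equiv.apply_symm_apply]
    have h2 := hmatch (t (y.symm z))
    rw [h1] at h2
    rw [huapp]
    exact h2.symm
  have husymm : ∀ z : ℤ, u.symm z = y (s (ty.symm z)) := fun z => rfl
  have hri_usymm : ∀ z : ℤ, ri (u.symm z) = ri z := by
    intro z
    have h2 := hmatch (ty.symm z)
    rw [Equiv.apply_symm_apply] at h2
    rw [husymm]
    exact h2
  refine ⟨u, σ, ?_, ?_, ?_, ?_, ?_⟩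
  · intro z
    rw [huapp, huapp]
    rw [hsymmper y hyper z, htper, hty]
  · intro z
    rw [hσapp, hσapp]
    exact hsper z
  · intro k
    ext z
    constructor
    · rintro ⟨x, hx, rfl⟩
      rw [hmemri] at hx ⊢
      rw [hri_u, hx]
    · intro hz
      refine ⟨u.symm z, ?_, u.apply_symm_apply z⟩
      rw [hmemri] at hz ⊢
      rw [hri_usymm, hz]
  · intro l
    ext z
    constructor
    · rintro ⟨x, hx, rfl⟩
      rw [hmemci] at hx ⊢
      rw [hσapp, hci_s, hx]
    · intro hz
      refine ⟨σ.symm z, ?_, σ.apply_symm_apply z⟩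
      rw [hmemci] at hz ⊢
      rw [hσsymm, hci_t, hz]
  · refine Equiv.ext (fun z => ?_)
    have h1 : (u * y * σ) z = u (y (σ z)) := rfl
    rw [h1, hσapp, huapp, Equiv.symm_apply_apply, hts]
end

section
/- Let A be an n-periodic ℕ-matrix with σ(A) = r as above and let w be any element of the double coset 𝔖_λ y_A 𝔖_μ (λ = ro(A), μ = co(A)). Then ℓ(w) ≥ Σ_{1≤i≤n, i<k, j>l} a_{ij} a_{kl}, with equality when w = ỹ_A is the reading-word representative. -/
open Function

section AuxLemmas

/-- Monotonicity from a recurrence with ℕ increments. -/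
lemma rec_mono {F : ℤ → ℤ} {g : ℤ → ℕ} (hF : ∀ j, F j = F (j-1) + g j) :
    ∀ {a b : ℤ}, a ≤ b → F a ≤ F b := by
  intro a b hab
  refine Int.le_induction (motive := fun b _ => F a ≤ F b) (le_refl _) (fun b hb ih => ?_) b hab
  show F a ≤ F (b+1)
  have h := hF (b+1)
  have hb1 : b + 1 - 1 = b := by ring
  rw [hb1] at h
  have hg : (0:ℤ) ≤ g (b+1) := Int.natCast_nonneg _
  omega

lemma rec_sum {F : ℤ → ℤ} {g : ℤ → ℕ} (hF : ∀ j, F j = F (j-1) + g j) :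
    ∀ {a b : ℤ}, a ≤ b → F b = F a + ∑ m ∈ Finset.Ioc a b, (g m : ℤ) := by
  intro a b hab
  refine Int.le_induction (motive := fun b _ => F b = F a + ∑ m ∈ Finset.Ioc a b, (g m : ℤ))
    (by simp) (fun b hb ih => ?_) b hab
  show F (b+1) = F a + ∑ m ∈ Finset.Ioc a (b+1), (g m : ℤ)
  have h := hF (b+1)
  have hb1 : b + 1 - 1 = b := by ring
  rw [hb1] at h
  have hins : Finset.Ioc a (b+1) = insert (b+1) (Finset.Ioc a b) := by
    ext x; simp only [Finset.mem_Ioc, Finset.mem_insert]; omega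
  rw [hins, Finset.sum_insert (by simp)]
  omega

/-- increments vanish below a zero region -/
lemma rec_supp_above {F : ℤ → ℤ} {g : ℤ → ℕ} (hF : ∀ j, F j = F (j-1) + g j)
    {N : ℤ} (h0 : ∀ j ≤ N, F j = 0) : ∀ j ≤ N, g j = 0 := by
  intro j hj
  have h := hF j
  rw [h0 j hj, h0 (j-1) (by omega)] at h
  omega

lemma rec_nonneg {F : ℤ → ℤ} {g : ℤ → ℕ} (hF : ∀ j, F j = F (j-1) + g j)
    {N : ℤ} (h0 : ∀ j ≤ N, F j = 0) (j : ℤ) : 0 ≤ F j := by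
  rcases le_or_gt j N with h | h
  · rw [h0 j h]
  · have := rec_mono hF (le_of_lt h)
    rw [h0 N le_rfl] at this; exact this

lemma sum_le_finsum_nat {g : ℤ → ℕ} (hfin : (support g).Finite) (s : Finset ℤ) :
    ∑ m ∈ s, g m ≤ ∑ᶠ m, g m := by
  classical
  rw [finsum_eq_sum g hfin, ← Finset.sum_filter_ne_zero s, ← Finset.sum_filter_ne_zero hfin.toFinset]
  apply Finset.sum_le_sum_of_subset
  intro x hx
  simp only [Finset.mem_filter, Set.Finite.mem_toFinset, Function.mem_support] at *
  exact ⟨hx.2, hx.2⟩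

lemma rec_le_total {F : ℤ → ℤ} {g : ℤ → ℕ} (hF : ∀ j, F j = F (j-1) + g j)
    {N : ℤ} (h0 : ∀ j ≤ N, F j = 0) (hfin : (support g).Finite) (j : ℤ) :
    F j ≤ (∑ᶠ m, g m : ℕ) := by
  rcases le_or_gt j N with h | h
  · rw [h0 j h]; exact Int.natCast_nonneg _
  · rw [rec_sum hF (le_of_lt h), h0 N le_rfl, zero_add, ← Nat.cast_sum]
    exact_mod_cast sum_le_finsum_nat hfin _

lemma rec_eq_total {F : ℤ → ℤ} {g : ℤ → ℕ} (hF : ∀ j, F j = F (j-1) + g j)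
    {N : ℤ} (h0 : ∀ j ≤ N, F j = 0) (hfin : (support g).Finite) :
    ∃ M, ∀ j, M ≤ j → F j = (∑ᶠ m, g m : ℕ) := by
  classical
  obtain ⟨B, hB⟩ := hfin.bddAbove
  refine ⟨max (B+1) (N+1), fun j hj => ?_⟩
  have hNj : N ≤ j := by
    have := le_max_right (B+1) (N+1); omega
  rw [rec_sum hF hNj, h0 N le_rfl, zero_add, finsum_eq_sum g hfin, ← Nat.cast_sum]
  congr 1
  refine (Finset.sum_subset ?_ ?_).symm
  · intro x hx
    simp only [Set.Finite.mem_toFinset, Function.mem_support] at hx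
    have hx1 : x ≤ B := hB hx
    have hx2 : N < x := by
      by_contra hc
      exact hx (rec_supp_above hF h0 x (by omega))
    simp only [Finset.mem_Ioc]
    refine ⟨hx2, ?_⟩
    have := le_max_left (B+1) (N+1); omega
  · intro x _ hx
    simp only [Set.Finite.mem_toFinset, Function.mem_support] at hx
    exact not_not.mp hx

/-- periodic increments propagate the period of a cumulative function -/
lemma rec_per {F : ℤ → ℤ} {g : ℤ → ℕ} {n : ℕ} (hF : ∀ j, F j = F (j-1) + g j)
    (hgper : ∀ j, g (j + n) = g j) (i : ℤ) : F (i + n) = F i + (F n - F 0) := by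
  induction i using Int.induction_on with
  | zero => simp
  | succ k ih =>
      have h1 := hF ((k:ℤ) + 1 + n)
      have h2 := hF ((k:ℤ) + 1)
      have h3 : ((k:ℤ) + 1 + n) - 1 = (k:ℤ) + n := by ring
      rw [h3] at h1
      have h4 : ((k:ℤ) + 1 - 1) = (k:ℤ) := by ring
      rw [h4] at h2
      have h5 : g ((k:ℤ) + 1 + n) = g ((k:ℤ) + 1) := hgper _
      omega
  | pred k ih =>
      have h1 := hF (-(k:ℤ) + n)
      have h2 := hF (-(k:ℤ))
      have h3 : (-(k:ℤ) + n) - 1 = (-(k:ℤ) - 1) + n := by ring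
      rw [h3] at h1
      have h5 : g (-(k:ℤ) + n) = g (-(k:ℤ)) := by
        have := hgper (-(k:ℤ)); rw [← this]
      omega

/-- iterate a period -/
lemma per_mul {G : ℤ → ℤ} {n : ℕ} {s : ℤ} (hper : ∀ i, G (i + n) = G i + s) :
    ∀ (t i : ℤ), G (i + t * n) = G i + t * s := by
  intro t
  induction t using Int.induction_on with
  | zero => simp
  | succ k ih =>
      intro i
      have h1 : i + ((k:ℤ)+1) * n = (i + k * n) + n := by ring
      rw [h1, hper, ih]; ring
  | pred k ih =>
      intro i
      have h1 : i + (-(k:ℤ)) * n = (i + (-(k:ℤ)-1) * n) + n := by ring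
      have := hper (i + (-(k:ℤ)-1) * n)
      rw [← h1] at this
      rw [ih] at this
      have hx : (-(k:ℤ))*s = (-(k:ℤ)-1)*s + s := by ring
      omega

/-- existence of a block index for a monotone unbounded cumulative function -/
lemma blk_exists {G : ℤ → ℤ} {n : ℕ} {s : ℤ} (hmono : ∀ {a b : ℤ}, a ≤ b → G a ≤ G b)
    (hper : ∀ i, G (i + n) = G i + s) (hG0 : G 0 = 0) (hs : 1 ≤ s) (hn : 1 ≤ n) (z : ℤ) :
    ∃ i : ℤ, G (i-1) < z ∧ z ≤ G i := by
  have hmul : ∀ t : ℤ, G (t * n) = t * s := by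
    intro t
    have := per_mul hper t 0
    simpa [hG0] using this
  have hbdd : ∃ b : ℤ, ∀ i, z ≤ G i → b ≤ i := by
    refine ⟨(-(|z| + 1)) * n + 1, fun i hi => ?_⟩
    by_contra hc
    push_neg at hc
    have h1 : i ≤ (-(|z| + 1)) * n := by omega
    have h2 : G i ≤ G ((-(|z| + 1)) * n) := hmono h1
    rw [hmul] at h2
    have h3 : (-(|z| + 1)) * s ≤ -(|z| + 1) := by nlinarith [abs_nonneg z]
    have h4 : -(|z|+1) < z := by
      have := neg_abs_le z; omega
    omega
  have hinh : ∃ i, z ≤ G i := by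
    refine ⟨(|z| + 1) * n, ?_⟩
    rw [hmul]
    have h3 : |z| + 1 ≤ (|z| + 1) * s := by nlinarith [abs_nonneg z]
    have := le_abs_self z; omega
  obtain ⟨b, hb⟩ := hbdd
  obtain ⟨lb, hlb1, hlb2⟩ := Int.exists_least_of_bdd ⟨b, hb⟩ hinh
  refine ⟨lb, ?_, hlb1⟩
  by_contra hc
  push_neg at hc
  exact absurd (hlb2 (lb - 1) hc) (by omega)

lemma blk_unique {G : ℤ → ℤ} (hmono : ∀ {a b : ℤ}, a ≤ b → G a ≤ G b)
    {z i k : ℤ} (hi : G (i-1) < z ∧ z ≤ G i) (hk : G (k-1) < z ∧ z ≤ G k) : i = k := by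
  by_contra hc
  rcases lt_or_gt_of_ne hc with h | h
  · have : G i ≤ G (k-1) := hmono (by omega)
    omega
  · have : G k ≤ G (i-1) := hmono (by omega)
    omega

/-- iterated periodicity for a periodic permutation -/
lemma pp_mul {r : ℕ} {w : ℤ ≃ ℤ} (hw : ∀ i : ℤ, w (i + r) = w i + r) :
    ∀ (t i : ℤ), w (i + t * r) = w i + t * r := by
  intro t
  induction t using Int.induction_on with
  | zero => simp
  | succ k ih =>
      intro i
      have h1 : i + ((k:ℤ)+1) * r = (i + k * r) + r := by ring
      rw [h1, hw, ih]; ring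
  | pred k ih =>
      intro i
      have h1 : i + (-(k:ℤ)) * r = (i + (-(k:ℤ)-1) * r) + r := by ring
      have := hw (i + (-(k:ℤ)-1) * r)
      rw [← h1] at this
      rw [ih] at this
      have hx : (-(k:ℤ))*(r:ℤ) = (-(k:ℤ)-1)*(r:ℤ) + r := by ring
      omega

/-- write any integer as y0 + t*r with y0 in [1,r] -/
lemma int_decomp {r : ℕ} (hr : 1 ≤ r) (y : ℤ) :
    ∃ t y0 : ℤ, y = y0 + t * r ∧ 1 ≤ y0 ∧ y0 ≤ r := by
  have hr0 : (0:ℤ) < r := by exact_mod_cast hr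
  have hmod := Int.emod_def (y-1) (r:ℤ)
  have h0 : 0 ≤ (y-1) % (r:ℤ) := Int.emod_nonneg _ (by omega)
  have h1 : (y-1) % (r:ℤ) < r := Int.emod_lt_of_pos _ hr0
  refine ⟨(y-1)/r, y - ((y-1)/r)*r, by ring, ?_, ?_⟩ <;>
  · generalize hT : (y-1)/(r:ℤ) = T at *
    have hcc : (r:ℤ)*T = T*r := by ring
    omega

/-- bounded displacement of a periodic permutation -/
lemma pp_bdd {r : ℕ} (hr : 1 ≤ r) {w : ℤ ≃ ℤ} (hw : ∀ i : ℤ, w (i + r) = w i + r) :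
    ∃ C : ℤ, 0 ≤ C ∧ ∀ y : ℤ, |w y - y| ≤ C := by
  have h1m : (1:ℤ) ∈ Finset.Icc (1:ℤ) (r:ℤ) := by rw [Finset.mem_Icc]; omega
  have hne : (Finset.Icc (1:ℤ) r).Nonempty := ⟨1, h1m⟩
  refine ⟨(Finset.Icc (1:ℤ) r).sup' hne (fun y => |w y - y|), ?_, ?_⟩
  · calc (0:ℤ) ≤ |w 1 - 1| := abs_nonneg _
      _ ≤ _ := Finset.le_sup' (fun y => |w y - y|) h1m
  · intro y
    obtain ⟨t, y0, hy, hy1, hy2⟩ := int_decomp hr y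
    have hyw : w y = w y0 + t * r := by rw [hy]; exact pp_mul hw t y0
    have heq : |w y - y| = |w y0 - y0| := by
      rw [hyw, hy]
      congr 1
      ring
    rw [heq]
    exact Finset.le_sup' (fun y => |w y - y|) (by rw [Finset.mem_Icc]; omega)

/-- ncard of an integer interval -/
lemma ncard_Ioc (a b : ℤ) : (Set.Ioc a b).ncard = (b - a).toNat := by
  rw [← Finset.coe_Ioc, Set.ncard_coe_finset, Int.card_Ioc]

/-- ncard of a set product -/
lemma ncard_prod {α β : Type*} (s : Set α) (t : Set β) :
    (s ×ˢ t).ncard = s.ncard * t.ncard := by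
  rw [← Nat.card_coe_set_eq, ← Nat.card_coe_set_eq, ← Nat.card_coe_set_eq,
    Nat.card_congr (Equiv.Set.prod s t), Nat.card_prod]

/-- fiberwise counting -/
lemma ncard_eq_sum_fibers {α β : Type*} [DecidableEq β] {S : Set α} (hS : S.Finite)
    (φ : α → β) (t : Finset β) (ht : ∀ x ∈ S, φ x ∈ t) :
    S.ncard = ∑ b ∈ t, (S ∩ φ ⁻¹' {b}).ncard := by
  classical
  have h1 : S.ncard = hS.toFinset.card := by
    rw [← Set.ncard_coe_finset hS.toFinset, hS.coe_toFinset]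
  rw [h1, Finset.card_eq_sum_card_fiberwise (f := φ) (t := t)
    (fun x hx => ht x (hS.mem_toFinset.mp hx))]
  apply Finset.sum_congr rfl
  intro b _
  rw [← Set.ncard_coe_finset]
  congr 1
  ext x
  simp [Finset.mem_filter, hS.mem_toFinset]

lemma norm_mem {r : ℕ} (hr : 1 ≤ r) (z : ℤ) :
    1 ≤ z + (-((z-1)/r)) * r ∧ z + (-((z-1)/r)) * r ≤ r := by
  have hr0 : (0:ℤ) < r := by exact_mod_cast hr
  have hmod := Int.emod_def (z-1) (r:ℤ)
  have h0 : 0 ≤ (z-1) % (r:ℤ) := Int.emod_nonneg _ (by omega)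
  have h1 : (z-1) % (r:ℤ) < r := Int.emod_lt_of_pos _ hr0
  constructor <;>
  · generalize hT : (z-1)/(r:ℤ) = T at *
    have hcc : (r:ℤ)*T = T*r := by ring
    have hneg : (-T) * (r:ℤ) = -(T*r) := by ring
    omega

lemma normZero {r : ℕ} {z : ℤ} (h1 : 1 ≤ z) (h2 : z ≤ (r:ℤ)) :
    (z-1)/(r:ℤ) = 0 :=
  Int.ediv_eq_zero_of_lt (by omega) (by omega)

lemma norm_shift {r : ℕ} (hr : 1 ≤ r) (z s : ℤ) :
    ((z + s * r) - 1)/(r:ℤ) = (z-1)/(r:ℤ) + s := by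
  have hr0 : (r:ℤ) ≠ 0 := by positivity
  rw [show z + s * (r:ℤ) - 1 = (z - 1) + s * r by ring, Int.add_mul_ediv_right _ _ hr0]

lemma affLen_eq_I2 {r : ℕ} (hr : 1 ≤ r) {u : ℤ ≃ ℤ} (hu : PeriodicPerm r u) :
    affLen r u
      = {p : ℤ×ℤ | p.1 < p.2 ∧ u p.2 < u p.1 ∧ 1 ≤ u p.2 ∧ u p.2 ≤ (r:ℤ)}.ncard := by
  classical
  have hr0 : (0:ℤ) < r := by exact_mod_cast hr
  set L := {p : ℤ × ℤ | 1 ≤ p.1 ∧ p.1 ≤ (r : ℤ) ∧ p.1 < p.2 ∧ u p.2 < u p.1} with hL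
  set I2 := {p : ℤ×ℤ | p.1 < p.2 ∧ u p.2 < u p.1 ∧ 1 ≤ u p.2 ∧ u p.2 ≤ (r:ℤ)} with hI2
  set f : ℤ × ℤ → ℤ × ℤ :=
    fun p => (p.1 + (-((u p.2 - 1)/r)) * r, p.2 + (-((u p.2 - 1)/r)) * r) with hf
  have hinj : Set.InjOn f L := by
    intro a ha b hb hab
    obtain ⟨ha1, ha2, _, _⟩ := ha
    obtain ⟨hb1, hb2, _, _⟩ := hb
    simp only [hf, Prod.mk.injEq] at hab
    obtain ⟨e1, e2⟩ := hab
    set s := -((u a.2 - 1)/(r:ℤ)) with hs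
    set t := -((u b.2 - 1)/(r:ℤ)) with ht
    have hst : s = t := by
      by_contra hne
      have hsplit : (t-s)*(r:ℤ) = t*r - s*r := by ring
      have h1 : a.1 - b.1 = (t - s) * r := by omega
      rcases lt_or_gt_of_ne hne with h | h
      · have h2 : (1:ℤ) ≤ t - s := by omega
        have h3 : (r:ℤ) ≤ (t-s)*r := by
          have := mul_le_mul_of_nonneg_right h2 hr0.le; linarith
        omega
      · have h2 : t - s ≤ -1 := by omega
        have h3 : (t-s)*r ≤ -(r:ℤ) := by
          have := mul_le_mul_of_nonneg_right h2 hr0.le; linarith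
        omega
    rw [← hst] at e1 e2
    have : a.1 = b.1 ∧ a.2 = b.2 := by constructor <;> omega
    exact Prod.ext this.1 this.2
  have himg : f '' L = I2 := by
    apply Set.eq_of_subset_of_subset
    · rintro _ ⟨p, hp, rfl⟩
      obtain ⟨h1, h2, h3, h4⟩ := hp
      have hm := norm_mem hr (u p.2)
      have e2 : u (p.2 + (-((u p.2 - 1)/(r:ℤ))) * r) = u p.2 + (-((u p.2 - 1)/(r:ℤ))) * r :=
        pp_mul hu _ p.2
      have e1 : u (p.1 + (-((u p.2 - 1)/(r:ℤ))) * r) = u p.1 + (-((u p.2 - 1)/(r:ℤ))) * r :=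
        pp_mul hu _ p.1
      simp only [hf, hI2, Set.mem_setOf_eq]
      generalize hX : (-((u p.2 - 1)/(r:ℤ))) * (r:ℤ) = X at e1 e2 hm ⊢
      refine ⟨by omega, by rw [e1, e2]; omega, by rw [e2]; omega, by rw [e2]; omega⟩
    · rintro ⟨a, b⟩ hab
      obtain ⟨h1, h2, h3, h4⟩ := hab
      dsimp only at h1 h2 h3 h4
      have hm := norm_mem hr a
      have e2 : u (b + (-((a - 1)/(r:ℤ))) * r) = u b + (-((a - 1)/(r:ℤ))) * r := pp_mul hu _ b
      have e1 : u (a + (-((a - 1)/(r:ℤ))) * r) = u a + (-((a - 1)/(r:ℤ))) * r := pp_mul hu _ a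
      have hdiv : (u (b + (-((a - 1)/(r:ℤ))) * r) - 1)/(r:ℤ) = -((a - 1)/(r:ℤ)) := by
        rw [e2, norm_shift hr (u b) _, normZero h3 h4, zero_add]
      refine ⟨(a + (-((a - 1)/(r:ℤ))) * r, b + (-((a - 1)/(r:ℤ))) * r), ?_, ?_⟩
      · simp only [hL, Set.mem_setOf_eq]
        generalize hX : (-((a - 1)/(r:ℤ))) * (r:ℤ) = X at e1 e2 hm ⊢
        exact ⟨hm.1, hm.2, by omega, by rw [e1, e2]; omega⟩
      · simp only [hf, hdiv, Prod.mk.injEq]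
        constructor <;> ring
  calc affLen r u = L.ncard := rfl
    _ = (f '' L).ncard := (Set.ncard_image_of_injOn hinj).symm
    _ = I2.ncard := by rw [himg]

lemma matper_mul {A : ℤ → ℤ → ℕ} {n : ℕ} (hAper : ∀ i j : ℤ, A (i+(n:ℤ)) (j+(n:ℤ)) = A i j) :
    ∀ t i j : ℤ, A (i + t*n) (j + t*n) = A i j := by
  intro t
  induction t using Int.induction_on with
  | zero => simp
  | succ k ih =>
      intro i j
      have h1 : i + ((k:ℤ)+1)*(n:ℤ) = (i + k*n) + n := by ring
      have h2 : j + ((k:ℤ)+1)*(n:ℤ) = (j + k*n) + n := by ring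
      rw [h1, h2, hAper, ih]
  | pred k ih =>
      intro i j
      have h0 := hAper (i + (-(k:ℤ)-1)*(n:ℤ)) (j + (-(k:ℤ)-1)*(n:ℤ))
      rw [show i + (-(k:ℤ)-1)*(n:ℤ) + (n:ℤ) = i + (-(k:ℤ))*(n:ℤ) by ring,
          show j + (-(k:ℤ)-1)*(n:ℤ) + (n:ℤ) = j + (-(k:ℤ))*(n:ℤ) by ring, ih] at h0
      exact h0.symm

lemma key (n r : ℕ) (hn : 1 ≤ n) (hr : 1 ≤ r)
    (A : ℤ → ℤ → ℕ)
    (hAper : ∀ i j : ℤ, A (i + n) (j + n) = A i j)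
    (hrow : ∀ i : ℤ, (Function.support (A i)).Finite)
    (hcol : ∀ j : ℤ, (Function.support (fun i => A i j)).Finite)
    (htot : ∑ i ∈ Finset.Icc (1 : ℤ) (n : ℤ), ∑ᶠ j : ℤ, A i j = r)
    (cl cm : ℤ → ℤ)
    (hcl0 : cl 0 = 0) (hcl : ∀ i : ℤ, cl i = cl (i - 1) + ∑ᶠ j : ℤ, A i j)
    (hcm0 : cm 0 = 0) (hcm : ∀ j : ℤ, cm j = cm (j - 1) + ∑ᶠ i : ℤ, A i j)
    (u : ℤ ≃ ℤ) (hu : PeriodicPerm r u)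
    (humat : ∀ k l : ℤ,
      (Set.Ioc (cl (k - 1)) (cl k) ∩ (⇑u '' Set.Ioc (cm (l - 1)) (cm l))).ncard = A k l) :
    (∑ᶠ (i : ℤ) (_ : 1 ≤ i ∧ i ≤ (n : ℤ)) (k : ℤ) (_ : i < k)
        (j : ℤ) (l : ℤ) (_ : l < j), A i j * A k l) ≤ affLen r u
    ∧ (((∀ x y : ℤ, x < y → u y < u x → ∀ j : ℤ, ¬(cm (j-1) < x ∧ y ≤ cm j))
        ∧ (∀ x y : ℤ, x < y → u y < u x → ∀ i : ℤ, ¬(cl (i-1) < u y ∧ u x ≤ cl i)))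
       → (∑ᶠ (i : ℤ) (_ : 1 ≤ i ∧ i ≤ (n : ℤ)) (k : ℤ) (_ : i < k)
            (j : ℤ) (l : ℤ) (_ : l < j), A i j * A k l) = affLen r u) := by
  classical
  -- ## cumulative function facts
  have clmono : ∀ {a b : ℤ}, a ≤ b → cl a ≤ cl b := rec_mono hcl
  have cmmono : ∀ {a b : ℤ}, a ≤ b → cm a ≤ cm b := rec_mono hcm
  have hrsper : ∀ i : ℤ, (∑ᶠ j : ℤ, A (i + n) j) = ∑ᶠ j : ℤ, A i j := by
    intro i
    have h := finsum_comp_equiv (Equiv.addRight (n:ℤ)) (f := fun j => A (i+(n:ℤ)) j)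
    simp only [Equiv.coe_addRight] at h
    rw [← h]
    exact finsum_congr fun j => hAper i j
  have hcsper : ∀ j : ℤ, (∑ᶠ i : ℤ, A i (j + n)) = ∑ᶠ i : ℤ, A i j := by
    intro j
    have h := finsum_comp_equiv (Equiv.addRight (n:ℤ)) (f := fun i => A i (j+(n:ℤ)))
    simp only [Equiv.coe_addRight] at h
    rw [← h]
    exact finsum_congr fun i => hAper i j
  have hcln : cl (n:ℤ) = (r:ℤ) := by
    have h := rec_sum hcl (show (0:ℤ) ≤ (n:ℤ) by positivity)
    have hIcc : Finset.Ioc (0:ℤ) (n:ℤ) = Finset.Icc 1 (n:ℤ) := by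
      ext x; simp only [Finset.mem_Ioc, Finset.mem_Icc]; omega
    rw [h, hIcc, hcl0, zero_add, ← Nat.cast_sum, htot]
  have hclper : ∀ i : ℤ, cl (i + n) = cl i + r := by
    intro i
    have h := rec_per hcl hrsper i
    rw [hcln, hcl0] at h
    omega
  have hcmper : ∀ j : ℤ, cm (j + n) = cm j + cm (n:ℤ) := by
    intro j
    have h := rec_per hcm hcsper j
    rw [hcm0] at h
    omega
  have hcmn1 : 1 ≤ cm (n:ℤ) := by
    -- there is a nonzero entry with column in [1,n]
    have hex : ∃ j1 : ℤ, 1 ≤ j1 ∧ j1 ≤ (n:ℤ) ∧ (∑ᶠ i : ℤ, A i j1) ≠ 0 := by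
      have h1 : ∃ i0 ∈ Finset.Icc (1:ℤ) (n:ℤ), (∑ᶠ j : ℤ, A i0 j) ≠ 0 := by
        apply Finset.exists_ne_zero_of_sum_ne_zero
        rw [htot]; omega
      obtain ⟨i0, hi0, hrs⟩ := h1
      have h2 : ∃ j0 : ℤ, A i0 j0 ≠ 0 := by
        by_contra hc
        push_neg at hc
        exact hrs (finsum_eq_zero_of_forall_eq_zero hc)
      obtain ⟨j0, hj0⟩ := h2
      obtain ⟨t, j1, hj, hj1, hj2⟩ := int_decomp hn j0
      refine ⟨j1, hj1, hj2, ?_⟩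
      have hA : A (i0 - t*n) j1 ≠ 0 := by
        have h3 := matper_mul hAper t (i0 - t*(n:ℤ)) j1
        rw [show i0 - t*(n:ℤ) + t*(n:ℤ) = i0 by ring, show j1 + t*(n:ℤ) = j0 by omega] at h3
        rwa [h3] at hj0
      intro hc
      apply hA
      have hle := single_le_finsum (i0 - t*(n:ℤ)) (hcol j1) (f := fun i => A i j1) (fun _ => Nat.zero_le _)
      omega
    obtain ⟨j1, hj1, hj2, hcs⟩ := hex
    have h := rec_sum hcm (show (0:ℤ) ≤ (n:ℤ) by positivity)
    rw [hcm0, zero_add] at h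
    have hj1m : j1 ∈ Finset.Ioc (0:ℤ) (n:ℤ) := by simp only [Finset.mem_Ioc]; omega
    have hle : ((∑ᶠ i : ℤ, A i j1 : ℕ) : ℤ) ≤ ∑ m ∈ Finset.Ioc (0:ℤ) (n:ℤ), ((∑ᶠ i : ℤ, A i m : ℕ) : ℤ) := by
      apply Finset.single_le_sum (f := fun m => ((∑ᶠ i : ℤ, A i m : ℕ) : ℤ)) (fun m _ => by positivity) hj1m
    have : 1 ≤ ((∑ᶠ i : ℤ, A i j1 : ℕ) : ℤ) := by omega
    omega
  -- ## block index functions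
  have hr' : (1:ℤ) ≤ (r:ℤ) := by exact_mod_cast hr
  choose R hR1 hR2 using fun z => blk_exists clmono hclper hcl0 hr' hn z
  choose C hC1 hC2 using fun z => blk_exists cmmono hcmper hcm0 hcmn1 hn z
  have hRu : ∀ z i : ℤ, cl (i-1) < z → z ≤ cl i → R z = i := by
    intro z i h1 h2
    exact blk_unique clmono ⟨hR1 z, hR2 z⟩ ⟨h1, h2⟩
  have hCu : ∀ z j : ℤ, cm (j-1) < z → z ≤ cm j → C z = j := by
    intro z j h1 h2
    exact blk_unique cmmono ⟨hC1 z, hC2 z⟩ ⟨h1, h2⟩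
  have hRrange : ∀ z : ℤ, (1 ≤ R z ∧ R z ≤ (n:ℤ)) ↔ (0 < z ∧ z ≤ (r:ℤ)) := by
    intro z
    constructor
    · rintro ⟨h1, h2⟩
      have e1 : cl 0 ≤ cl (R z - 1) := clmono (by omega)
      have e2 : cl (R z) ≤ cl (n:ℤ) := clmono h2
      have := hR1 z; have := hR2 z
      rw [hcl0] at e1; rw [hcln] at e2
      omega
    · rintro ⟨h1, h2⟩
      constructor
      · by_contra hc
        push_neg at hc
        have e1 : cl (R z) ≤ cl 0 := clmono (by omega)
        have := hR2 z; rw [hcl0] at e1; omega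
      · by_contra hc
        push_neg at hc
        have e1 : cl (n:ℤ) ≤ cl (R z - 1) := clmono (by omega)
        have := hR1 z; rw [hcln] at e1; omega
  have hCmono : ∀ x y : ℤ, C x < C y → x < y := by
    intro x y h
    have e1 : cm (C x) ≤ cm (C y - 1) := cmmono (by omega)
    have := hC2 x; have := hC1 y
    omega
  have hRmonoW : ∀ zx zy : ℤ, R zy < R zx → zy < zx := by
    intro zx zy h
    have e1 : cl (R zy) ≤ cl (R zx - 1) := clmono (by omega)
    have := hR2 zy; have := hR1 zx
    omega
  -- ## the sets
  obtain ⟨Cb, hCb0, hCb⟩ := pp_bdd hr hu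
  set I2 : Set (ℤ×ℤ) := {p : ℤ×ℤ | p.1 < p.2 ∧ u p.2 < u p.1 ∧ 1 ≤ u p.2 ∧ u p.2 ≤ (r:ℤ)}
    with hI2
  have hI2fin : I2.Finite := by
    apply Set.Finite.subset
      ((Set.finite_Icc (2 - Cb) ((r:ℤ) + Cb)).prod (Set.finite_Icc (1 - Cb) ((r:ℤ) + Cb)))
    rintro ⟨x, y⟩ ⟨h1, h2, h3, h4⟩
    have hbx := hCb x; have hby := hCb y
    rw [abs_le] at hbx hby
    simp only [Set.mem_prod, Set.mem_Icc]
    dsimp only at h1 h2 h3 h4 ⊢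
    omega
  set X : Set (ℤ×ℤ) :=
    {p : ℤ×ℤ | C p.1 < C p.2 ∧ R (u p.2) < R (u p.1) ∧ 1 ≤ R (u p.2) ∧ R (u p.2) ≤ (n:ℤ)}
    with hX
  have hXsub : X ⊆ I2 := by
    rintro ⟨x,y⟩ ⟨h1,h2,h3,h4⟩
    dsimp only at h1 h2 h3 h4
    have hxy : x < y := hCmono _ _ h1
    have huxy : u y < u x := hRmonoW _ _ h2
    have hrange := (hRrange (u y)).mp ⟨h3, h4⟩
    refine ⟨hxy, huxy, ?_, ?_⟩ <;> · dsimp only; omega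
  have hXfin : X.Finite := hI2fin.subset hXsub
  -- ## cells
  have hCellEq : ∀ k l : ℤ, {x : ℤ | C x = l ∧ R (u x) = k}
      = Set.Ioc (cm (l-1)) (cm l) ∩ u ⁻¹' (Set.Ioc (cl (k-1)) (cl k)) := by
    intro k l
    ext x
    simp only [Set.mem_setOf_eq, Set.mem_inter_iff, Set.mem_preimage, Set.mem_Ioc]
    constructor
    · rintro ⟨e1, e2⟩
      refine ⟨⟨?_, ?_⟩, ?_, ?_⟩
      · have := hC1 x; rw [e1] at this; exact this
      · have := hC2 x; rw [e1] at this; exact this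
      · have := hR1 (u x); rw [e2] at this; exact this
      · have := hR2 (u x); rw [e2] at this; exact this
    · rintro ⟨⟨e1, e2⟩, e3, e4⟩
      exact ⟨hCu x l e1 e2, hRu (u x) k e3 e4⟩
  have hCellCard : ∀ k l : ℤ, {x : ℤ | C x = l ∧ R (u x) = k}.ncard = A k l := by
    intro k l
    rw [hCellEq, ← humat k l]
    rw [← Set.ncard_image_of_injective _ u.injective, Set.image_inter_preimage, Set.inter_comm]
  have hCellFin : ∀ k l : ℤ, {x : ℤ | C x = l ∧ R (u x) = k}.Finite := by
    intro k l
    rw [hCellEq]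
    exact (Set.finite_Ioc _ _).inter_of_left _
  -- ## support bound
  obtain ⟨B, hB0, hBsupp⟩ : ∃ B : ℤ, 0 ≤ B ∧
      ∀ i j : ℤ, 1 ≤ i → i ≤ (n:ℤ) → A i j ≠ 0 → -B ≤ j ∧ j ≤ B := by
    have hS0fin : (⋃ i ∈ Set.Icc (1:ℤ) (n:ℤ), support (A i)).Finite :=
      Set.Finite.biUnion (Set.finite_Icc _ _) (fun i _ => hrow i)
    obtain ⟨B1, hB1⟩ := hS0fin.bddAbove
    obtain ⟨B2, hB2⟩ := hS0fin.bddBelow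
    refine ⟨|B1| + |B2|, by positivity, ?_⟩
    intro i j h1 h2 hA
    have hj : j ∈ ⋃ i ∈ Set.Icc (1:ℤ) (n:ℤ), support (A i) := by
      refine Set.mem_biUnion (Set.mem_Icc.mpr ⟨h1, h2⟩) hA
    have e1 := hB1 hj
    have e2 := hB2 hj
    have := le_abs_self B1; have := neg_abs_le B2
    have := abs_nonneg B1; have := abs_nonneg B2
    constructor <;> omega
  have hAmul : ∀ t i j : ℤ, A (i + t*n) (j + t*n) = A i j := matper_mul hAper
  set M : ℤ := 2*B + 2*(n:ℤ) + 2 with hM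
  set F : Finset ℤ := Finset.Icc (-M) M with hF
  have hbound : ∀ i k j l : ℤ, 1 ≤ i → i ≤ (n:ℤ) → i < k → l < j →
      A i j ≠ 0 → A k l ≠ 0 → (i ∈ F ∧ k ∈ F ∧ j ∈ F ∧ l ∈ F) := by
    intro i k j l h1 h2 h3 h4 hA1 hA2
    have hj := hBsupp i j h1 h2 hA1
    obtain ⟨t, k0, hk, hk1, hk2⟩ := int_decomp hn k
    have hA2' : A k0 (l - t*(n:ℤ)) ≠ 0 := by
      have h5 := hAmul t k0 (l - t*(n:ℤ))
      rw [show l - t*(n:ℤ) + t*(n:ℤ) = l by ring, show k0 + t*(n:ℤ) = k by omega] at h5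
      rwa [h5] at hA2
    have hl0 := hBsupp k0 (l - t*(n:ℤ)) hk1 hk2 hA2'
    simp only [hF, Finset.mem_Icc, hM]
    omega
  -- ## fiberwise counting
  set φ : ℤ×ℤ → ℤ×ℤ×ℤ×ℤ := fun p => (R (u p.2), R (u p.1), C p.2, C p.1) with hφ
  set T4 : Finset (ℤ×ℤ×ℤ×ℤ) := F ×ˢ F ×ˢ F ×ˢ F with hT4
  have hCellNe : ∀ x : ℤ, A (R (u x)) (C x) ≠ 0 := by
    intro x h0
    have hc := hCellCard (R (u x)) (C x)
    rw [h0] at hc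
    have hemp : {z : ℤ | C z = C x ∧ R (u z) = R (u x)} = ∅ :=
      (Set.ncard_eq_zero (hCellFin _ _)).mp hc
    have : x ∈ ({} : Set ℤ) := hemp ▸ (⟨rfl, rfl⟩ : x ∈ {z : ℤ | C z = C x ∧ R (u z) = R (u x)})
    exact this
  have hφmem : ∀ x ∈ X, φ x ∈ T4 := by
    rintro ⟨x,y⟩ hxy
    obtain ⟨h1,h2,h3,h4⟩ := hxy
    dsimp only at h1 h2 h3 h4
    have hb := hbound (R (u y)) (R (u x)) (C y) (C x) h3 h4 h2 h1 (hCellNe y) (hCellNe x)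
    simp only [hT4, hφ, Finset.mem_product]
    exact ⟨hb.1, hb.2.1, hb.2.2.1, hb.2.2.2⟩
  have hcount : X.ncard = ∑ b ∈ T4, (X ∩ φ ⁻¹' {b}).ncard :=
    ncard_eq_sum_fibers hXfin φ T4 hφmem
  have hfiber : ∀ i k j l : ℤ, (X ∩ φ ⁻¹' {(i,k,j,l)}).ncard =
      if (1 ≤ i ∧ i ≤ (n:ℤ)) ∧ i < k ∧ l < j then A i j * A k l else 0 := by
    intro i k j l
    split_ifs with hcond
    · obtain ⟨⟨hi1, hi2⟩, hik, hlj⟩ := hcond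
      have hset : X ∩ φ ⁻¹' {(i,k,j,l)}
          = {x : ℤ | C x = l ∧ R (u x) = k} ×ˢ {y : ℤ | C y = j ∧ R (u y) = i} := by
        ext ⟨x,y⟩
        simp only [hX, hφ, Set.mem_inter_iff, Set.mem_setOf_eq, Set.mem_preimage,
          Set.mem_singleton_iff, Prod.mk.injEq, Set.mem_prod]
        constructor
        · rintro ⟨-, e1, e2, e3, e4⟩
          exact ⟨⟨e4, e2⟩, ⟨e3, e1⟩⟩
        · rintro ⟨⟨e1, e2⟩, e3, e4⟩
          refine ⟨⟨?_, ?_, ?_, ?_⟩, e4, e2, e3, e1⟩ <;> simp only [e1, e2, e3, e4] <;> omega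
      rw [hset, ncard_prod, hCellCard, hCellCard, Nat.mul_comm]
    · have hset : X ∩ φ ⁻¹' {(i,k,j,l)} = ∅ := by
        ext ⟨x,y⟩
        simp only [hX, hφ, Set.mem_inter_iff, Set.mem_setOf_eq, Set.mem_preimage,
          Set.mem_singleton_iff, Prod.mk.injEq, Set.mem_empty_iff_false, iff_false]
        rintro ⟨⟨c1, c2, c3, c4⟩, e1, e2, e3, e4⟩
        exact hcond (by constructor <;> [skip; constructor] <;> omega)
      rw [hset]
      simp
  -- ## converting the nested finsum
  have hextract : ∀ i k : ℤ, (∑ᶠ (j : ℤ) (l : ℤ) (_ : l < j), A i j * A k l) ≠ 0 →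
      ∃ j l : ℤ, l < j ∧ A i j ≠ 0 ∧ A k l ≠ 0 := by
    intro i k hne
    have hj : ∃ j, (∑ᶠ (l : ℤ) (_ : l < j), A i j * A k l) ≠ 0 := by
      by_contra hc; push_neg at hc
      exact hne (finsum_eq_zero_of_forall_eq_zero hc)
    obtain ⟨j, hj⟩ := hj
    have hl : ∃ l, (∑ᶠ (_ : l < j), A i j * A k l) ≠ 0 := by
      by_contra hc; push_neg at hc
      exact hj (finsum_eq_zero_of_forall_eq_zero hc)
    obtain ⟨l, hl⟩ := hl
    rw [finsum_eq_if] at hl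
    split_ifs at hl with hlj
    · exact ⟨j, l, hlj, Nat.mul_ne_zero_iff.mp hl⟩
    · exact absurd rfl hl
  have hjl : ∀ i k : ℤ, 1 ≤ i → i ≤ (n:ℤ) → i < k →
      (∑ᶠ (j : ℤ) (l : ℤ) (_ : l < j), A i j * A k l)
        = ∑ j ∈ F, ∑ l ∈ F, if l < j then A i j * A k l else 0 := by
    intro i k h1 h2 h3
    have hstep1 : ∀ j : ℤ, (∑ᶠ (l : ℤ) (_ : l < j), A i j * A k l)
        = ∑ l ∈ F, if l < j then A i j * A k l else 0 := by
      intro j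
      rw [finsum_congr (fun l => finsum_eq_if (p := l < j))]
      apply finsum_eq_sum_of_support_subset
      intro l hl
      simp only [Function.mem_support] at hl
      split_ifs at hl with hlj
      · obtain ⟨hA1, hA2⟩ := Nat.mul_ne_zero_iff.mp hl
        exact Finset.mem_coe.mpr (hbound i k j l h1 h2 h3 hlj hA1 hA2).2.2.2
      · exact absurd rfl hl
    rw [finsum_congr hstep1]
    apply finsum_eq_sum_of_support_subset
    intro j hj
    simp only [Function.mem_support] at hj
    obtain ⟨l, hlF, hterm⟩ := Finset.exists_ne_zero_of_sum_ne_zero hj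
    split_ifs at hterm with hlj
    · obtain ⟨hA1, hA2⟩ := Nat.mul_ne_zero_iff.mp hterm
      exact Finset.mem_coe.mpr (hbound i k j l h1 h2 h3 hlj hA1 hA2).2.2.1
    · exact absurd rfl hterm
  have hkl : ∀ i : ℤ, 1 ≤ i → i ≤ (n:ℤ) →
      (∑ᶠ (k : ℤ) (_ : i < k) (j : ℤ) (l : ℤ) (_ : l < j), A i j * A k l)
        = ∑ k ∈ F, if i < k then
            (∑ j ∈ F, ∑ l ∈ F, if l < j then A i j * A k l else 0) else 0 := by
    intro i h1 h2
    rw [finsum_congr (fun k => finsum_eq_if (p := i < k))]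
    rw [finsum_eq_sum_of_support_subset _ (s := F) ?_]
    · apply Finset.sum_congr rfl
      intro k _
      split_ifs with hik
      · exact hjl i k h1 h2 hik
      · rfl
    · intro k hk
      simp only [Function.mem_support] at hk
      split_ifs at hk with hik
      · obtain ⟨j, l, hlj, hA1, hA2⟩ := hextract i k hk
        exact Finset.mem_coe.mpr (hbound i k j l h1 h2 hik hlj hA1 hA2).2.1
      · exact absurd rfl hk
  have hSeq : (∑ᶠ (i : ℤ) (_ : 1 ≤ i ∧ i ≤ (n : ℤ)) (k : ℤ) (_ : i < k)
        (j : ℤ) (l : ℤ) (_ : l < j), A i j * A k l)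
      = ∑ i ∈ F, if (1 ≤ i ∧ i ≤ (n:ℤ)) then
          (∑ k ∈ F, if i < k then
            (∑ j ∈ F, ∑ l ∈ F, if l < j then A i j * A k l else 0) else 0) else 0 := by
    rw [finsum_congr (fun i => finsum_eq_if (p := 1 ≤ i ∧ i ≤ (n:ℤ)))]
    rw [finsum_eq_sum_of_support_subset _ (s := F) ?_]
    · apply Finset.sum_congr rfl
      intro i _
      split_ifs with hi
      · exact hkl i hi.1 hi.2
      · rfl
    · intro i hi
      simp only [Function.mem_support] at hi
      split_ifs at hi with hcond
      · have hk : ∃ k, (∑ᶠ (_ : i < k) (j : ℤ) (l : ℤ) (_ : l < j), A i j * A k l) ≠ 0 := by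
          by_contra hc; push_neg at hc
          exact hi (finsum_eq_zero_of_forall_eq_zero hc)
        obtain ⟨k, hk⟩ := hk
        rw [finsum_eq_if] at hk
        split_ifs at hk with hik
        · obtain ⟨j, l, hlj, hA1, hA2⟩ := hextract i k hk
          exact Finset.mem_coe.mpr (hbound i k j l hcond.1 hcond.2 hik hlj hA1 hA2).1
        · exact absurd rfl hk
      · exact absurd rfl hi
  -- ## assembling
  have hprod : ∑ b ∈ T4, (X ∩ φ ⁻¹' {b}).ncard
      = ∑ i ∈ F, ∑ k ∈ F, ∑ j ∈ F, ∑ l ∈ F, (X ∩ φ ⁻¹' {(i,k,j,l)}).ncard := by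
    rw [hT4, Finset.sum_product]
    apply Finset.sum_congr rfl; intro i _
    rw [Finset.sum_product]
    apply Finset.sum_congr rfl; intro k _
    rw [Finset.sum_product]
  have hmain : (∑ᶠ (i : ℤ) (_ : 1 ≤ i ∧ i ≤ (n : ℤ)) (k : ℤ) (_ : i < k)
        (j : ℤ) (l : ℤ) (_ : l < j), A i j * A k l) = X.ncard := by
    rw [hcount, hprod, hSeq]
    apply Finset.sum_congr rfl; intro i _
    by_cases hi : 1 ≤ i ∧ i ≤ (n:ℤ)
    · rw [if_pos hi]
      apply Finset.sum_congr rfl; intro k _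
      by_cases hik : i < k
      · rw [if_pos hik]
        apply Finset.sum_congr rfl; intro j _
        apply Finset.sum_congr rfl; intro l _
        rw [hfiber]
        by_cases hlj : l < j
        · rw [if_pos hlj, if_pos ⟨hi, hik, hlj⟩]
        · rw [if_neg hlj, if_neg (by tauto)]
      · rw [if_neg hik]
        symm
        apply Finset.sum_eq_zero; intro j _
        apply Finset.sum_eq_zero; intro l _
        rw [hfiber, if_neg (by tauto)]
    · rw [if_neg hi]
      symm
      apply Finset.sum_eq_zero; intro k _
      apply Finset.sum_eq_zero; intro j _
      apply Finset.sum_eq_zero; intro l _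
      rw [hfiber, if_neg (by tauto)]
  constructor
  · rw [hmain, affLen_eq_I2 hr hu]
    exact Set.ncard_le_ncard hXsub hI2fin
  · rintro ⟨hyp1, hyp2⟩
    have hI2subX : I2 ⊆ X := by
      rintro ⟨x,y⟩ ⟨h1,h2,h3,h4⟩
      dsimp only at h1 h2 h3 h4
      have hCne : C x ≠ C y := by
        intro he
        refine hyp1 x y h1 h2 (C x) ⟨hC1 x, ?_⟩
        have := hC2 y; rw [← he] at this; exact this
      have hClt : C x < C y := by
        rcases lt_or_gt_of_ne hCne with h | h
        · exact h
        · exact absurd (hCmono y x h) (by omega)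
      have hRne : R (u x) ≠ R (u y) := by
        intro he
        refine hyp2 x y h1 h2 (R (u x)) ⟨?_, hR2 (u x)⟩
        have := hR1 (u y); rw [← he] at this; exact this
      have hRlt : R (u y) < R (u x) := by
        rcases lt_or_gt_of_ne hRne with h | h
        · exact absurd (hRmonoW (u y) (u x) h) (by omega)
        · exact h
      have hrange := (hRrange (u y)).mpr ⟨by omega, h4⟩
      exact ⟨hClt, hRlt, hrange.1, hrange.2⟩
    have hXI2 : X = I2 := Set.Subset.antisymm hXsub hI2subX
    rw [hmain, hXI2, affLen_eq_I2 hr hu]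

lemma ty_lemma (A : ℤ → ℤ → ℕ)
    (hrow : ∀ i : ℤ, (Function.support (A i)).Finite)
    (hcol : ∀ j : ℤ, (Function.support (fun i => A i j)).Finite)
    (cl cm : ℤ → ℤ)
    (hcl : ∀ i : ℤ, cl i = cl (i - 1) + ∑ᶠ j : ℤ, A i j)
    (hcm : ∀ j : ℤ, cm j = cm (j - 1) + ∑ᶠ i : ℤ, A i j)
    (clmono : ∀ a b : ℤ, a ≤ b → cl a ≤ cl b)
    (cmmono : ∀ a b : ℤ, a ≤ b → cm a ≤ cm b)
    (hCex : ∀ z : ℤ, ∃ j : ℤ, cm (j-1) < z ∧ z ≤ cm j)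
    (p : ℤ → ℤ → ℤ)
    (hp : ∀ i j : ℤ, p i j = p i (j - 1) + A i j)
    (hp0 : ∀ i : ℤ, ∃ N : ℤ, ∀ j ≤ N, p i j = 0)
    (q : ℤ → ℤ → ℤ)
    (hq : ∀ j i : ℤ, q j i = q j (i - 1) + A i j)
    (hq0 : ∀ j : ℤ, ∃ N : ℤ, ∀ i ≤ N, q j i = 0)
    (ty : ℤ ≃ ℤ)
    (htydef : ∀ i j x : ℤ, cm (j - 1) + q j (i - 1) < x → x ≤ cm (j - 1) + q j i →
      ty x = x - (cm (j - 1) + q j (i - 1)) + (cl (i - 1) + p i (j - 1))) :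
    (∀ k l : ℤ,
      (Set.Ioc (cl (k - 1)) (cl k) ∩ (⇑ty '' Set.Ioc (cm (l - 1)) (cm l))).ncard = A k l)
    ∧ (∀ x y : ℤ, x < y → ty y < ty x → ∀ j : ℤ, ¬(cm (j-1) < x ∧ y ≤ cm j))
    ∧ (∀ x y : ℤ, x < y → ty y < ty x → ∀ i : ℤ, ¬(cl (i-1) < ty y ∧ ty x ≤ cl i)) := by
  classical
  -- partial sum facts
  have pnn : ∀ i j : ℤ, 0 ≤ p i j := by
    intro i j
    obtain ⟨N, hN⟩ := hp0 i
    exact rec_nonneg (hp i) hN j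
  have ple : ∀ i j : ℤ, p i j ≤ (∑ᶠ m : ℤ, A i m : ℕ) := by
    intro i j
    obtain ⟨N, hN⟩ := hp0 i
    exact rec_le_total (hp i) hN (hrow i) j
  have pmono : ∀ i : ℤ, ∀ {a b : ℤ}, a ≤ b → p i a ≤ p i b := fun i => rec_mono (hp i)
  have qnn : ∀ j i : ℤ, 0 ≤ q j i := by
    intro j i
    obtain ⟨N, hN⟩ := hq0 j
    exact rec_nonneg (hq j) hN i
  have qle : ∀ j i : ℤ, q j i ≤ (∑ᶠ m : ℤ, A m j : ℕ) := by
    intro j i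
    obtain ⟨N, hN⟩ := hq0 j
    exact rec_le_total (hq j) hN (hcol j) i
  have qmono : ∀ j : ℤ, ∀ {a b : ℤ}, a ≤ b → q j a ≤ q j b := fun j => rec_mono (hq j)
  -- existence of the cell (row within a column block)
  have hcell : ∀ x j : ℤ, cm (j-1) < x → x ≤ cm j →
      ∃ i : ℤ, cm (j-1) + q j (i-1) < x ∧ x ≤ cm (j-1) + q j i := by
    intro x j hx1 hx2
    obtain ⟨N, hN⟩ := hq0 j
    obtain ⟨M, hM⟩ := rec_eq_total (hq j) hN (hcol j)
    have hinh : ∃ i : ℤ, x - cm (j-1) ≤ q j i := by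
      refine ⟨max M N, ?_⟩
      rw [hM _ (le_max_left _ _)]
      have := hcm j
      omega
    have hbdd : ∃ b : ℤ, ∀ i : ℤ, x - cm (j-1) ≤ q j i → b ≤ i := by
      refine ⟨N + 1, fun i hi => ?_⟩
      by_contra hc
      push_neg at hc
      rw [hN i (by omega)] at hi
      omega
    obtain ⟨b, hb⟩ := hbdd
    obtain ⟨lb, hlb1, hlb2⟩ := Int.exists_least_of_bdd ⟨b, hb⟩ hinh
    refine ⟨lb, ?_, by omega⟩
    by_contra hc
    push_neg at hc
    exact absurd (hlb2 (lb - 1) (by omega)) (by omega)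
  -- image of a cell
  have himg : ∀ i j x : ℤ, cm (j-1) + q j (i-1) < x → x ≤ cm (j-1) + q j i →
      cl (i-1) + p i (j-1) < ty x ∧ ty x ≤ cl (i-1) + p i j := by
    intro i j x h1 h2
    rw [htydef i j x h1 h2]
    have e1 := hq j i
    have e2 := hp i j
    omega
  -- image of a cell is inside the row block
  have himgblk : ∀ i j x : ℤ, cm (j-1) + q j (i-1) < x → x ≤ cm (j-1) + q j i →
      cl (i-1) < ty x ∧ ty x ≤ cl i := by
    intro i j x h1 h2
    have h3 := himg i j x h1 h2
    have h4 := pnn i (j-1)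
    have h5 := ple i j
    have h6 := hcl i
    omega
  -- order within a column block
  have hordcol : ∀ j x y : ℤ, cm (j-1) < x → x < y → y ≤ cm j → ty x < ty y := by
    intro j x y h1 h2 h3
    obtain ⟨ix, hix1, hix2⟩ := hcell x j h1 (by omega)
    obtain ⟨iy, hiy1, hiy2⟩ := hcell y j (by omega) h3
    have hile : ix ≤ iy := by
      by_contra hc
      push_neg at hc
      have : q j iy ≤ q j (ix - 1) := qmono j (by omega)
      omega
    rcases eq_or_lt_of_le hile with heq | hlt
    · subst heq
      rw [htydef ix j x hix1 hix2, htydef ix j y hiy1 hiy2]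
      omega
    · have e1 := himgblk ix j x hix1 hix2
      have e2 := himg iy j y hiy1 hiy2
      have e3 : cl ix ≤ cl (iy - 1) := clmono _ _ (by omega)
      have e4 := pnn iy (j-1)
      omega
  refine ⟨?_, ?_, ?_⟩
  · -- the matrix of ty
    intro k l
    have hset : Set.Ioc (cl (k - 1)) (cl k) ∩ (⇑ty '' Set.Ioc (cm (l - 1)) (cm l))
        = Set.Ioc (cl (k-1) + p k (l-1)) (cl (k-1) + p k l) := by
      apply Set.eq_of_subset_of_subset
      · rintro z ⟨hz1, ⟨x, hx, rfl⟩⟩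
        rw [Set.mem_Ioc] at hz1 hx ⊢
        obtain ⟨ix, hix1, hix2⟩ := hcell x l hx.1 hx.2
        have e1 := himgblk ix l x hix1 hix2
        have e2 := himg ix l x hix1 hix2
        have hik : ix = k := blk_unique (fun {a b} hab => clmono a b hab) ⟨e1.1, e1.2⟩ hz1
        rw [hik] at e2
        exact ⟨e2.1, e2.2⟩
      · intro z hz
        rw [Set.mem_Ioc] at hz
        set x := z - (cl (k-1) + p k (l-1)) + (cm (l-1) + q l (k-1)) with hxdef
        have e1 := hq l k
        have e2 := hp k l
        have h1 : cm (l-1) + q l (k-1) < x := by omega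
        have h2 : x ≤ cm (l-1) + q l k := by omega
        refine ⟨?_, x, ?_, ?_⟩
        · rw [Set.mem_Ioc]
          have e3 := pnn k (l-1)
          have e4 := ple k l
          have e5 := hcl k
          omega
        · rw [Set.mem_Ioc]
          have e3 := qnn l (k-1)
          have e4 := qle l k
          have e5 := hcm l
          omega
        · rw [htydef k l x h1 h2]
          omega
    rw [hset, ncard_Ioc]
    have : cl (k-1) + p k l - (cl (k-1) + p k (l-1)) = (A k l : ℤ) := by
      have := hp k l; omega
    rw [this, Int.toNat_natCast]
  · -- no inversions within a column block
    intro x y hxy hvu j hmem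
    obtain ⟨h1, h2⟩ := hmem
    exact absurd (hordcol j x y h1 hxy h2) (by omega)
  · -- no inversions within a row block
    intro x y hxy hvu i hmem
    obtain ⟨h1, h2⟩ := hmem
    obtain ⟨jx, hjx1, hjx2⟩ := hCex x
    obtain ⟨jy, hjy1, hjy2⟩ := hCex y
    obtain ⟨ix, hix1, hix2⟩ := hcell x jx hjx1 hjx2
    obtain ⟨iy, hiy1, hiy2⟩ := hcell y jy hjy1 hjy2
    have ebx := himgblk ix jx x hix1 hix2
    have eby := himgblk iy jy y hiy1 hiy2
    have hik : ix = i := blk_unique (fun {a b} hab => clmono a b hab) ⟨ebx.1, ebx.2⟩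
      ⟨by omega, by omega⟩
    have hiyk : iy = i := blk_unique (fun {a b} hab => clmono a b hab) ⟨eby.1, eby.2⟩
      ⟨by omega, by omega⟩
    have hjle : jx ≤ jy := by
      by_contra hc
      push_neg at hc
      have : cm jy ≤ cm (jx - 1) := cmmono _ _ (by omega)
      omega
    rcases eq_or_lt_of_le hjle with heq | hlt
    · subst heq
      exact absurd (hordcol jx x y hjx1 hxy hjy2) (by omega)
    · have e2x := himg ix jx x hix1 hix2
      have e2y := himg iy jy y hiy1 hiy2
      rw [hik] at e2x
      rw [hiyk] at e2y
      have e5 : p i jx ≤ p i (jy - 1) := pmono i (by omega)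
      omega

end AuxLemmas

/-- With `A` an `n`-periodic ℕ-matrix of total sum `r` encoding
a double coset (blocks given by the cumulative sums `cl`, `cm`), every element
`w` of the double coset (i.e. with matrix `A`) satisfies
`ℓ(w) ≥ Σ_{1≤i≤n, i<k, j>l} a_{ij} a_{kl}`, and equality holds for the
reading-word representative `ty = ỹ_A` (characterized via the partial sums
`p`, `q` as the segment-by-segment translation). -/
theorem stmt10 (n r : ℕ) (hn : 1 ≤ n) (hr : 1 ≤ r)
    (A : ℤ → ℤ → ℕ)
    (hAper : ∀ i j : ℤ, A (i + n) (j + n) = A i j)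
    (hrow : ∀ i : ℤ, (Function.support (A i)).Finite)
    (hcol : ∀ j : ℤ, (Function.support (fun i => A i j)).Finite)
    (htot : ∑ i ∈ Finset.Icc (1 : ℤ) (n : ℤ), ∑ᶠ j : ℤ, A i j = r)
    (cl cm : ℤ → ℤ)
    (hcl0 : cl 0 = 0) (hcl : ∀ i : ℤ, cl i = cl (i - 1) + ∑ᶠ j : ℤ, A i j)
    (hcm0 : cm 0 = 0) (hcm : ∀ j : ℤ, cm j = cm (j - 1) + ∑ᶠ i : ℤ, A i j)
    (p : ℤ → ℤ → ℤ)
    (hp : ∀ i j : ℤ, p i j = p i (j - 1) + A i j)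
    (hp0 : ∀ i : ℤ, ∃ N : ℤ, ∀ j ≤ N, p i j = 0)
    (q : ℤ → ℤ → ℤ)
    (hq : ∀ j i : ℤ, q j i = q j (i - 1) + A i j)
    (hq0 : ∀ j : ℤ, ∃ N : ℤ, ∀ i ≤ N, q j i = 0)
    (ty : ℤ ≃ ℤ) (hty : PeriodicPerm r ty)
    (htydef : ∀ i j x : ℤ, cm (j - 1) + q j (i - 1) < x → x ≤ cm (j - 1) + q j i →
      ty x = x - (cm (j - 1) + q j (i - 1)) + (cl (i - 1) + p i (j - 1)))
    (w : ℤ ≃ ℤ) (hw : PeriodicPerm r w)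
    (hwmat : ∀ k l : ℤ,
      (Set.Ioc (cl (k - 1)) (cl k) ∩ (⇑w '' Set.Ioc (cm (l - 1)) (cm l))).ncard = A k l) :
    (∑ᶠ (i : ℤ) (_ : 1 ≤ i ∧ i ≤ (n : ℤ)) (k : ℤ) (_ : i < k)
        (j : ℤ) (l : ℤ) (_ : l < j), A i j * A k l) ≤ affLen r w
    ∧ affLen r ty
        = ∑ᶠ (i : ℤ) (_ : 1 ≤ i ∧ i ≤ (n : ℤ)) (k : ℤ) (_ : i < k)
            (j : ℤ) (l : ℤ) (_ : l < j), A i j * A k l := by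
  classical
  have clmono : ∀ a b : ℤ, a ≤ b → cl a ≤ cl b := fun a b h => rec_mono hcl h
  have cmmono : ∀ a b : ℤ, a ≤ b → cm a ≤ cm b := fun a b h => rec_mono hcm h
  have hcsper : ∀ j : ℤ, (∑ᶠ i : ℤ, A i (j + n)) = ∑ᶠ i : ℤ, A i j := by
    intro j
    have h := finsum_comp_equiv (Equiv.addRight (n:ℤ)) (f := fun i => A i (j+(n:ℤ)))
    simp only [Equiv.coe_addRight] at h
    rw [← h]
    exact finsum_congr fun i => hAper i j
  have hcmper : ∀ j : ℤ, cm (j + n) = cm j + cm (n:ℤ) := by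
    intro j
    have h := rec_per hcm hcsper j
    rw [hcm0] at h
    omega
  have hcmn1 : 1 ≤ cm (n:ℤ) := by
    have hex : ∃ j1 : ℤ, 1 ≤ j1 ∧ j1 ≤ (n:ℤ) ∧ (∑ᶠ i : ℤ, A i j1) ≠ 0 := by
      have h1 : ∃ i0 ∈ Finset.Icc (1:ℤ) (n:ℤ), (∑ᶠ j : ℤ, A i0 j) ≠ 0 := by
        apply Finset.exists_ne_zero_of_sum_ne_zero
        rw [htot]; omega
      obtain ⟨i0, hi0, hrs⟩ := h1
      have h2 : ∃ j0 : ℤ, A i0 j0 ≠ 0 := by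
        by_contra hc
        push_neg at hc
        exact hrs (finsum_eq_zero_of_forall_eq_zero hc)
      obtain ⟨j0, hj0⟩ := h2
      obtain ⟨t, j1, hj, hj1, hj2⟩ := int_decomp hn j0
      refine ⟨j1, hj1, hj2, ?_⟩
      have hA : A (i0 - t*n) j1 ≠ 0 := by
        have h3 := matper_mul hAper t (i0 - t*(n:ℤ)) j1
        rw [show i0 - t*(n:ℤ) + t*(n:ℤ) = i0 by ring, show j1 + t*(n:ℤ) = j0 by omega] at h3
        rwa [h3] at hj0
      intro hc
      apply hA
      have hle := single_le_finsum (i0 - t*(n:ℤ)) (hcol j1) (f := fun i => A i j1)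
        (fun _ => Nat.zero_le _)
      omega
    obtain ⟨j1, hj1, hj2, hcs⟩ := hex
    have h := rec_sum hcm (show (0:ℤ) ≤ (n:ℤ) by positivity)
    rw [hcm0, zero_add] at h
    have hj1m : j1 ∈ Finset.Ioc (0:ℤ) (n:ℤ) := by simp only [Finset.mem_Ioc]; omega
    have hle : ((∑ᶠ i : ℤ, A i j1 : ℕ) : ℤ)
        ≤ ∑ m ∈ Finset.Ioc (0:ℤ) (n:ℤ), ((∑ᶠ i : ℤ, A i m : ℕ) : ℤ) := by
      apply Finset.single_le_sum (f := fun m => ((∑ᶠ i : ℤ, A i m : ℕ) : ℤ))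
        (fun m _ => by positivity) hj1m
    have : 1 ≤ ((∑ᶠ i : ℤ, A i j1 : ℕ) : ℤ) := by omega
    omega
  have hCex : ∀ z : ℤ, ∃ j : ℤ, cm (j-1) < z ∧ z ≤ cm j :=
    fun z => blk_exists (fun {a b} h => cmmono a b h) hcmper hcm0 hcmn1 hn z
  obtain ⟨tymat, hyp1, hyp2⟩ := ty_lemma A hrow hcol cl cm hcl hcm clmono cmmono hCex
    p hp hp0 q hq hq0 ty htydef
  have k1 := key n r hn hr A hAper hrow hcol htot cl cm hcl0 hcl hcm0 hcm w hw hwmat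
  have k2 := key n r hn hr A hAper hrow hcol htot cl cm hcl0 hcl hcm0 hcm ty hty tymat
  exact ⟨k1.1, (k2.2 ⟨hyp1, hyp2⟩).symm⟩
end
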